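/- arXiv:1701.06064 — 7 statements merged into one kernel-verified Lean document; each statement's English description precedes it below -/
import Mathlib

section
/- Let n, p be integers with 1 ≤ p ≤ n, and let C, c̲, c̄ ∈ ℝ^n_{≥0} with c̲_i ≤ c̄_i for all i, and Γ ≥ 0. Consider the optimization problem: minimize Σ_i C_i·x_i + π·Σ_i c̲_i·z_i + (1−π)·Σ_i c̄_i·z̄_i + Γ·π over x ∈ {0,1}^n, z, z̄ ∈ [0,1]^n and π ∈ [0,1], subject to Σ_i (x_i + π·z_i + (1−π)·z̄_i) = p, x_i + z_i ≤ 1 for all i, and x_i + z̄_i ≤ 1 for all i. Then there exists an optimal solution (x, z, z̄, π) such that z_i, z̄_i ∈ {0,1} for all i ∈ [n], and π = q/r for some integers q ∈ {0,…,p} and r ∈ {1,…,n}. -/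
open Finset

noncomputable section

lemma sum_mul_update {ι : Type*} [Fintype ι] [DecidableEq ι] (c y : ι → ℝ) (j : ι) (v : ℝ) :
    ∑ i, c i * Function.update y j v i = (∑ i, c i * y i) + c j * (v - y j) := by
  rw [show (∑ i, c i * Function.update y j v i)
      = ∑ i, (c i * y i + (if i = j then c j * (v - y j) else 0)) from
    Finset.sum_congr rfl (fun i _ => by
      rcases eq_or_ne i j with rfl | h
      · simp [Function.update_self]; ring
      · simp [Function.update_of_ne h, h])]
  rw [Finset.sum_add_distrib, Finset.sum_ite_eq' Finset.univ j]
  simp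

lemma sum_update' {ι : Type*} [Fintype ι] [DecidableEq ι] (y : ι → ℝ) (j : ι) (v : ℝ) :
    ∑ i, Function.update y j v i = (∑ i, y i) + (v - y j) := by
  have := sum_mul_update (fun _ => (1:ℝ)) y j v
  simpa using this

lemma int_sum_card {ι : Type*} [Fintype ι] (z : ι → ℝ) (hz : ∀ i, z i = 0 ∨ z i = 1) :
    ∑ i, z i = ((Finset.univ.filter (fun i => z i = 1)).card : ℝ) := by
  classical
  rw [Finset.card_filter]
  push_cast
  apply Finset.sum_congr rfl
  intro i _
  rcases hz i with h | h <;> simp [h]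

section L2
variable {ι : Type*} [Fintype ι] [DecidableEq ι]

noncomputable def intr (cap y : ι → ℝ) : Finset ι := Finset.univ.filter (fun i => ¬(y i = 0 ∨ y i = cap i))

lemma mem_intr (cap y : ι → ℝ) (i : ι) : i ∈ intr cap y ↔ (¬ y i = 0 ∧ ¬ y i = cap i) := by
  simp only [intr, Finset.mem_filter, Finset.mem_univ, true_and, not_or]

lemma move (c cap y : ι → ℝ) (hb : ∀ i, 0 ≤ y i ∧ y i ≤ cap i)
    (i j : ι) (hij : i ≠ j) (hi : i ∈ intr cap y) (hj : j ∈ intr cap y)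
    (hc : c i ≤ c j) :
    ∃ y' : ι → ℝ, (∀ l, 0 ≤ y' l ∧ y' l ≤ cap l) ∧ (∑ l, y' l = ∑ l, y l) ∧
      (∑ l, c l * y' l ≤ ∑ l, c l * y l) ∧ (intr cap y').card < (intr cap y).card := by
  rw [mem_intr] at hi hj
  obtain ⟨hi0, hic⟩ := hi
  obtain ⟨hj0, hjc⟩ := hj
  have hi0' : 0 < y i := lt_of_le_of_ne (hb i).1 (Ne.symm hi0)
  have hic' : y i < cap i := lt_of_le_of_ne (hb i).2 hic
  have hj0' : 0 < y j := lt_of_le_of_ne (hb j).1 (Ne.symm hj0)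
  have hjc' : y j < cap j := lt_of_le_of_ne (hb j).2 hjc
  set t : ℝ := min (cap i - y i) (y j) with ht
  have ht0 : 0 < t := lt_min (by linarith) hj0'
  have ht1 : t ≤ cap i - y i := min_le_left _ _
  have ht2 : t ≤ y j := min_le_right _ _
  set y' : ι → ℝ := Function.update (Function.update y i (y i + t)) j (y j - t) with hy'
  have hvi : y' i = y i + t := by
    rw [hy', Function.update_of_ne hij, Function.update_self]
  have hvj : y' j = y j - t := by rw [hy', Function.update_self]
  have hvo : ∀ l, l ≠ i → l ≠ j → y' l = y l := by
    intro l hli hlj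
    rw [hy', Function.update_of_ne hlj, Function.update_of_ne hli]
  refine ⟨y', ?_, ?_, ?_, ?_⟩
  · intro l
    rcases eq_or_ne l i with rfl | hli
    · rw [hvi]; constructor <;> linarith
    rcases eq_or_ne l j with rfl | hlj
    · rw [hvj]; constructor <;> linarith [(hb l).2]
    · rw [hvo l hli hlj]; exact hb l
  · rw [hy', sum_update', sum_update']
    rw [Function.update_of_ne (Ne.symm hij)]
    ring
  · rw [hy', sum_mul_update, sum_mul_update]
    rw [Function.update_of_ne (Ne.symm hij)]
    nlinarith [ht0]
  · apply Finset.card_lt_card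
    constructor
    · intro l hl
      rw [mem_intr] at hl ⊢
      obtain ⟨hl0, hlc⟩ := hl
      rcases eq_or_ne l i with rfl | hli
      · exact ⟨hi0, hic⟩
      rcases eq_or_ne l j with rfl | hlj
      · exact ⟨hj0, hjc⟩
      · rw [hvo l hli hlj] at hl0 hlc
        exact ⟨hl0, hlc⟩
    · intro hsub
      rcases min_cases (cap i - y i) (y j) with ⟨hmin, -⟩ | ⟨hmin, -⟩
      · have : i ∈ intr cap y := by rw [mem_intr]; exact ⟨hi0, hic⟩
        have hmem := hsub this
        rw [mem_intr] at hmem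
        rw [hvi] at hmem
        have : y i + t = cap i := by rw [ht, hmin]; ring
        exact hmem.2 this
      · have : j ∈ intr cap y := by rw [mem_intr]; exact ⟨hj0, hjc⟩
        have hmem := hsub this
        rw [mem_intr] at hmem
        rw [hvj] at hmem
        have : y j - t = 0 := by rw [ht, hmin]; ring
        exact hmem.1 this

lemma L2aux (N : ℕ) : ∀ (c cap y : ι → ℝ), (∀ i, 0 ≤ y i ∧ y i ≤ cap i) →
    (intr cap y).card ≤ N →
    ∃ y' : ι → ℝ, (∀ l, 0 ≤ y' l ∧ y' l ≤ cap l) ∧ (∑ l, y' l = ∑ l, y l) ∧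
      (∑ l, c l * y' l ≤ ∑ l, c l * y l) ∧
      (∀ i j, i ≠ j → (y' i = 0 ∨ y' i = cap i) ∨ (y' j = 0 ∨ y' j = cap j)) := by
  induction N with
  | zero =>
    intro c cap y hb hcard
    refine ⟨y, hb, rfl, le_refl _, ?_⟩
    intro i j hij
    left
    have h : i ∉ intr cap y := by
      intro h
      have := Finset.card_pos.mpr ⟨i, h⟩
      omega
    rw [mem_intr] at h
    by_contra hcon
    push_neg at hcon
    exact h ⟨hcon.1, hcon.2⟩
  | succ N ih =>
    intro c cap y hb hcard
    by_cases h2 : (intr cap y).card ≤ 1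
    · refine ⟨y, hb, rfl, le_refl _, ?_⟩
      intro i j hij
      by_contra hcon
      push_neg at hcon
      obtain ⟨hi, hj⟩ := hcon
      have hi' : i ∈ intr cap y := by rw [mem_intr]; tauto
      have hj' : j ∈ intr cap y := by rw [mem_intr]; tauto
      have : ({i, j} : Finset ι) ⊆ intr cap y := by
        intro l hl; simp at hl; rcases hl with rfl | rfl <;> assumption
      have := Finset.card_le_card this
      rw [Finset.card_insert_of_notMem (by simp [hij]), Finset.card_singleton] at this
      omega
    · push_neg at h2
      obtain ⟨i, hi⟩ := Finset.card_pos.mp (by omega : 0 < (intr cap y).card)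
      obtain ⟨j, hj, hij⟩ : ∃ j ∈ intr cap y, j ≠ i := by
        by_contra hcon
        push_neg at hcon
        have : intr cap y ⊆ {i} := fun l hl => by simp [hcon l hl]
        have := Finset.card_le_card this
        simp at this; omega
      have key : ∃ y' : ι → ℝ, (∀ l, 0 ≤ y' l ∧ y' l ≤ cap l) ∧ (∑ l, y' l = ∑ l, y l) ∧
          (∑ l, c l * y' l ≤ ∑ l, c l * y l) ∧ (intr cap y').card < (intr cap y).card := by
        rcases le_total (c i) (c j) with h | h
        · exact move c cap y hb i j (Ne.symm hij) hi hj h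
        · exact move c cap y hb j i hij hj hi h
      obtain ⟨y1, hb1, hs1, hc1, hlt1⟩ := key
      obtain ⟨y', hb', hs', hc', hfrac⟩ := ih c cap y1 hb1 (by omega)
      exact ⟨y', hb', by rw [hs', hs1], le_trans hc' hc1, hfrac⟩

lemma L2 (c cap y : ι → ℝ) (hb : ∀ i, 0 ≤ y i ∧ y i ≤ cap i) :
    ∃ y' : ι → ℝ, (∀ l, 0 ≤ y' l ∧ y' l ≤ cap l) ∧ (∑ l, y' l = ∑ l, y l) ∧
      (∑ l, c l * y' l ≤ ∑ l, c l * y l) ∧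
      (∀ i j, i ≠ j → (y' i = 0 ∨ y' i = cap i) ∨ (y' j = 0 ∨ y' j = cap j)) :=
  L2aux (intr cap y).card c cap y hb (le_refl _)

end L2

lemma L1 {n : ℕ} (c e w : Fin n → ℝ) (he : ∀ i, e i = 0 ∨ e i = 1)
    (hw : ∀ i, 0 ≤ w i ∧ w i ≤ e i) (k : ℕ) (hk : ∑ i, w i = (k : ℝ)) :
    ∃ w' : Fin n → ℝ, (∀ i, w' i = 0 ∨ w' i = 1) ∧ (∀ i, 0 ≤ w' i ∧ w' i ≤ e i) ∧
      (∑ i, w' i = (k : ℝ)) ∧ (∑ i, c i * w' i ≤ ∑ i, c i * w i) := by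
  obtain ⟨w', hb, hs, hc, hfr⟩ := L2 c e w hw
  have hint : ∀ i, w' i = 0 ∨ w' i = e i := by
    by_contra hcon
    push_neg at hcon
    obtain ⟨i, hi0, hie⟩ := hcon
    have hothers : ∀ j, j ≠ i → w' j = 0 ∨ w' j = e j := by
      intro j hj
      rcases hfr j i hj with h | h
      · exact h
      · exact absurd h (by tauto)
    have hei : e i = 1 := by
      rcases he i with h | h
      · exfalso; apply hi0; have h1 := (hb i).1; have h2 := (hb i).2; rw [h] at h2; linarith
      · exact h
    have hfi : 0 < w' i ∧ w' i < 1 := by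
      constructor
      · exact lt_of_le_of_ne (hb i).1 (Ne.symm hi0)
      · rw [← hei]; exact lt_of_le_of_ne (hb i).2 hie
    set w'' := Function.update w' i 0 with hw''
    have hint'' : ∀ j, w'' j = 0 ∨ w'' j = 1 := by
      intro j
      rcases eq_or_ne j i with rfl | hj
      · left; rw [hw'', Function.update_self]
      · rw [hw'', Function.update_of_ne hj]
        rcases hothers j hj with h | h
        · left; exact h
        · rcases he j with h' | h'
          · left; rw [h, h']
          · right; rw [h, h']
    have hm := int_sum_card w'' hint''
    set m := (Finset.univ.filter (fun j => w'' j = 1)).card with hmdef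
    have hsum'' : ∑ j, w'' j = ∑ j, w' j - w' i := by
      rw [hw'', sum_update']; ring
    have : w' i = (k : ℝ) - (m : ℝ) := by
      rw [hm, hsum'', hs, hk] at *
      linarith [hm]
    rcases le_or_gt k m with h | h
    · have : (k : ℝ) ≤ (m : ℝ) := by exact_mod_cast h
      linarith [hfi.1]
    · have : (m : ℝ) + 1 ≤ (k : ℝ) := by exact_mod_cast h
      linarith [hfi.2]
  refine ⟨w', ?_, hb, by rw [hs, hk], hc⟩
  intro i
  rcases hint i with h | h
  · left; exact h
  · rcases he i with h' | h'
    · left; rw [h, h']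
    · right; rw [h, h']

/-- Feasibility for the rescaled R2ST formulation (problem (18)). -/
def Feas10 (n p : ℕ) (x z zb : Fin n → ℝ) (π : ℝ) : Prop :=
  (∀ i, x i = 0 ∨ x i = 1) ∧
  (∀ i, z i ∈ Set.Icc (0 : ℝ) 1) ∧ (∀ i, zb i ∈ Set.Icc (0 : ℝ) 1) ∧
  π ∈ Set.Icc (0 : ℝ) 1 ∧
  (∑ i, (x i + π * z i + (1 - π) * zb i)) = (p : ℝ) ∧
  (∀ i, x i + z i ≤ 1) ∧ (∀ i, x i + zb i ≤ 1)

/-- Objective of the rescaled R2ST formulation (problem (18)). -/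
def Obj10 (n : ℕ) (C cl cu : Fin n → ℝ) (Γ : ℝ) (x z zb : Fin n → ℝ) (π : ℝ) : ℝ :=
  (∑ i, C i * x i) + π * (∑ i, cl i * z i) + (1 - π) * (∑ i, cu i * zb i) + Γ * π

def GoodPt (n p : ℕ) (C cl cu : Fin n → ℝ) (Γ : ℝ) (x : Fin n → ℝ) (V : ℝ) : Prop :=
  ∃ (z' zb' : Fin n → ℝ) (q r : ℕ), q ≤ p ∧ 1 ≤ r ∧ r ≤ n ∧
    Feas10 n p x z' zb' ((q : ℝ) / (r : ℝ)) ∧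
    (∀ i, z' i = 0 ∨ z' i = 1) ∧ (∀ i, zb' i = 0 ∨ zb' i = 1) ∧
    Obj10 n C cl cu Γ x z' zb' ((q : ℝ) / (r : ℝ)) ≤ V

lemma GoodPt.mono {n p : ℕ} {C cl cu : Fin n → ℝ} {Γ : ℝ} {x : Fin n → ℝ} {V V' : ℝ}
    (h : GoodPt n p C cl cu Γ x V) (hV : V ≤ V') : GoodPt n p C cl cu Γ x V' := by
  obtain ⟨z', zb', q, r, h1, h2, h3, h4, h5, h6, h7⟩ := h
  exact ⟨z', zb', q, r, h1, h2, h3, h4, h5, h6, le_trans h7 hV⟩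

lemma feas_split {n : ℕ} (x z zb : Fin n → ℝ) (π : ℝ) :
    (∑ i, (x i + π * z i + (1 - π) * zb i))
      = (∑ i, x i) + π * (∑ i, z i) + (1 - π) * (∑ i, zb i) := by
  rw [Finset.sum_add_distrib, Finset.sum_add_distrib, Finset.mul_sum, Finset.mul_sum]

lemma int_sum_nat {n : ℕ} (v : Fin n → ℝ) (hv : ∀ i, v i = 0 ∨ v i = 1) :
    ∃ m : ℕ, m ≤ n ∧ ∑ i, v i = (m : ℝ) := by
  refine ⟨(Finset.univ.filter (fun i => v i = 1)).card, ?_, int_sum_card v hv⟩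
  calc (Finset.univ.filter (fun i => v i = 1)).card ≤ Finset.univ.card :=
        Finset.card_filter_le _ _
    _ = n := by rw [Finset.card_univ, Fintype.card_fin]

lemma int_nonneg {n : ℕ} {v : Fin n → ℝ} (hv : ∀ i, v i = 0 ∨ v i = 1) (i : Fin n) :
    0 ≤ v i := by rcases hv i with h | h <;> rw [h] <;> norm_num

lemma int_le_one {n : ℕ} {v : Fin n → ℝ} (hv : ∀ i, v i = 0 ∨ v i = 1) (i : Fin n) :
    v i ≤ 1 := by rcases hv i with h | h <;> rw [h] <;> norm_num

/-- Terminal candidate at `π = 0`. -/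
lemma terminal0 {n p : ℕ} (hp1 : 1 ≤ p) (hpn : p ≤ n) (C cl cu : Fin n → ℝ) (Γ : ℝ)
    (x zb : Fin n → ℝ) (hx : ∀ i, x i = 0 ∨ x i = 1)
    (hzb : ∀ i, 0 ≤ zb i ∧ x i + zb i ≤ 1)
    (hsum : (∑ i, x i) + (∑ i, zb i) = (p : ℝ)) :
    GoodPt n p C cl cu Γ x ((∑ i, C i * x i) + ∑ i, cu i * zb i) := by
  obtain ⟨s, hsn, hs⟩ := int_sum_nat x hx
  have hzb0 : (0:ℝ) ≤ ∑ i, zb i := Finset.sum_nonneg (fun i _ => (hzb i).1)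
  have hsp : s ≤ p := by
    by_contra hc
    push_neg at hc
    have : (p:ℝ) < (s:ℝ) := by exact_mod_cast hc
    linarith [hs ▸ hsum]
  have hk : ∑ i, zb i = ((p - s : ℕ) : ℝ) := by
    push_cast [Nat.cast_sub hsp]
    linarith [hsum, hs]
  set e : Fin n → ℝ := fun i => 1 - x i with he
  have heint : ∀ i, e i = 0 ∨ e i = 1 := by
    intro i; rcases hx i with h | h <;> simp [he, h]
  obtain ⟨zb', hint', hb', hsum', hcost'⟩ := L1 cu e zb heint
    (fun i => ⟨(hzb i).1, by simp only [he]; linarith [(hzb i).2]⟩) (p - s) hk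
  refine ⟨(fun _ => 0), zb', 0, 1, by omega, le_refl 1, by omega, ?_, fun i => Or.inl rfl,
    hint', ?_⟩
  · have hπ : ((0:ℕ):ℝ)/((1:ℕ):ℝ) = 0 := by norm_num
    rw [hπ]
    refine ⟨hx, fun i => by norm_num, fun i => ⟨(hb' i).1, ?_⟩, by norm_num, ?_, ?_, ?_⟩
    · have := (hb' i).2
      rcases hx i with h | h <;> simp [he, h] at this ⊢ <;> linarith
    · rw [feas_split]
      rw [hsum', hs]
      push_cast [Nat.cast_sub hsp]
      ring
    · intro i; rcases hx i with h | h <;> rw [h] <;> norm_num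
    · intro i
      have := (hb' i).2
      simp only [he] at this
      linarith
  · have hπ : ((0:ℕ):ℝ)/((1:ℕ):ℝ) = 0 := by norm_num
    rw [Obj10, hπ]
    simp only [mul_zero, zero_mul, sub_zero, one_mul, add_zero, zero_add, mul_comm]
    have : ∑ i, cl i * 0 = 0 := by simp
    nlinarith [hcost']

/-- Terminal candidate at `π = 1`. -/
lemma terminal1 {n p : ℕ} (hp1 : 1 ≤ p) (hpn : p ≤ n) (C cl cu : Fin n → ℝ) (Γ : ℝ)
    (x z : Fin n → ℝ) (hx : ∀ i, x i = 0 ∨ x i = 1)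
    (hz : ∀ i, 0 ≤ z i ∧ x i + z i ≤ 1)
    (hsum : (∑ i, x i) + (∑ i, z i) = (p : ℝ)) :
    GoodPt n p C cl cu Γ x ((∑ i, C i * x i) + (∑ i, cl i * z i) + Γ) := by
  obtain ⟨s, hsn, hs⟩ := int_sum_nat x hx
  have hz0 : (0:ℝ) ≤ ∑ i, z i := Finset.sum_nonneg (fun i _ => (hz i).1)
  have hsp : s ≤ p := by
    by_contra hc
    push_neg at hc
    have : (p:ℝ) < (s:ℝ) := by exact_mod_cast hc
    linarith [hs ▸ hsum]
  have hk : ∑ i, z i = ((p - s : ℕ) : ℝ) := by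
    push_cast [Nat.cast_sub hsp]
    linarith [hsum, hs]
  set e : Fin n → ℝ := fun i => 1 - x i with he
  have heint : ∀ i, e i = 0 ∨ e i = 1 := by
    intro i; rcases hx i with h | h <;> simp [he, h]
  obtain ⟨z', hint', hb', hsum', hcost'⟩ := L1 cl e z heint
    (fun i => ⟨(hz i).1, by simp only [he]; linarith [(hz i).2]⟩) (p - s) hk
  refine ⟨z', (fun _ => 0), 1, 1, hp1, le_refl 1, by omega, ?_, hint',
    fun i => Or.inl rfl, ?_⟩
  · have hπ : ((1:ℕ):ℝ)/((1:ℕ):ℝ) = 1 := by norm_num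
    rw [hπ]
    refine ⟨hx, fun i => ⟨(hb' i).1, ?_⟩, fun i => by norm_num, by norm_num, ?_, ?_, ?_⟩
    · have := (hb' i).2
      rcases hx i with h | h <;> simp [he, h] at this ⊢ <;> linarith
    · rw [feas_split]
      rw [hsum', hs]
      push_cast [Nat.cast_sub hsp]
      ring
    · intro i
      have := (hb' i).2
      simp only [he] at this
      linarith
    · intro i; rcases hx i with h | h <;> rw [h] <;> norm_num
  · have hπ : ((1:ℕ):ℝ)/((1:ℕ):ℝ) = 1 := by norm_num
    rw [Obj10, hπ]
    have : ∑ i, cu i * 0 = 0 := by simp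
    nlinarith [hcost']

/-- Terminal: integral solution with `∑ zb < ∑ z`; then `π` is automatically `q/r`. -/
lemma terminalQR {n p : ℕ} (C cl cu : Fin n → ℝ) (Γ : ℝ)
    (x z zb : Fin n → ℝ) (π : ℝ) (hf : Feas10 n p x z zb π)
    (hz : ∀ i, z i = 0 ∨ z i = 1) (hzb : ∀ i, zb i = 0 ∨ zb i = 1)
    (hba : ∑ i, zb i < ∑ i, z i) :
    GoodPt n p C cl cu Γ x (Obj10 n C cl cu Γ x z zb π) := by
  have hx := hf.1
  have hπ := hf.2.2.2.1
  have hcon0 := hf.2.2.2.2.1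
  obtain ⟨s, hsn, hs⟩ := int_sum_nat x hx
  obtain ⟨a, han, ha⟩ := int_sum_nat z hz
  obtain ⟨b, hbn, hb⟩ := int_sum_nat zb hzb
  have hcon : (s:ℝ) + π * a + (1 - π) * b = p := by
    rw [feas_split, hs, ha, hb] at hcon0; exact hcon0
  have hπ0 := hπ.1
  have hπ1 := hπ.2
  have hba' : b < a := by
    rw [ha, hb] at hba
    exact_mod_cast hba
  have hsp : s ≤ p := by
    by_contra hc
    push_neg at hc
    have h1 : (p:ℝ) < (s:ℝ) := by exact_mod_cast hc
    have h2 : (0:ℝ) ≤ (a:ℝ) := by positivity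
    have h3 : (0:ℝ) ≤ (b:ℝ) := by positivity
    nlinarith
  have hkey : π * ((a:ℝ) - b) = ((p:ℝ) - s) - b := by nlinarith [hcon]
  have hbk : (b:ℝ) ≤ (p:ℝ) - s := by nlinarith [hba]
  have hbk' : b ≤ p - s := by
    have : (b:ℝ) ≤ ((p - s : ℕ):ℝ) := by rw [Nat.cast_sub hsp]; exact hbk
    exact_mod_cast this
  have hπeq : ((((p-s) - b : ℕ)):ℝ) / (((a - b : ℕ)):ℝ) = π := by
    rw [Nat.cast_sub hbk', Nat.cast_sub (le_of_lt hba'), Nat.cast_sub hsp]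
    rw [div_eq_iff (by push_cast; nlinarith [hba'] : ((a:ℝ) - b) ≠ 0)]
    push_cast
    nlinarith [hkey]
  refine ⟨z, zb, (p - s) - b, a - b, by omega, by omega, by omega, ?_, hz, hzb, ?_⟩
  · rw [hπeq]; exact hf
  · rw [hπeq]

lemma feas_mk {n p : ℕ} {x z zb : Fin n → ℝ} {π : ℝ}
    (hx : ∀ i, x i = 0 ∨ x i = 1)
    (hz : ∀ i, 0 ≤ z i ∧ x i + z i ≤ 1)
    (hzb : ∀ i, 0 ≤ zb i ∧ x i + zb i ≤ 1)
    (hπ : 0 ≤ π ∧ π ≤ 1)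
    (hc : (∑ i, x i) + π * (∑ i, z i) + (1 - π) * (∑ i, zb i) = (p : ℝ)) :
    Feas10 n p x z zb π := by
  refine ⟨hx, fun i => ⟨(hz i).1, ?_⟩, fun i => ⟨(hzb i).1, ?_⟩, ⟨hπ.1, hπ.2⟩, ?_, 
    fun i => (hz i).2, fun i => (hzb i).2⟩
  · have := (hz i).2; have := int_nonneg hx i; linarith
  · have := (hzb i).2; have := int_nonneg hx i; linarith
  · rw [feas_split]; exact hc

/-- The case `∑ z = ∑ zb` : push `π` to an endpoint. -/
lemma phaseC_eq {n p : ℕ} (hp1 : 1 ≤ p) (hpn : p ≤ n) (C cl cu : Fin n → ℝ) (Γ : ℝ)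
    (x z zb : Fin n → ℝ) (π : ℝ) (hf : Feas10 n p x z zb π)
    (hz : ∀ i, z i = 0 ∨ z i = 1) (hzb : ∀ i, zb i = 0 ∨ zb i = 1)
    (hba : ∑ i, zb i = ∑ i, z i) :
    GoodPt n p C cl cu Γ x (Obj10 n C cl cu Γ x z zb π) := by
  have hx := hf.1
  have hπ := hf.2.2.2.1
  have hcon : (∑ i, x i) + π * (∑ i, z i) + (1 - π) * (∑ i, zb i) = (p:ℝ) := by
    rw [← feas_split]; exact hf.2.2.2.2.1
  rw [hba] at hcon
  have hsum : (∑ i, x i) + (∑ i, z i) = (p : ℝ) := by linarith [hcon]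
  set A := ∑ i, cl i * z i with hA
  set B := ∑ i, cu i * zb i with hB
  rcases le_or_gt B (A + Γ) with h | h
  · -- go to π = 0
    have := terminal0 hp1 hpn C cl cu Γ x zb hx
      (fun i => ⟨int_nonneg hzb i, hf.2.2.2.2.2.2 i⟩) (by rw [hba]; exact hsum)
    refine this.mono ?_
    rw [Obj10]
    nlinarith [hπ.1, hπ.2]
  · -- go to π = 1
    have := terminal1 hp1 hpn C cl cu Γ x z hx
      (fun i => ⟨int_nonneg hz i, hf.2.2.2.2.2.1 i⟩) hsum
    refine this.mono ?_
    rw [Obj10]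
    nlinarith [hπ.1, hπ.2]

set_option maxHeartbeats 1000000 in
lemma phaseC {n p : ℕ} (hp1 : 1 ≤ p) (hpn : p ≤ n) (C cl cu : Fin n → ℝ) (Γ : ℝ)
    (hcu : ∀ i, cl i ≤ cu i) :
    ∀ g : ℕ, ∀ (x z zb : Fin n → ℝ) (π : ℝ), Feas10 n p x z zb π →
    (∀ i, z i = 0 ∨ z i = 1) → (∀ i, zb i = 0 ∨ zb i = 1) →
    0 < π → π < 1 →
    (∑ i, zb i) + ((n:ℝ) - ∑ i, z i) ≤ (g:ℝ) →
    GoodPt n p C cl cu Γ x (Obj10 n C cl cu Γ x z zb π) := by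
  intro g
  induction g with
  | zero =>
    intro x z zb π hf hz hzb hπ0 hπ1 hg
    rcases lt_trichotomy (∑ i, zb i) (∑ i, z i) with h | h | h
    · exact terminalQR C cl cu Γ x z zb π hf hz hzb h
    · exact phaseC_eq hp1 hpn C cl cu Γ x z zb π hf hz hzb h
    · exfalso
      obtain ⟨a, han, ha⟩ := int_sum_nat z hz
      have hbz : (0:ℝ) ≤ ∑ i, zb i := Finset.sum_nonneg (fun i _ => int_nonneg hzb i)
      have : ((a:ℝ)) ≤ n := by exact_mod_cast han
      simp only [Nat.cast_zero] at hg
      rw [ha] at hg h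
      linarith
  | succ g ih =>
    intro x z zb π hf hz hzb hπ0 hπ1 hg
    rcases lt_trichotomy (∑ i, zb i) (∑ i, z i) with h | h | h
    · exact terminalQR C cl cu Γ x z zb π hf hz hzb h
    · exact phaseC_eq hp1 hpn C cl cu Γ x z zb π hf hz hzb h
    · -- main case : ∑ z < ∑ zb
      have hx := hf.1
      obtain ⟨s, hsn, hs⟩ := int_sum_nat x hx
      obtain ⟨a, han, ha⟩ := int_sum_nat z hz
      obtain ⟨b, hbn, hb⟩ := int_sum_nat zb hzb
      have hab : a < b := by rw [ha, hb] at h; exact_mod_cast h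
      set A := ∑ i, cl i * z i with hA
      set B := ∑ i, cu i * zb i with hB
      have hcon : (s:ℝ) + π * a + (1 - π) * b = p := by
        have := hf.2.2.2.2.1
        rw [feas_split, hs, ha, hb] at this
        exact this
      set k : ℝ := (p:ℝ) - s with hk
      have hconI : π * a + (1 - π) * b = k := by rw [hk]; linarith
      have habR : (a:ℝ) < b := by exact_mod_cast hab
      have hprod1 : (0:ℝ) < (1 - π) * ((b:ℝ) - a) :=
        mul_pos (by linarith) (by linarith)
      have hprod2 : (0:ℝ) < π * ((b:ℝ) - a) := mul_pos hπ0 (by linarith)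
      have hak : (a:ℝ) < k := by nlinarith [hconI, hprod1]
      have hkb : k < b := by nlinarith [hconI, hprod2]
      have hsp : s ≤ p := by
        have h0a : (0:ℝ) ≤ a := by positivity
        by_contra hc
        push_neg at hc
        have : (p:ℝ) < s := by exact_mod_cast hc
        rw [hk] at hak; linarith
      have hkcast : k = ((p - s : ℕ) : ℝ) := by rw [hk, Nat.cast_sub hsp]
      have hakN : a < p - s := by
        rw [hkcast] at hak; exact_mod_cast hak
      have hkbN : p - s < b := by
        rw [hkcast] at hkb; exact_mod_cast hkb
      have hπeq : π * ((b:ℝ) - a) = (b:ℝ) - k := by linarith [hconI]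
      -- find the exchange coordinate
      obtain ⟨i, hzbi, hzi⟩ : ∃ i, zb i = 1 ∧ z i = 0 := by
        by_contra hc
        push_neg at hc
        have hle : ∀ i, zb i ≤ z i := by
          intro i
          rcases hzb i with h1 | h1
          · rw [h1]; exact int_nonneg hz i
          · rcases hz i with h2 | h2
            · exact absurd h2 (hc i h1)
            · rw [h1, h2]
        exact absurd (Finset.sum_le_sum (fun i _ => hle i)) (not_le.mpr h)
      have hxi : x i = 0 := by
        have := hf.2.2.2.2.2.2 i
        rcases hx i with h' | h'
        · exact h'
        · rw [h', hzbi] at this; linarith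
      rcases le_or_gt 0 (A - B + cu i * ((b:ℝ) - a) + Γ) with hσ | hσ
      · -- lower zb i, decrease π
        set zb' := Function.update zb i 0 with hzb'
        have hzb'int : ∀ j, zb' j = 0 ∨ zb' j = 1 := by
          intro j
          rcases eq_or_ne j i with rfl | hj
          · left; rw [hzb', Function.update_self]
          · rw [hzb', Function.update_of_ne hj]; exact hzb j
        have hsb' : ∑ j, zb' j = (b:ℝ) - 1 := by
          rw [hzb', sum_update', hb, hzbi]; ring
        have hcb' : ∑ j, cu j * zb' j = B - cu i := by
          rw [hzb', sum_mul_update, ← hB, hzbi]; ring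
        have hzb'b : ∀ j, 0 ≤ zb' j ∧ x j + zb' j ≤ 1 := by
          intro j
          rcases eq_or_ne j i with rfl | hj
          · rw [hzb', Function.update_self, hxi]; norm_num
          · rw [hzb', Function.update_of_ne hj]
            exact ⟨int_nonneg hzb j, hf.2.2.2.2.2.2 j⟩
        rcases eq_or_lt_of_le (by omega : p - s + 1 ≤ b) with hbk1 | hbk1
        · -- b = k + 1 : terminal at π = 0
          have hbk1R : (b:ℝ) = k + 1 := by
            rw [hkcast]; exact_mod_cast hbk1.symm
          have := terminal0 hp1 hpn C cl cu Γ x zb' hx hzb'b (by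
            rw [hs, hsb']; rw [hk] at hbk1R; linarith)
          refine this.mono ?_
          rw [Obj10, ← hA, hcb']
          have h3 : cu i * (π * ((b:ℝ) - a)) = cu i * ((b:ℝ) - k) := by rw [hπeq]
          have h4 : cu i * ((b:ℝ) - k) = cu i := by
            rw [show (b:ℝ) - k = 1 by linarith [hbk1R]]; ring
          have h1 : 0 ≤ π * (A - B + cu i * ((b:ℝ) - a) + Γ) := mul_nonneg hπ0.le hσ
          nlinarith [h1, h3, h4]
        · -- b > k + 1 : move to π* and recurse
          have hbk1R : k + 1 < (b:ℝ) := by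
            rw [hkcast]
            have : ((p - s + 1 : ℕ):ℝ) < (b:ℝ) := by exact_mod_cast hbk1
            push_cast at this; linarith
          set πs : ℝ := ((b:ℝ) - 1 - k) / ((b:ℝ) - 1 - a) with hπs
          have hden : (0:ℝ) < (b:ℝ) - 1 - a := by linarith
          have hnum : (0:ℝ) < (b:ℝ) - 1 - k := by linarith
          have hπs0 : 0 < πs := div_pos hnum hden
          have hπs1 : πs < 1 := by
            rw [hπs, div_lt_one hden]; linarith
          have hπsmul : πs * ((b:ℝ) - 1 - a) = (b:ℝ) - 1 - k := by
            rw [hπs]; field_simp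
          have hπsπ : πs ≤ π := by
            rw [hπs, div_le_iff₀ hden]
            linarith [hπeq]
          have hconI' : πs * a + (1 - πs) * ((b:ℝ) - 1) = k := by linarith [hπsmul]
          have hfeas' : Feas10 n p x z zb' πs := by
            apply feas_mk hx (fun j => ⟨int_nonneg hz j, hf.2.2.2.2.2.1 j⟩) hzb'b
              ⟨hπs0.le, hπs1.le⟩
            rw [hs, ha, hsb']
            rw [hk] at hconI'; linarith [hconI']
          have hobj : Obj10 n C cl cu Γ x z zb' πs ≤ Obj10 n C cl cu Γ x z zb π := by
            rw [Obj10, Obj10, ← hA, ← hB, hcb']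
            have hkey : (π * A + (1 - π) * B + Γ * π)
                - (πs * A + (1 - πs) * (B - cu i) + Γ * πs)
                = (π - πs) * (A - B + cu i * ((b:ℝ) - a) + Γ) := by
              linear_combination (cu i) * hconI - (cu i) * hconI'
            have h1 : 0 ≤ (π - πs) * (A - B + cu i * ((b:ℝ) - a) + Γ) :=
              mul_nonneg (by linarith) hσ
            linarith [hkey, h1]
          have hrec := ih x z zb' πs hfeas' hz hzb'int hπs0 hπs1 (by
            rw [hsb', ha]
            rw [hb, ha] at hg
            push_cast at hg ⊢
            linarith)
          exact hrec.mono hobj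
      · -- raise z i, increase π
        have hσl : A - B + cl i * ((b:ℝ) - a) + Γ < 0 := by
          nlinarith [hcu i, habR]
        set z' := Function.update z i 1 with hz'
        have hz'int : ∀ j, z' j = 0 ∨ z' j = 1 := by
          intro j
          rcases eq_or_ne j i with rfl | hj
          · right; rw [hz', Function.update_self]
          · rw [hz', Function.update_of_ne hj]; exact hz j
        have hsa' : ∑ j, z' j = (a:ℝ) + 1 := by
          rw [hz', sum_update', ha, hzi]; ring
        have hca' : ∑ j, cl j * z' j = A + cl i := by
          rw [hz', sum_mul_update, ← hA, hzi]; ring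
        have hz'b : ∀ j, 0 ≤ z' j ∧ x j + z' j ≤ 1 := by
          intro j
          rcases eq_or_ne j i with rfl | hj
          · rw [hz', Function.update_self, hxi]; norm_num
          · rw [hz', Function.update_of_ne hj]
            exact ⟨int_nonneg hz j, hf.2.2.2.2.2.1 j⟩
        rcases eq_or_lt_of_le (by omega : a + 1 ≤ p - s) with hak1 | hak1
        · -- a + 1 = k : terminal at π = 1
          have hak1R : (a:ℝ) + 1 = k := by
            rw [hkcast]; exact_mod_cast hak1
          have := terminal1 hp1 hpn C cl cu Γ x z' hx hz'b (by
            rw [hs, hsa']; rw [hk] at hak1R; linarith)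
          refine this.mono ?_
          rw [Obj10, ← hB, hca']
          have h2 : (1 - π) * ((b:ℝ) - a) = k - a := by linarith [hconI]
          have h3 : cl i * ((1 - π) * ((b:ℝ) - a)) = cl i * (k - a) := by rw [h2]
          have h4 : cl i * (k - (a:ℝ)) = cl i := by
            rw [show k - (a:ℝ) = 1 by linarith [hak1R]]; ring
          have h1 : 0 < (1 - π) * (B - A - Γ - cl i * ((b:ℝ) - a)) :=
            mul_pos (by linarith) (by linarith)
          nlinarith [h1, h3, h4]
        · -- a + 1 < k : move to π* and recurse
          have hak1R : (a:ℝ) + 1 < k := by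
            rw [hkcast]; exact_mod_cast hak1
          set πs : ℝ := ((b:ℝ) - k) / ((b:ℝ) - a - 1) with hπs
          have hden : (0:ℝ) < (b:ℝ) - a - 1 := by linarith
          have hnum : (0:ℝ) < (b:ℝ) - k := by linarith
          have hπs0 : 0 < πs := div_pos hnum hden
          have hπs1 : πs < 1 := by
            rw [hπs, div_lt_one hden]; linarith
          have hπsmul : πs * ((b:ℝ) - a - 1) = (b:ℝ) - k := by
            rw [hπs]; field_simp
          have hπsπ : π ≤ πs := by
            rw [hπs, le_div_iff₀ hden]
            linarith [hπeq, hπ0]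
          have hconI' : πs * ((a:ℝ) + 1) + (1 - πs) * b = k := by linarith [hπsmul]
          have hfeas' : Feas10 n p x z' zb πs := by
            apply feas_mk hx hz'b (fun j => ⟨int_nonneg hzb j, hf.2.2.2.2.2.2 j⟩)
              ⟨hπs0.le, hπs1.le⟩
            rw [hs, hb, hsa']
            rw [hk] at hconI'; linarith [hconI']
          have hobj : Obj10 n C cl cu Γ x z' zb πs ≤ Obj10 n C cl cu Γ x z zb π := by
            rw [Obj10, Obj10, ← hA, ← hB, hca']
            have hkey : (π * A + (1 - π) * B + Γ * π)
                - (πs * (A + cl i) + (1 - πs) * B + Γ * πs)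
                = (π - πs) * (A - B + cl i * ((b:ℝ) - a) + Γ) := by
              linear_combination (cl i) * hconI - (cl i) * hconI'
            have h1 : 0 ≤ (πs - π) * (-(A - B + cl i * ((b:ℝ) - a) + Γ)) :=
              mul_nonneg (by linarith) (by linarith)
            nlinarith [hkey, h1]
          have hrec := ih x z' zb πs hfeas' hz'int hzb hπs0 hπs1 (by
            rw [hsa', hb]
            rw [hb, ha] at hg
            push_cast at hg ⊢
            linarith)
          exact hrec.mono hobj

set_option maxHeartbeats 1000000 in
lemma step2 {n p : ℕ} (hp1 : 1 ≤ p) (hpn : p ≤ n) (C cl cu : Fin n → ℝ) (Γ : ℝ)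
    (hcu : ∀ i, cl i ≤ cu i) (x z zb : Fin n → ℝ) (π : ℝ) (j : Fin n)
    (hf : Feas10 n p x z zb π)
    (hzint : ∀ i, i ≠ j → z i = 0 ∨ z i = 1) (hzb : ∀ i, zb i = 0 ∨ zb i = 1)
    (hθ0 : 0 < z j) (hθ1 : z j < 1) (hπ0 : 0 < π) (hπ1 : π < 1) :
    GoodPt n p C cl cu Γ x (Obj10 n C cl cu Γ x z zb π) := by
  have hx := hf.1
  obtain ⟨s, hsn, hs⟩ := int_sum_nat x hx
  obtain ⟨b, hbn, hb⟩ := int_sum_nat zb hzb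
  set θ := z j with hθ
  set z0 := Function.update z j 0 with hz0
  have hz0int : ∀ i, z0 i = 0 ∨ z0 i = 1 := by
    intro i
    rcases eq_or_ne i j with rfl | hi
    · left; rw [hz0, Function.update_self]
    · rw [hz0, Function.update_of_ne hi]; exact hzint i hi
  obtain ⟨a, han, ha⟩ := int_sum_nat z0 hz0int
  have hsz : ∑ i, z i = (a:ℝ) + θ := by
    have := sum_update' z j 0
    rw [← hz0, ha] at this
    linarith
  set A0 := ∑ i, cl i * z0 i with hA0
  have hclz : ∑ i, cl i * z i = A0 + cl j * θ := by
    have := sum_mul_update cl z j 0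
    rw [← hz0, ← hA0] at this
    linarith [this]
  set B := ∑ i, cu i * zb i with hB
  set z' := Function.update z j 1 with hz'
  have hz'int : ∀ i, z' i = 0 ∨ z' i = 1 := by
    intro i
    rcases eq_or_ne i j with rfl | hi
    · right; rw [hz', Function.update_self]
    · rw [hz', Function.update_of_ne hi]; exact hzint i hi
  have hsz' : ∑ i, z' i = (a:ℝ) + 1 := by
    rw [hz', sum_update', hsz]; ring
  have hclz' : ∑ i, cl i * z' i = A0 + cl j := by
    rw [hz', sum_mul_update, hclz]; ring
  have hxj : x j = 0 := by
    have := hf.2.2.2.2.2.1 j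
    rcases hx j with h' | h'
    · exact h'
    · rw [h'] at this; linarith
  have hz'b : ∀ i, 0 ≤ z' i ∧ x i + z' i ≤ 1 := by
    intro i
    rcases eq_or_ne i j with rfl | hi
    · rw [hz', Function.update_self, hxj]; norm_num
    · rw [hz', Function.update_of_ne hi]
      exact ⟨(hf.2.1 i).1, hf.2.2.2.2.2.1 i⟩
  have hz0b : ∀ i, 0 ≤ z0 i ∧ x i + z0 i ≤ 1 := by
    intro i
    rcases eq_or_ne i j with rfl | hi
    · rw [hz0, Function.update_self, hxj]; norm_num
    · rw [hz0, Function.update_of_ne hi]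
      exact ⟨(hf.2.1 i).1, hf.2.2.2.2.2.1 i⟩
  have hzbb : ∀ i, 0 ≤ zb i ∧ x i + zb i ≤ 1 := fun i =>
    ⟨(hf.2.2.1 i).1, hf.2.2.2.2.2.2 i⟩
  have hcon : (s:ℝ) + π * ((a:ℝ) + θ) + (1 - π) * b = p := by
    have := hf.2.2.2.2.1
    rw [feas_split, hs, hsz, hb] at this
    exact this
  set k : ℝ := (p:ℝ) - s with hk
  have hconI : π * ((a:ℝ) + θ) + (1 - π) * b = k := by rw [hk]; linarith
  have hsp : s ≤ p := by
    by_contra hc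
    push_neg at hc
    have h1 : (p:ℝ) < s := by exact_mod_cast hc
    have h2 : 0 ≤ π * ((a:ℝ) + θ) := mul_nonneg hπ0.le (by positivity)
    have h3 : 0 ≤ (1 - π) * (b:ℝ) := mul_nonneg (by linarith) (by positivity)
    linarith
  have hkcast : k = ((p - s : ℕ) : ℝ) := by rw [hk, Nat.cast_sub hsp]
  have hπθ : π * ((a:ℝ) + θ - b) = k - b := by linarith [hconI]
  -- b ≠ k
  have hbk : (b:ℝ) ≠ k := by
    intro heq
    have hθeq : θ = k - a := by
      have h1 : π * ((a:ℝ) + θ - k) = 0 := by rw [heq] at hπθ; linarith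
      have h2 : (a:ℝ) + θ - k = 0 := by
        rcases mul_eq_zero.mp h1 with h | h
        · exact absurd h (ne_of_gt hπ0)
        · exact h
      linarith
    rcases le_or_gt (p - s) a with hle | hlt
    · have : k ≤ (a:ℝ) := by rw [hkcast]; exact_mod_cast hle
      linarith
    · have : (a:ℝ) + 1 ≤ k := by
        rw [hkcast]; exact_mod_cast hlt
      linarith
  rcases lt_or_gt_of_ne hbk with hbklt | hbkgt
  · -- b < k : then k ≤ a
    have hbkN : b < p - s := by
      rw [hkcast] at hbklt; exact_mod_cast hbklt
    have hbkR1 : (b:ℝ) + 1 ≤ k := by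
      rw [hkcast]; exact_mod_cast hbkN
    have hka : k ≤ (a:ℝ) := by
      have h2 : k - b ≤ π * (1 + (a:ℝ) - b) := by
        have := mul_le_mul_of_nonneg_left hθ1.le hπ0.le
        linarith [hπθ, this]
      have h3 : (0:ℝ) < 1 + (a:ℝ) - b := by
        by_contra hc
        push_neg at hc
        have := mul_nonneg hπ0.le (show (0:ℝ) ≤ (b:ℝ) - 1 - a by linarith)
        linarith [h2, this, hbkR1]
      have h4 : π * (1 + (a:ℝ) - b) < 1 + (a:ℝ) - b := by
        have := mul_pos (show (0:ℝ) < 1 - π by linarith) h3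
        linarith [this]
      have h5 : k - b < 1 + (a:ℝ) - b := by linarith
      have h6 : p - s ≤ a := by
        by_contra hc
        push_neg at hc
        have : (p - s:ℕ) ≥ a + 1 := hc
        have : ((a:ℝ)) + 1 ≤ k := by rw [hkcast]; exact_mod_cast this
        linarith
      rw [hkcast]; exact_mod_cast h6
    rcases le_or_gt 0 (A0 - B + cl j * ((b:ℝ) - a) + Γ) with hσ | hσ
    · -- raise θ to 1, decrease π
      set πs : ℝ := (k - b) / ((a:ℝ) + 1 - b) with hπs
      have hden : (0:ℝ) < (a:ℝ) + 1 - b := by linarith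
      have hπs0 : 0 < πs := div_pos (by linarith) hden
      have hπs1 : πs < 1 := by rw [hπs, div_lt_one hden]; linarith
      have hπsmul : πs * ((a:ℝ) + 1 - b) = k - b := by rw [hπs]; field_simp
      have hπsπ : πs ≤ π := by
        have h1 : πs * ((a:ℝ) + 1 - b) ≤ π * ((a:ℝ) + 1 - b) := by
          linarith [hπθ, hπsmul, mul_le_mul_of_nonneg_left hθ1.le hπ0.le]
        exact le_of_mul_le_mul_right (by linarith [h1]) hden
      have hconI' : πs * ((a:ℝ) + 1) + (1 - πs) * b = k := by linarith [hπsmul]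
      have hfeas' : Feas10 n p x z' zb πs := by
        apply feas_mk hx hz'b hzbb ⟨hπs0.le, hπs1.le⟩
        rw [hs, hb, hsz']
        rw [hk] at hconI'; linarith
      have hobj : Obj10 n C cl cu Γ x z' zb πs ≤ Obj10 n C cl cu Γ x z zb π := by
        rw [Obj10, Obj10, ← hB, hclz, hclz']
        have hkey : (π * (A0 + cl j * θ) + (1 - π) * B + Γ * π)
            - (πs * (A0 + cl j) + (1 - πs) * B + Γ * πs)
            = (π - πs) * (A0 - B + cl j * ((b:ℝ) - a) + Γ) := by
          linear_combination (cl j) * hconI - (cl j) * hconI'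
        have h1 : 0 ≤ (π - πs) * (A0 - B + cl j * ((b:ℝ) - a) + Γ) :=
          mul_nonneg (by linarith) hσ
        linarith [hkey, h1]
      have := phaseC hp1 hpn C cl cu Γ hcu (2*n) x z' zb πs hfeas' hz'int hzb hπs0 hπs1 (by
        rw [hb, hsz']
        have hbR : (b:ℝ) ≤ n := by exact_mod_cast hbn
        have h0 : (0:ℝ) ≤ (a:ℝ) + 1 := by positivity
        push_cast
        linarith)
      exact this.mono hobj
    · -- lower θ to 0, increase π
      rcases eq_or_lt_of_le hka with hkaE | hkaS
      · -- k = a : πs = 1, terminal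
        have := terminal1 hp1 hpn C cl cu Γ x z0 hx hz0b (by
          rw [hs, ha]; rw [hk] at hkaE; linarith)
        refine this.mono ?_
        rw [Obj10, ← hB, hclz, ← hA0]
        have hconI' : (1:ℝ) * (a:ℝ) + (1 - 1) * b = k := by rw [← hkaE]; ring
        have hkey : (π * (A0 + cl j * θ) + (1 - π) * B + Γ * π)
            - ((1:ℝ) * A0 + (1 - (1:ℝ)) * B + Γ * 1)
            = (π - 1) * (A0 - B + cl j * ((b:ℝ) - a) + Γ) := by
          linear_combination (cl j) * hconI - (cl j) * hconI'
        have h1 : 0 ≤ (π - 1) * (A0 - B + cl j * ((b:ℝ) - a) + Γ) := by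
          have := mul_nonneg (show (0:ℝ) ≤ 1 - π by linarith)
            (show (0:ℝ) ≤ -(A0 - B + cl j * ((b:ℝ) - a) + Γ) by linarith)
          linarith [this]
        linarith [hkey, h1]
      · -- k < a : go to z0 at πs < 1
        set πs : ℝ := (k - b) / ((a:ℝ) - b) with hπs
        have hden : (0:ℝ) < (a:ℝ) - b := by linarith
        have hπs0 : 0 < πs := div_pos (by linarith) hden
        have hπs1 : πs < 1 := by rw [hπs, div_lt_one hden]; linarith
        have hπsmul : πs * ((a:ℝ) - b) = k - b := by rw [hπs]; field_simp
        have hπsπ : π ≤ πs := by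
          have h1 : π * ((a:ℝ) + θ - b) ≤ πs * ((a:ℝ) + θ - b) := by
            linarith [hπθ, hπsmul, mul_nonneg hπs0.le hθ0.le]
          have hden2 : (0:ℝ) < (a:ℝ) + θ - b := by linarith
          exact le_of_mul_le_mul_right (by linarith [h1]) hden2
        have hconI' : πs * (a:ℝ) + (1 - πs) * b = k := by linarith [hπsmul]
        have hfeas' : Feas10 n p x z0 zb πs := by
          apply feas_mk hx hz0b hzbb ⟨hπs0.le, hπs1.le⟩
          rw [hs, hb, ha]
          rw [hk] at hconI'; linarith
        have hobj : Obj10 n C cl cu Γ x z0 zb πs ≤ Obj10 n C cl cu Γ x z zb π := by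
          rw [Obj10, Obj10, ← hB, hclz, ← hA0]
          have hkey : (π * (A0 + cl j * θ) + (1 - π) * B + Γ * π)
              - (πs * A0 + (1 - πs) * B + Γ * πs)
              = (π - πs) * (A0 - B + cl j * ((b:ℝ) - a) + Γ) := by
            linear_combination (cl j) * hconI - (cl j) * hconI'
          have h1 : 0 ≤ (π - πs) * (A0 - B + cl j * ((b:ℝ) - a) + Γ) := by
            have := mul_nonneg (show (0:ℝ) ≤ πs - π by linarith)
              (show (0:ℝ) ≤ -(A0 - B + cl j * ((b:ℝ) - a) + Γ) by linarith)
            linarith [this]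
          linarith [hkey, h1]
        have := phaseC hp1 hpn C cl cu Γ hcu (2*n) x z0 zb πs hfeas' hz0int hzb hπs0 hπs1 (by
          rw [hb, ha]
          have hbR : (b:ℝ) ≤ n := by exact_mod_cast hbn
          have h0 : (0:ℝ) ≤ (a:ℝ) := by positivity
          push_cast
          linarith)
        exact this.mono hobj
  · -- b > k : then a < k
    have hbkN : p - s < b := by
      rw [hkcast] at hbkgt; exact_mod_cast hbkgt
    have hbkR1 : k + 1 ≤ (b:ℝ) := by
      rw [hkcast]
      have : ((p - s + 1:ℕ):ℝ) ≤ (b:ℝ) := by exact_mod_cast hbkN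
      push_cast at this; linarith
    have hak : (a:ℝ) < k := by
      have h1 : 0 < π * θ := mul_pos hπ0 hθ0
      have h2 : 0 < π * ((b:ℝ) - a) := by linarith [hπθ, h1, hbkR1]
      have h3 : (0:ℝ) < (b:ℝ) - a := by
        by_contra hc
        push_neg at hc
        have := mul_nonneg hπ0.le (show (0:ℝ) ≤ (a:ℝ) - b by linarith)
        linarith [h2, this]
      have h4 : π * ((b:ℝ) - a) < (b:ℝ) - a := by
        have := mul_pos (show (0:ℝ) < 1 - π by linarith) h3
        linarith [this]
      linarith [hπθ, h4, h1]
    have hakN : a + 1 ≤ p - s := by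
      have : a < p - s := by rw [hkcast] at hak; exact_mod_cast hak
      omega
    rcases le_or_gt 0 (A0 - B + cl j * ((b:ℝ) - a) + Γ) with hσ | hσ
    · -- lower θ to 0, decrease π
      set πs : ℝ := ((b:ℝ) - k) / ((b:ℝ) - a) with hπs
      have hden : (0:ℝ) < (b:ℝ) - a := by linarith
      have hπs0 : 0 < πs := div_pos (by linarith) hden
      have hπs1 : πs < 1 := by rw [hπs, div_lt_one hden]; linarith
      have hπsmul : πs * ((b:ℝ) - a) = (b:ℝ) - k := by rw [hπs]; field_simp
      have hπsπ : πs ≤ π := by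
        have h1 : πs * ((b:ℝ) - a - θ) ≤ π * ((b:ℝ) - a - θ) := by
          linarith [hπθ, hπsmul, mul_nonneg hπs0.le hθ0.le]
        have hden2 : (0:ℝ) < (b:ℝ) - a - θ := by
          by_contra hc
          push_neg at hc
          have := mul_nonneg hπ0.le (show (0:ℝ) ≤ (a:ℝ) + θ - b by linarith)
          linarith [hπθ, this, hbkR1]
        exact le_of_mul_le_mul_right (by linarith [h1]) hden2
      have hconI' : πs * (a:ℝ) + (1 - πs) * b = k := by linarith [hπsmul]
      have hfeas' : Feas10 n p x z0 zb πs := by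
        apply feas_mk hx hz0b hzbb ⟨hπs0.le, hπs1.le⟩
        rw [hs, hb, ha]
        rw [hk] at hconI'; linarith
      have hobj : Obj10 n C cl cu Γ x z0 zb πs ≤ Obj10 n C cl cu Γ x z zb π := by
        rw [Obj10, Obj10, ← hB, hclz, ← hA0]
        have hkey : (π * (A0 + cl j * θ) + (1 - π) * B + Γ * π)
            - (πs * A0 + (1 - πs) * B + Γ * πs)
            = (π - πs) * (A0 - B + cl j * ((b:ℝ) - a) + Γ) := by
          linear_combination (cl j) * hconI - (cl j) * hconI'
        have h1 : 0 ≤ (π - πs) * (A0 - B + cl j * ((b:ℝ) - a) + Γ) :=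
          mul_nonneg (by linarith) hσ
        linarith [hkey, h1]
      have := phaseC hp1 hpn C cl cu Γ hcu (2*n) x z0 zb πs hfeas' hz0int hzb hπs0 hπs1 (by
        rw [hb, ha]
        have hbR : (b:ℝ) ≤ n := by exact_mod_cast hbn
        have h0 : (0:ℝ) ≤ (a:ℝ) := by positivity
        push_cast
        linarith)
      exact this.mono hobj
    · -- raise θ to 1, increase π
      rcases eq_or_lt_of_le hakN with hakE | hakS
      · -- a + 1 = k : πs = 1, terminal
        have hakER : (a:ℝ) + 1 = k := by
          rw [hkcast]; exact_mod_cast hakE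
        have := terminal1 hp1 hpn C cl cu Γ x z' hx hz'b (by
          rw [hs, hsz']; rw [hk] at hakER; linarith)
        refine this.mono ?_
        rw [Obj10, ← hB, hclz, hclz']
        have hconI' : (1:ℝ) * ((a:ℝ) + 1) + (1 - 1) * b = k := by rw [← hakER]; ring
        have hkey : (π * (A0 + cl j * θ) + (1 - π) * B + Γ * π)
            - ((1:ℝ) * (A0 + cl j) + (1 - (1:ℝ)) * B + Γ * 1)
            = (π - 1) * (A0 - B + cl j * ((b:ℝ) - a) + Γ) := by
          linear_combination (cl j) * hconI - (cl j) * hconI'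
        have h1 : 0 ≤ (π - 1) * (A0 - B + cl j * ((b:ℝ) - a) + Γ) := by
          have := mul_nonneg (show (0:ℝ) ≤ 1 - π by linarith)
            (show (0:ℝ) ≤ -(A0 - B + cl j * ((b:ℝ) - a) + Γ) by linarith)
          linarith [this]
        linarith [hkey, h1]
      · -- a + 1 < k
        have hakSR : (a:ℝ) + 1 < k := by
          rw [hkcast]; exact_mod_cast hakS
        set πs : ℝ := ((b:ℝ) - k) / ((b:ℝ) - a - 1) with hπs
        have hden : (0:ℝ) < (b:ℝ) - a - 1 := by linarith
        have hπs0 : 0 < πs := div_pos (by linarith) hden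
        have hπs1 : πs < 1 := by rw [hπs, div_lt_one hden]; linarith
        have hπsmul : πs * ((b:ℝ) - a - 1) = (b:ℝ) - k := by rw [hπs]; field_simp
        have hπsπ : π ≤ πs := by
          have h1 : π * ((b:ℝ) - a - θ) ≤ πs * ((b:ℝ) - a - θ) := by
            linarith [hπθ, hπsmul, mul_le_mul_of_nonneg_left hθ1.le hπs0.le]
          have hden2 : (0:ℝ) < (b:ℝ) - a - θ := by
            by_contra hc
            push_neg at hc
            have := mul_nonneg hπ0.le (show (0:ℝ) ≤ (a:ℝ) + θ - b by linarith)
            linarith [hπθ, this, hbkR1]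
          exact le_of_mul_le_mul_right (by linarith [h1]) hden2
        have hconI' : πs * ((a:ℝ) + 1) + (1 - πs) * b = k := by linarith [hπsmul]
        have hfeas' : Feas10 n p x z' zb πs := by
          apply feas_mk hx hz'b hzbb ⟨hπs0.le, hπs1.le⟩
          rw [hs, hb, hsz']
          rw [hk] at hconI'; linarith
        have hobj : Obj10 n C cl cu Γ x z' zb πs ≤ Obj10 n C cl cu Γ x z zb π := by
          rw [Obj10, Obj10, ← hB, hclz, hclz']
          have hkey : (π * (A0 + cl j * θ) + (1 - π) * B + Γ * π)
              - (πs * (A0 + cl j) + (1 - πs) * B + Γ * πs)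
              = (π - πs) * (A0 - B + cl j * ((b:ℝ) - a) + Γ) := by
            linear_combination (cl j) * hconI - (cl j) * hconI'
          have h1 : 0 ≤ (π - πs) * (A0 - B + cl j * ((b:ℝ) - a) + Γ) := by
            have := mul_nonneg (show (0:ℝ) ≤ πs - π by linarith)
              (show (0:ℝ) ≤ -(A0 - B + cl j * ((b:ℝ) - a) + Γ) by linarith)
            linarith [this]
          linarith [hkey, h1]
        have := phaseC hp1 hpn C cl cu Γ hcu (2*n) x z' zb πs hfeas' hz'int hzb hπs0 hπs1 (by
          rw [hb, hsz']
          have hbR : (b:ℝ) ≤ n := by exact_mod_cast hbn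
          have h0 : (0:ℝ) ≤ (a:ℝ) + 1 := by positivity
          push_cast
          linarith)
        exact this.mono hobj

set_option maxHeartbeats 1000000 in
lemma step2p {n p : ℕ} (hp1 : 1 ≤ p) (hpn : p ≤ n) (C cl cu : Fin n → ℝ) (Γ : ℝ)
    (hcu : ∀ i, cl i ≤ cu i) (x z zb : Fin n → ℝ) (π : ℝ) (j : Fin n)
    (hf : Feas10 n p x z zb π)
    (hz : ∀ i, z i = 0 ∨ z i = 1) (hzbint : ∀ i, i ≠ j → zb i = 0 ∨ zb i = 1)
    (hθ0 : 0 < zb j) (hθ1 : zb j < 1) (hπ0 : 0 < π) (hπ1 : π < 1) :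
    GoodPt n p C cl cu Γ x (Obj10 n C cl cu Γ x z zb π) := by
  have hx := hf.1
  obtain ⟨s, hsn, hs⟩ := int_sum_nat x hx
  obtain ⟨a, han, ha⟩ := int_sum_nat z hz
  set θ := zb j with hθ
  set zb0 := Function.update zb j 0 with hzb0
  have hzb0int : ∀ i, zb0 i = 0 ∨ zb0 i = 1 := by
    intro i
    rcases eq_or_ne i j with rfl | hi
    · left; rw [hzb0, Function.update_self]
    · rw [hzb0, Function.update_of_ne hi]; exact hzbint i hi
  obtain ⟨b, hbn, hb⟩ := int_sum_nat zb0 hzb0int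
  have hszb : ∑ i, zb i = (b:ℝ) + θ := by
    have := sum_update' zb j 0
    rw [← hzb0, hb] at this
    linarith
  set B0 := ∑ i, cu i * zb0 i with hB0
  have hcuzb : ∑ i, cu i * zb i = B0 + cu j * θ := by
    have := sum_mul_update cu zb j 0
    rw [← hzb0, ← hB0] at this
    linarith [this]
  set A := ∑ i, cl i * z i with hA
  set zb' := Function.update zb j 1 with hzb'
  have hzb'int : ∀ i, zb' i = 0 ∨ zb' i = 1 := by
    intro i
    rcases eq_or_ne i j with rfl | hi
    · right; rw [hzb', Function.update_self]
    · rw [hzb', Function.update_of_ne hi]; exact hzbint i hi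
  have hszb' : ∑ i, zb' i = (b:ℝ) + 1 := by
    rw [hzb', sum_update', hszb]; ring
  have hcuzb' : ∑ i, cu i * zb' i = B0 + cu j := by
    rw [hzb', sum_mul_update, hcuzb]; ring
  have hxj : x j = 0 := by
    have := hf.2.2.2.2.2.2 j
    rcases hx j with h' | h'
    · exact h'
    · rw [h'] at this; linarith
  have hzb'b : ∀ i, 0 ≤ zb' i ∧ x i + zb' i ≤ 1 := by
    intro i
    rcases eq_or_ne i j with rfl | hi
    · rw [hzb', Function.update_self, hxj]; norm_num
    · rw [hzb', Function.update_of_ne hi]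
      exact ⟨(hf.2.2.1 i).1, hf.2.2.2.2.2.2 i⟩
  have hzb0b : ∀ i, 0 ≤ zb0 i ∧ x i + zb0 i ≤ 1 := by
    intro i
    rcases eq_or_ne i j with rfl | hi
    · rw [hzb0, Function.update_self, hxj]; norm_num
    · rw [hzb0, Function.update_of_ne hi]
      exact ⟨(hf.2.2.1 i).1, hf.2.2.2.2.2.2 i⟩
  have hzbz : ∀ i, 0 ≤ z i ∧ x i + z i ≤ 1 := fun i =>
    ⟨(hf.2.1 i).1, hf.2.2.2.2.2.1 i⟩
  have hcon : (s:ℝ) + π * a + (1 - π) * ((b:ℝ) + θ) = p := by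
    have := hf.2.2.2.2.1
    rw [feas_split, hs, ha, hszb] at this
    exact this
  set k : ℝ := (p:ℝ) - s with hk
  have hconI : π * a + (1 - π) * ((b:ℝ) + θ) = k := by rw [hk]; linarith
  have hsp : s ≤ p := by
    by_contra hc
    push_neg at hc
    have h1 : (p:ℝ) < s := by exact_mod_cast hc
    have h2 : 0 ≤ π * (a:ℝ) := mul_nonneg hπ0.le (by positivity)
    have h3 : 0 ≤ (1 - π) * ((b:ℝ) + θ) := mul_nonneg (by linarith) (by positivity)
    linarith
  have hkcast : k = ((p - s : ℕ) : ℝ) := by rw [hk, Nat.cast_sub hsp]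
  have hπθ : (1 - π) * ((b:ℝ) + θ - a) = k - a := by linarith [hconI]
  -- a ≠ k
  have hak : (a:ℝ) ≠ k := by
    intro heq
    have hθeq : θ = k - b := by
      have h1 : (1 - π) * ((b:ℝ) + θ - k) = 0 := by rw [heq] at hπθ; linarith
      have h2 : (b:ℝ) + θ - k = 0 := by
        rcases mul_eq_zero.mp h1 with h | h
        · exact absurd h (by intro hh; linarith)
        · exact h
      linarith
    rcases le_or_gt (p - s) b with hle | hlt
    · have : k ≤ (b:ℝ) := by rw [hkcast]; exact_mod_cast hle
      linarith
    · have : (b:ℝ) + 1 ≤ k := by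
        rw [hkcast]; exact_mod_cast hlt
      linarith
  rcases lt_or_gt_of_ne hak with haklt | hakgt
  · -- a < k : then k ≤ b
    have hakN : a < p - s := by
      rw [hkcast] at haklt; exact_mod_cast haklt
    have hakR1 : (a:ℝ) + 1 ≤ k := by
      rw [hkcast]; exact_mod_cast hakN
    have hπeq2 : π * ((b:ℝ) + θ - a) = (b:ℝ) + θ - k := by linarith [hπθ]
    have hkb : k ≤ (b:ℝ) := by
      have hm : (1 - π) * θ < (1 - π) * 1 := by
        exact mul_lt_mul_of_pos_left hθ1 (by linarith)
      have h2 : k - a < (1 - π) * ((b:ℝ) + 1 - a) := by linarith [hπθ, hm]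
      have h3 : (0:ℝ) < (b:ℝ) + 1 - a := by
        by_contra hc
        push_neg at hc
        have := mul_nonneg (show (0:ℝ) ≤ 1 - π by linarith)
          (show (0:ℝ) ≤ (a:ℝ) - b - 1 by linarith)
        linarith [h2, this, hakR1]
      have h4 : (1 - π) * ((b:ℝ) + 1 - a) < (b:ℝ) + 1 - a := by
        have := mul_pos hπ0 h3
        linarith [this]
      have h5 : k < (b:ℝ) + 1 := by linarith
      have h6 : p - s ≤ b := by
        by_contra hc
        push_neg at hc
        have : ((b:ℝ)) + 1 ≤ k := by rw [hkcast]; exact_mod_cast hc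
        linarith
      rw [hkcast]; exact_mod_cast h6
    rcases le_or_gt 0 (A - B0 + cu j * ((b:ℝ) - a) + Γ) with hσ | hσ
    · -- lower θ to 0, decrease π
      rcases eq_or_lt_of_le hkb with hkbE | hkbS
      · -- k = b : πs = 0, terminal at π = 0
        have := terminal0 hp1 hpn C cl cu Γ x zb0 hx hzb0b (by
          rw [hs, hb]; rw [hk] at hkbE; linarith)
        refine this.mono ?_
        rw [Obj10, ← hA, hcuzb, ← hB0]
        have hconI' : (0:ℝ) * (a:ℝ) + (1 - 0) * (b:ℝ) = k := by rw [hkbE]; ring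
        have hkey : (π * A + (1 - π) * (B0 + cu j * θ) + Γ * π)
            - ((0:ℝ) * A + (1 - (0:ℝ)) * B0 + Γ * 0)
            = (π - 0) * (A - B0 + cu j * ((b:ℝ) - a) + Γ) := by
          linear_combination (cu j) * hconI - (cu j) * hconI'
        have h1 : 0 ≤ (π - 0) * (A - B0 + cu j * ((b:ℝ) - a) + Γ) :=
          mul_nonneg (by linarith) hσ
        linarith [hkey, h1]
      · -- k < b
        set πs : ℝ := ((b:ℝ) - k) / ((b:ℝ) - a) with hπs
        have hden : (0:ℝ) < (b:ℝ) - a := by linarith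
        have hπs0 : 0 < πs := div_pos (by linarith) hden
        have hπs1 : πs < 1 := by rw [hπs, div_lt_one hden]; linarith
        have hπsmul : πs * ((b:ℝ) - a) = (b:ℝ) - k := by rw [hπs]; field_simp
        have hπsπ : πs ≤ π := by
          have h1 : πs * ((b:ℝ) + θ - a) ≤ π * ((b:ℝ) + θ - a) := by
            linarith [hπeq2, hπsmul, mul_le_mul_of_nonneg_right hπs1.le hθ0.le]
          have hden2 : (0:ℝ) < (b:ℝ) + θ - a := by linarith
          exact le_of_mul_le_mul_right (by linarith [h1]) hden2
        have hconI' : πs * (a:ℝ) + (1 - πs) * b = k := by linarith [hπsmul]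
        have hfeas' : Feas10 n p x z zb0 πs := by
          apply feas_mk hx hzbz hzb0b ⟨hπs0.le, hπs1.le⟩
          rw [hs, ha, hb]
          rw [hk] at hconI'; linarith
        have hobj : Obj10 n C cl cu Γ x z zb0 πs ≤ Obj10 n C cl cu Γ x z zb π := by
          rw [Obj10, Obj10, ← hA, hcuzb, ← hB0]
          have hkey : (π * A + (1 - π) * (B0 + cu j * θ) + Γ * π)
              - (πs * A + (1 - πs) * B0 + Γ * πs)
              = (π - πs) * (A - B0 + cu j * ((b:ℝ) - a) + Γ) := by
            linear_combination (cu j) * hconI - (cu j) * hconI'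
          have h1 : 0 ≤ (π - πs) * (A - B0 + cu j * ((b:ℝ) - a) + Γ) :=
            mul_nonneg (by linarith) hσ
          linarith [hkey, h1]
        have := phaseC hp1 hpn C cl cu Γ hcu (2*n) x z zb0 πs hfeas' hz hzb0int hπs0 hπs1 (by
          have h1 : ∑ i, zb0 i ≤ (n:ℝ) := by
            calc ∑ i, zb0 i ≤ ∑ _i : Fin n, (1:ℝ) :=
                  Finset.sum_le_sum (fun i _ => int_le_one hzb0int i)
              _ = n := by simp
          have h2 : (0:ℝ) ≤ ∑ i, z i := Finset.sum_nonneg (fun i _ => int_nonneg hz i)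
          push_cast
          linarith)
        exact this.mono hobj
    · -- raise θ to 1, increase π
      set πs : ℝ := ((b:ℝ) + 1 - k) / ((b:ℝ) + 1 - a) with hπs
      have hden : (0:ℝ) < (b:ℝ) + 1 - a := by linarith
      have hπs0 : 0 < πs := div_pos (by linarith) hden
      have hπs1 : πs < 1 := by rw [hπs, div_lt_one hden]; linarith
      have hπsmul : πs * ((b:ℝ) + 1 - a) = (b:ℝ) + 1 - k := by rw [hπs]; field_simp
      have hπsπ : π ≤ πs := by
        have h1 : π * ((b:ℝ) + θ - a) ≤ πs * ((b:ℝ) + θ - a) := by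
          linarith [hπeq2, hπsmul,
            mul_le_mul_of_nonneg_left (show 1 - θ ≤ 1 by linarith) hπs0.le,
            mul_le_mul_of_nonneg_right hπs1.le (show (0:ℝ) ≤ 1 - θ by linarith)]
        have hden2 : (0:ℝ) < (b:ℝ) + θ - a := by linarith
        exact le_of_mul_le_mul_right (by linarith [h1]) hden2
      have hconI' : πs * (a:ℝ) + (1 - πs) * ((b:ℝ) + 1) = k := by linarith [hπsmul]
      have hfeas' : Feas10 n p x z zb' πs := by
        apply feas_mk hx hzbz hzb'b ⟨hπs0.le, hπs1.le⟩
        rw [hs, ha, hszb']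
        rw [hk] at hconI'; linarith
      have hobj : Obj10 n C cl cu Γ x z zb' πs ≤ Obj10 n C cl cu Γ x z zb π := by
        rw [Obj10, Obj10, ← hA, hcuzb, hcuzb']
        have hkey : (π * A + (1 - π) * (B0 + cu j * θ) + Γ * π)
            - (πs * A + (1 - πs) * (B0 + cu j) + Γ * πs)
            = (π - πs) * (A - B0 + cu j * ((b:ℝ) - a) + Γ) := by
          linear_combination (cu j) * hconI - (cu j) * hconI'
        have h1 : 0 ≤ (π - πs) * (A - B0 + cu j * ((b:ℝ) - a) + Γ) := by
          have := mul_nonneg (show (0:ℝ) ≤ πs - π by linarith)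
            (show (0:ℝ) ≤ -(A - B0 + cu j * ((b:ℝ) - a) + Γ) by linarith)
          linarith [this]
        linarith [hkey, h1]
      have := phaseC hp1 hpn C cl cu Γ hcu (2*n) x z zb' πs hfeas' hz hzb'int hπs0 hπs1 (by
        have h1 : ∑ i, zb' i ≤ (n:ℝ) := by
          calc ∑ i, zb' i ≤ ∑ _i : Fin n, (1:ℝ) :=
                Finset.sum_le_sum (fun i _ => int_le_one hzb'int i)
            _ = n := by simp
        have h2 : (0:ℝ) ≤ ∑ i, z i := Finset.sum_nonneg (fun i _ => int_nonneg hz i)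
        push_cast
        linarith)
      exact this.mono hobj
  · -- a > k : then b < k
    have hakN : p - s < a := by
      rw [hkcast] at hakgt; exact_mod_cast hakgt
    have hakR1 : k + 1 ≤ (a:ℝ) := by
      rw [hkcast]
      have : ((p - s + 1:ℕ):ℝ) ≤ (a:ℝ) := by exact_mod_cast hakN
      push_cast at this; linarith
    have hπeq2 : π * ((a:ℝ) - b - θ) = k - (b:ℝ) - θ := by linarith [hπθ]
    have hbk : (b:ℝ) + θ < k := by
      have h1 : (0:ℝ) < (1 - π) * θ := mul_pos (by linarith) hθ0
      have h2 : 0 < (1 - π) * ((a:ℝ) - b - θ) := by linarith [hπθ, h1]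
      have h3 : (0:ℝ) < (a:ℝ) - b - θ := by
        by_contra hc
        push_neg at hc
        have := mul_nonneg (show (0:ℝ) ≤ 1 - π by linarith)
          (show (0:ℝ) ≤ (b:ℝ) + θ - a by linarith)
        linarith [h2, this]
      have h4 : (1 - π) * ((a:ℝ) - b - θ) < (a:ℝ) - b - θ := by
        have := mul_pos hπ0 h3
        linarith [this]
      linarith [hπθ, h4]
    have hbkN : b < p - s := by
      have : (b:ℝ) < k := by linarith
      rw [hkcast] at this; exact_mod_cast this
    have hbkR1 : (b:ℝ) + 1 ≤ k := by
      rw [hkcast]; exact_mod_cast hbkN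
    have hden2 : (0:ℝ) < (a:ℝ) - b - θ := by
      by_contra hc
      push_neg at hc
      have := mul_nonneg hπ0.le (show (0:ℝ) ≤ (b:ℝ) + θ - a by linarith)
      linarith [hπeq2, this, hbkR1]
    rcases le_or_gt 0 (A - B0 + cu j * ((b:ℝ) - a) + Γ) with hσ | hσ
    · -- raise θ to 1, decrease π
      rcases eq_or_lt_of_le (by omega : b + 1 ≤ p - s) with hbk1 | hbk1
      · -- k = b + 1 : πs = 0, terminal at π = 0
        have hbk1R : (b:ℝ) + 1 = k := by
          rw [hkcast]; exact_mod_cast hbk1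
        have := terminal0 hp1 hpn C cl cu Γ x zb' hx hzb'b (by
          rw [hs, hszb']; rw [hk] at hbk1R; linarith)
        refine this.mono ?_
        rw [Obj10, ← hA, hcuzb, hcuzb']
        have hconI' : (0:ℝ) * (a:ℝ) + (1 - 0) * ((b:ℝ) + 1) = k := by rw [← hbk1R]; ring
        have hkey : (π * A + (1 - π) * (B0 + cu j * θ) + Γ * π)
            - ((0:ℝ) * A + (1 - (0:ℝ)) * (B0 + cu j) + Γ * 0)
            = (π - 0) * (A - B0 + cu j * ((b:ℝ) - a) + Γ) := by
          linear_combination (cu j) * hconI - (cu j) * hconI'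
        have h1 : 0 ≤ (π - 0) * (A - B0 + cu j * ((b:ℝ) - a) + Γ) :=
          mul_nonneg (by linarith) hσ
        linarith [hkey, h1]
      · -- b + 1 < k
        have hbk1R : (b:ℝ) + 2 ≤ k := by
          rw [hkcast]
          have : ((b + 2:ℕ):ℝ) ≤ ((p - s:ℕ):ℝ) := by exact_mod_cast hbk1
          push_cast at this; linarith
        set πs : ℝ := (k - b - 1) / ((a:ℝ) - b - 1) with hπs
        have hden : (0:ℝ) < (a:ℝ) - b - 1 := by linarith
        have hπs0 : 0 < πs := div_pos (by linarith) hden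
        have hπs1 : πs < 1 := by rw [hπs, div_lt_one hden]; linarith
        have hπsmul : πs * ((a:ℝ) - b - 1) = k - b - 1 := by rw [hπs]; field_simp
        have hπsπ : πs ≤ π := by
          have h1 : πs * ((a:ℝ) - b - θ) ≤ π * ((a:ℝ) - b - θ) := by
            linarith [hπeq2, hπsmul,
              mul_le_mul_of_nonneg_right hπs1.le (show (0:ℝ) ≤ 1 - θ by linarith)]
          exact le_of_mul_le_mul_right (by linarith [h1]) hden2
        have hconI' : πs * (a:ℝ) + (1 - πs) * ((b:ℝ) + 1) = k := by linarith [hπsmul]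
        have hfeas' : Feas10 n p x z zb' πs := by
          apply feas_mk hx hzbz hzb'b ⟨hπs0.le, hπs1.le⟩
          rw [hs, ha, hszb']
          rw [hk] at hconI'; linarith
        have hobj : Obj10 n C cl cu Γ x z zb' πs ≤ Obj10 n C cl cu Γ x z zb π := by
          rw [Obj10, Obj10, ← hA, hcuzb, hcuzb']
          have hkey : (π * A + (1 - π) * (B0 + cu j * θ) + Γ * π)
              - (πs * A + (1 - πs) * (B0 + cu j) + Γ * πs)
              = (π - πs) * (A - B0 + cu j * ((b:ℝ) - a) + Γ) := by
            linear_combination (cu j) * hconI - (cu j) * hconI'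
          have h1 : 0 ≤ (π - πs) * (A - B0 + cu j * ((b:ℝ) - a) + Γ) :=
            mul_nonneg (by linarith) hσ
          linarith [hkey, h1]
        have := phaseC hp1 hpn C cl cu Γ hcu (2*n) x z zb' πs hfeas' hz hzb'int hπs0 hπs1 (by
          have h1 : ∑ i, zb' i ≤ (n:ℝ) := by
            calc ∑ i, zb' i ≤ ∑ _i : Fin n, (1:ℝ) :=
                  Finset.sum_le_sum (fun i _ => int_le_one hzb'int i)
              _ = n := by simp
          have h2 : (0:ℝ) ≤ ∑ i, z i := Finset.sum_nonneg (fun i _ => int_nonneg hz i)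
          push_cast
          linarith)
        exact this.mono hobj
    · -- lower θ to 0, increase π
      set πs : ℝ := (k - b) / ((a:ℝ) - b) with hπs
      have hden : (0:ℝ) < (a:ℝ) - b := by linarith
      have hπs0 : 0 < πs := div_pos (by linarith) hden
      have hπs1 : πs < 1 := by rw [hπs, div_lt_one hden]; linarith
      have hπsmul : πs * ((a:ℝ) - b) = k - b := by rw [hπs]; field_simp
      have hπsπ : π ≤ πs := by
        have h1 : π * ((a:ℝ) - b - θ) ≤ πs * ((a:ℝ) - b - θ) := by
          linarith [hπeq2, hπsmul,
            mul_le_mul_of_nonneg_right hπs1.le hθ0.le]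
        exact le_of_mul_le_mul_right (by linarith [h1]) hden2
      have hconI' : πs * (a:ℝ) + (1 - πs) * b = k := by linarith [hπsmul]
      have hfeas' : Feas10 n p x z zb0 πs := by
        apply feas_mk hx hzbz hzb0b ⟨hπs0.le, hπs1.le⟩
        rw [hs, ha, hb]
        rw [hk] at hconI'; linarith
      have hobj : Obj10 n C cl cu Γ x z zb0 πs ≤ Obj10 n C cl cu Γ x z zb π := by
        rw [Obj10, Obj10, ← hA, hcuzb, ← hB0]
        have hkey : (π * A + (1 - π) * (B0 + cu j * θ) + Γ * π)
            - (πs * A + (1 - πs) * B0 + Γ * πs)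
            = (π - πs) * (A - B0 + cu j * ((b:ℝ) - a) + Γ) := by
          linear_combination (cu j) * hconI - (cu j) * hconI'
        have h1 : 0 ≤ (π - πs) * (A - B0 + cu j * ((b:ℝ) - a) + Γ) := by
          have := mul_nonneg (show (0:ℝ) ≤ πs - π by linarith)
            (show (0:ℝ) ≤ -(A - B0 + cu j * ((b:ℝ) - a) + Γ) by linarith)
          linarith [this]
        linarith [hkey, h1]
      have := phaseC hp1 hpn C cl cu Γ hcu (2*n) x z zb0 πs hfeas' hz hzb0int hπs0 hπs1 (by
        have h1 : ∑ i, zb0 i ≤ (n:ℝ) := by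
          calc ∑ i, zb0 i ≤ ∑ _i : Fin n, (1:ℝ) :=
                Finset.sum_le_sum (fun i _ => int_le_one hzb0int i)
            _ = n := by simp
        have h2 : (0:ℝ) ≤ ∑ i, z i := Finset.sum_nonneg (fun i _ => int_nonneg hz i)
        push_cast
        linarith)
      exact this.mono hobj

set_option maxHeartbeats 1000000 in
lemma dominate {n p : ℕ} (hp1 : 1 ≤ p) (hpn : p ≤ n) (C cl cu : Fin n → ℝ) (Γ : ℝ)
    (hcu : ∀ i, cl i ≤ cu i) (x z zb : Fin n → ℝ) (π : ℝ)
    (hf : Feas10 n p x z zb π) :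
    GoodPt n p C cl cu Γ x (Obj10 n C cl cu Γ x z zb π) := by
  obtain ⟨hx, hzI, hzbI, hπI, hcon, hxz, hxzb⟩ := hf
  have hf' : Feas10 n p x z zb π := ⟨hx, hzI, hzbI, hπI, hcon, hxz, hxzb⟩
  rcases eq_or_lt_of_le hπI.1 with hπ0 | hπ0
  · -- π = 0
    have := terminal0 hp1 hpn C cl cu Γ x zb hx (fun i => ⟨(hzbI i).1, hxzb i⟩) (by
      rw [feas_split] at hcon
      rw [← hπ0] at hcon
      linarith [hcon])
    refine this.mono ?_
    rw [Obj10, ← hπ0]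
    ring_nf
    linarith
  · rcases eq_or_lt_of_le hπI.2 with hπ1 | hπ1
    · -- π = 1
      have := terminal1 hp1 hpn C cl cu Γ x z hx (fun i => ⟨(hzI i).1, hxz i⟩) (by
        rw [feas_split, hπ1] at hcon
        linarith [hcon])
      refine this.mono ?_
      rw [Obj10, hπ1]
      ring_nf
      linarith
    · -- 0 < π < 1 : first make (z, zb) integral via L2
      set e : Fin n → ℝ := fun i => 1 - x i with he
      have heint : ∀ i, e i = 0 ∨ e i = 1 := by
        intro i; rcases hx i with h | h <;> simp [he, h]
      set c : Fin n ⊕ Fin n → ℝ := Sum.elim cl cu with hc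
      set cap : Fin n ⊕ Fin n → ℝ :=
        Sum.elim (fun i => π * e i) (fun i => (1 - π) * e i) with hcap
      set y : Fin n ⊕ Fin n → ℝ :=
        Sum.elim (fun i => π * z i) (fun i => (1 - π) * zb i) with hy
      have hbounds : ∀ l, 0 ≤ y l ∧ y l ≤ cap l := by
        intro l
        rcases l with i | i
        · exact ⟨mul_nonneg hπ0.le (hzI i).1,
            mul_le_mul_of_nonneg_left (by simp only [he]; linarith [hxz i]) hπ0.le⟩
        · exact ⟨mul_nonneg (by linarith) (hzbI i).1,
            mul_le_mul_of_nonneg_left (by simp only [he]; linarith [hxzb i]) (by linarith)⟩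
      obtain ⟨y', hb', hs', hc', hfr'⟩ := L2 c cap y hbounds
      set z' : Fin n → ℝ := fun i => y' (Sum.inl i) / π with hz'
      set zb' : Fin n → ℝ := fun i => y' (Sum.inr i) / (1 - π) with hzb'
      have hπne : π ≠ 0 := ne_of_gt hπ0
      have hπne1 : (1:ℝ) - π ≠ 0 := by intro hh; linarith
      have hz'val : ∀ i, π * z' i = y' (Sum.inl i) := by
        intro i; rw [hz']; field_simp
      have hzb'val : ∀ i, (1 - π) * zb' i = y' (Sum.inr i) := by
        intro i; rw [hzb']; field_simp
      have hz'b : ∀ i, 0 ≤ z' i ∧ x i + z' i ≤ 1 := by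
        intro i
        have h1 := (hb' (Sum.inl i)).1
        have h2 := (hb' (Sum.inl i)).2
        simp only [hcap, Sum.elim_inl] at h2
        constructor
        · rw [hz']; exact div_nonneg h1 hπ0.le
        · have : z' i ≤ e i := by
            rw [hz', div_le_iff₀ hπ0]
            linarith [h2]
          simp only [he] at this; linarith
      have hzb'b : ∀ i, 0 ≤ zb' i ∧ x i + zb' i ≤ 1 := by
        intro i
        have h1 := (hb' (Sum.inr i)).1
        have h2 := (hb' (Sum.inr i)).2
        simp only [hcap, Sum.elim_inr] at h2
        constructor
        · rw [hzb']; exact div_nonneg h1 (by linarith)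
        · have : zb' i ≤ e i := by
            rw [hzb', div_le_iff₀ (by linarith : (0:ℝ) < 1 - π)]
            linarith [h2]
          simp only [he] at this; linarith
      have hsum'' : π * (∑ i, z' i) + (1 - π) * (∑ i, zb' i)
          = π * (∑ i, z i) + (1 - π) * (∑ i, zb i) := by
        have hL : ∑ l, y' l = π * (∑ i, z' i) + (1 - π) * (∑ i, zb' i) := by
          rw [Fintype.sum_sum_type]
          rw [Finset.mul_sum, Finset.mul_sum]
          congr 1
          · exact Finset.sum_congr rfl (fun i _ => (hz'val i).symm)
          · exact Finset.sum_congr rfl (fun i _ => (hzb'val i).symm)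
        have hR : ∑ l, y l = π * (∑ i, z i) + (1 - π) * (∑ i, zb i) := by
          rw [hy, Fintype.sum_sum_type]
          simp only [Sum.elim_inl, Sum.elim_inr]
          rw [Finset.mul_sum, Finset.mul_sum]
        rw [← hL, ← hR, hs']
      have hcost'' : π * (∑ i, cl i * z' i) + (1 - π) * (∑ i, cu i * zb' i)
          ≤ π * (∑ i, cl i * z i) + (1 - π) * (∑ i, cu i * zb i) := by
        have hL : ∑ l, c l * y' l
            = π * (∑ i, cl i * z' i) + (1 - π) * (∑ i, cu i * zb' i) := by
          rw [Fintype.sum_sum_type]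
          rw [Finset.mul_sum, Finset.mul_sum]
          congr 1
          · refine Finset.sum_congr rfl (fun i _ => ?_)
            rw [hc, Sum.elim_inl, ← hz'val i]; ring
          · refine Finset.sum_congr rfl (fun i _ => ?_)
            rw [hc, Sum.elim_inr, ← hzb'val i]; ring
        have hR : ∑ l, c l * y l
            = π * (∑ i, cl i * z i) + (1 - π) * (∑ i, cu i * zb i) := by
          rw [hy, hc, Fintype.sum_sum_type]
          simp only [Sum.elim_inl, Sum.elim_inr]
          rw [Finset.mul_sum, Finset.mul_sum]
          congr 1
          · exact Finset.sum_congr rfl (fun i _ => by ring)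
          · exact Finset.sum_congr rfl (fun i _ => by ring)
        rw [← hL, ← hR]
        exact hc'
      have hfeas' : Feas10 n p x z' zb' π := by
        apply feas_mk hx hz'b hzb'b ⟨hπ0.le, hπ1.le⟩
        rw [feas_split] at hcon
        linarith [hsum'', hcon]
      have hobj' : Obj10 n C cl cu Γ x z' zb' π ≤ Obj10 n C cl cu Γ x z zb π := by
        rw [Obj10, Obj10]
        linarith [hcost'']
      -- integrality transfer
      have hIntOf : ∀ i, (y' (Sum.inl i) = 0 ∨ y' (Sum.inl i) = cap (Sum.inl i)) →
          (z' i = 0 ∨ z' i = 1) := by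
        intro i hi
        rcases hi with h | h
        · left; show y' (Sum.inl i) / π = 0; rw [h]; simp
        · rcases heint i with h0 | h0
          · left
            show y' (Sum.inl i) / π = 0
            rw [h]
            simp only [hcap, Sum.elim_inl, h0]
            simp
          · right
            show y' (Sum.inl i) / π = 1
            rw [h]
            simp only [hcap, Sum.elim_inl, h0]
            field_simp
      have hIntOfb : ∀ i, (y' (Sum.inr i) = 0 ∨ y' (Sum.inr i) = cap (Sum.inr i)) →
          (zb' i = 0 ∨ zb' i = 1) := by
        intro i hi
        rcases hi with h | h
        · left; show y' (Sum.inr i) / (1 - π) = 0; rw [h]; simp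
        · rcases heint i with h0 | h0
          · left
            show y' (Sum.inr i) / (1 - π) = 0
            rw [h]
            simp only [hcap, Sum.elim_inr, h0]
            simp
          · right
            show y' (Sum.inr i) / (1 - π) = 1
            rw [h]
            simp only [hcap, Sum.elim_inr, h0]
            field_simp
      by_cases hallz : ∀ i, z' i = 0 ∨ z' i = 1
      · by_cases hallzb : ∀ i, zb' i = 0 ∨ zb' i = 1
        · -- fully integral : phaseC
          have := phaseC hp1 hpn C cl cu Γ hcu (2*n) x z' zb' π hfeas' hallz hallzb hπ0 hπ1 (by
            have h1 : ∑ i, zb' i ≤ (n:ℝ) := by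
              calc ∑ i, zb' i ≤ ∑ _i : Fin n, (1:ℝ) :=
                    Finset.sum_le_sum (fun i _ => int_le_one hallzb i)
                _ = n := by simp
            have h2 : (0:ℝ) ≤ ∑ i, z' i := Finset.sum_nonneg (fun i _ => int_nonneg hallz i)
            push_cast
            linarith)
          exact this.mono hobj'
        · -- some zb' j fractional
          push_neg at hallzb
          obtain ⟨j, hj⟩ := hallzb
          have hjne : ¬(y' (Sum.inr j) = 0 ∨ y' (Sum.inr j) = cap (Sum.inr j)) := by
            intro hcon2
            rcases hIntOfb j hcon2 with h | h
            · exact hj.1 h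
            · exact hj.2 h
          have hrest : ∀ i, i ≠ j → zb' i = 0 ∨ zb' i = 1 := by
            intro i hi
            rcases hfr' (Sum.inr i) (Sum.inr j) (by simp [hi]) with h | h
            · exact hIntOfb i h
            · exact absurd h hjne
          have hθ : 0 < zb' j ∧ zb' j < 1 := by
            have h1 := (hzb'b j).1
            have h2 : zb' j ≤ e j := by
              have := (hb' (Sum.inr j)).2
              simp only [hcap, Sum.elim_inr] at this
              show y' (Sum.inr j) / (1 - π) ≤ e j
              rw [div_le_iff₀ (by linarith : (0:ℝ) < 1 - π)]
              linarith
            rcases heint j with h0 | h0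
            · exfalso
              apply hj.1
              rw [h0] at h2
              linarith
            · rw [h0] at h2
              constructor
              · rcases lt_or_eq_of_le h1 with h | h
                · exact h
                · exact absurd h.symm hj.1
              · rcases lt_or_eq_of_le h2 with h | h
                · exact h
                · exact absurd h hj.2
          have := step2p hp1 hpn C cl cu Γ hcu x z' zb' π j hfeas' hallz hrest hθ.1 hθ.2 hπ0 hπ1
          exact this.mono hobj'
      · -- some z' j fractional
        push_neg at hallz
        obtain ⟨j, hj⟩ := hallz
        have hjne : ¬(y' (Sum.inl j) = 0 ∨ y' (Sum.inl j) = cap (Sum.inl j)) := by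
          intro hcon2
          rcases hIntOf j hcon2 with h | h
          · exact hj.1 h
          · exact hj.2 h
        have hrest : ∀ i, i ≠ j → z' i = 0 ∨ z' i = 1 := by
          intro i hi
          rcases hfr' (Sum.inl i) (Sum.inl j) (by simp [hi]) with h | h
          · exact hIntOf i h
          · exact absurd h hjne
        have hrestb : ∀ i, zb' i = 0 ∨ zb' i = 1 := by
          intro i
          rcases hfr' (Sum.inr i) (Sum.inl j) (by simp) with h | h
          · exact hIntOfb i h
          · exact absurd h hjne
        have hθ : 0 < z' j ∧ z' j < 1 := by
          have h1 := (hz'b j).1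
          have h2 : z' j ≤ e j := by
            have := (hb' (Sum.inl j)).2
            simp only [hcap, Sum.elim_inl] at this
            show y' (Sum.inl j) / π ≤ e j
            rw [div_le_iff₀ hπ0]
            linarith
          rcases heint j with h0 | h0
          · exfalso
            apply hj.1
            rw [h0] at h2
            linarith
          · rw [h0] at h2
            constructor
            · rcases lt_or_eq_of_le h1 with h | h
              · exact h
              · exact absurd h.symm hj.1
            · rcases lt_or_eq_of_le h2 with h | h
              · exact h
              · exact absurd h hj.2
        have := step2 hp1 hpn C cl cu Γ hcu x z' zb' π j hfeas' hrest hrestb hθ.1 hθ.2 hπ0 hπ1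
        exact this.mono hobj'

set_option maxHeartbeats 1000000 in
/-- Lemma 5: there is an optimal solution of (18) with integral `z`, `z̄` and
`π = q/r` for some `q ∈ {0,…,p}`, `r ∈ {1,…,n}`. -/
theorem stmt10 (n p : ℕ) (hp1 : 1 ≤ p) (hpn : p ≤ n)
    (C cl cu : Fin n → ℝ) (hC : ∀ i, 0 ≤ C i) (hcl : ∀ i, 0 ≤ cl i)
    (hcu : ∀ i, cl i ≤ cu i) (Γ : ℝ) (hΓ : 0 ≤ Γ) :
    ∃ x z zb : Fin n → ℝ, ∃ π : ℝ, Feas10 n p x z zb π ∧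
      (∀ x' z' zb' : Fin n → ℝ, ∀ π' : ℝ, Feas10 n p x' z' zb' π' →
        Obj10 n C cl cu Γ x z zb π ≤ Obj10 n C cl cu Γ x' z' zb' π') ∧
      (∀ i, z i = 0 ∨ z i = 1) ∧ (∀ i, zb i = 0 ∨ zb i = 1) ∧
      (∃ q r : ℕ, q ≤ p ∧ 1 ≤ r ∧ r ≤ n ∧ π = (q : ℝ) / (r : ℝ)) := by
  classical
  set Qs : Finset ℝ :=
    ((Finset.range (p+1)) ×ˢ (Finset.Icc 1 n)).image (fun qr => (qr.1:ℝ)/(qr.2:ℝ)) with hQs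
  set B : Finset (Fin n → ℝ) := Fintype.piFinset (fun _ => ({0,1} : Finset ℝ)) with hBdef
  have hmemB : ∀ f : Fin n → ℝ, f ∈ B ↔ ∀ i, f i = 0 ∨ f i = 1 := by
    intro f
    rw [hBdef, Fintype.mem_piFinset]
    constructor
    · intro h i; have := h i; simpa using this
    · intro h i; have := h i; simpa using this
  have hmemQ : ∀ w : ℝ, w ∈ Qs ↔ ∃ q r : ℕ, q ≤ p ∧ 1 ≤ r ∧ r ≤ n ∧ w = (q:ℝ)/(r:ℝ) := by
    intro w
    rw [hQs, Finset.mem_image]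
    constructor
    · rintro ⟨⟨q, r⟩, hmem, heq⟩
      rw [Finset.mem_product, Finset.mem_range, Finset.mem_Icc] at hmem
      exact ⟨q, r, by omega, hmem.2.1, hmem.2.2, heq.symm⟩
    · rintro ⟨q, r, h1, h2, h3, heq⟩
      exact ⟨⟨q, r⟩, by
        rw [Finset.mem_product, Finset.mem_range, Finset.mem_Icc]
        exact ⟨by omega, h2, h3⟩, heq.symm⟩
  set S : Finset ((Fin n → ℝ) × (Fin n → ℝ) × (Fin n → ℝ) × ℝ) :=
    B ×ˢ B ×ˢ B ×ˢ Qs with hS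
  set F : Finset ((Fin n → ℝ) × (Fin n → ℝ) × (Fin n → ℝ) × ℝ) :=
    S.filter (fun t => Feas10 n p t.1 t.2.1 t.2.2.1 t.2.2.2) with hF
  -- a feasible candidate
  have hFne : F.Nonempty := by
    set x0 : Fin n → ℝ := fun i => if ((i:ℕ) < p) then 1 else 0 with hx0
    have hx0int : ∀ i, x0 i = 0 ∨ x0 i = 1 := by
      intro i; rw [hx0]; by_cases h : ((i:ℕ) < p) <;> simp [h]
    have hx0sum : ∑ i, x0 i = (p:ℝ) := by
      rw [hx0]
      rw [Fin.sum_univ_eq_sum_range (fun j => if j < p then (1:ℝ) else 0) n]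
      rw [Finset.sum_ite, Finset.sum_const, Finset.sum_const]
      have : (Finset.range n).filter (fun j => j < p) = Finset.range p := by
        ext j; simp; omega
      rw [this, Finset.card_range]
      simp
    refine ⟨⟨x0, (fun _ => 0), (fun _ => 0), 0⟩, ?_⟩
    rw [hF, Finset.mem_filter]
    constructor
    · rw [hS]
      rw [Finset.mem_product]
      refine ⟨(hmemB x0).2 hx0int, ?_⟩
      rw [Finset.mem_product]
      refine ⟨(hmemB _).2 (fun i => Or.inl rfl), ?_⟩
      rw [Finset.mem_product]
      refine ⟨(hmemB _).2 (fun i => Or.inl rfl), ?_⟩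
      exact (hmemQ 0).2 ⟨0, 1, by omega, le_refl 1, by omega, by norm_num⟩
    · refine feas_mk hx0int (fun i => by norm_num [int_nonneg hx0int i, int_le_one hx0int i])
        (fun i => by norm_num [int_nonneg hx0int i, int_le_one hx0int i])
        (by norm_num) ?_
      simp only
      rw [hx0sum]
      norm_num
  obtain ⟨t, htF, htmin⟩ := F.exists_min_image
    (fun t => Obj10 n C cl cu Γ t.1 t.2.1 t.2.2.1 t.2.2.2) hFne
  rw [hF, Finset.mem_filter] at htF
  obtain ⟨htS, htfeas⟩ := htF
  rw [hS, Finset.mem_product] at htS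
  obtain ⟨htx, htS2⟩ := htS
  rw [Finset.mem_product] at htS2
  obtain ⟨htz, htS3⟩ := htS2
  rw [Finset.mem_product] at htS3
  obtain ⟨htzb, htq⟩ := htS3
  refine ⟨t.1, t.2.1, t.2.2.1, t.2.2.2, htfeas, ?_, (hmemB _).1 htz, (hmemB _).1 htzb,
    (hmemQ _).1 htq⟩
  intro x' z' zb' π' hfeas'
  obtain ⟨z2, zb2, q, r, hq, hr1, hr2, hfeas2, hz2, hzb2, hobj2⟩ :=
    dominate hp1 hpn C cl cu Γ hcu x' z' zb' π' hfeas'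
  have hcand : (⟨x', z2, zb2, (q:ℝ)/(r:ℝ)⟩ :
      (Fin n → ℝ) × (Fin n → ℝ) × (Fin n → ℝ) × ℝ) ∈ F := by
    rw [hF, Finset.mem_filter]
    constructor
    · rw [hS, Finset.mem_product]
      refine ⟨(hmemB _).2 hfeas'.1, ?_⟩
      rw [Finset.mem_product]
      refine ⟨(hmemB _).2 hz2, ?_⟩
      rw [Finset.mem_product]
      exact ⟨(hmemB _).2 hzb2, (hmemQ _).2 ⟨q, r, hq, hr1, hr2, rfl⟩⟩
    · exact hfeas2
  calc Obj10 n C cl cu Γ t.1 t.2.1 t.2.2.1 t.2.2.2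
      ≤ Obj10 n C cl cu Γ x' z2 zb2 ((q:ℝ)/(r:ℝ)) := htmin _ hcand
    _ ≤ Obj10 n C cl cu Γ x' z' zb' π' := hobj2
end
end

section
/- Let n ≥ 1 and let M be the (2n+3) × 3n real matrix whose columns are indexed by three consecutive blocks of size n (the x-block, z-block, z̄-block) and whose rows are: row a₁ with entry 1 in every x-column and 0 elsewhere; row a₂ with entry 1 in every z-column and 0 elsewhere; row a₃ with entry 1 in every z̄-column and 0 elsewhere; for each i ∈ [n], row b_i with entry 1 in the i-th x-column and 1 in the i-th z-column and 0 elsewhere; and row c_i with entry 1 in the i-th x-column and 1 in the i-th z̄-column and 0 elsewhere. Then M is totally unimodular. -/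
noncomputable section

/-- The coefficient matrix of problem (19) (Table 3).  Columns are three blocks
of size `n`: the `x`-block (`0 ≤ c < n`), the `z`-block (`n ≤ c < 2n`) and the
`z̄`-block (`2n ≤ c < 3n`).  Rows are `a₁, a₂, a₃` followed by the blocks
`b_i` and `c_i` for `i ∈ [n]`. -/
def M11 (n : ℕ) : Matrix (Fin (2 * n + 3)) (Fin (3 * n)) ℝ := fun r c =>
  if r.val = 0 then (if c.val < n then 1 else 0)
  else if r.val = 1 then (if n ≤ c.val ∧ c.val < 2 * n then 1 else 0)
  else if r.val = 2 then (if 2 * n ≤ c.val then 1 else 0)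
  else if r.val < 3 + n then
    -- row `b_i` with `i = r.val - 3`
    (if c.val = r.val - 3 then 1
     else if c.val = n + (r.val - 3) then 1 else 0)
  else
    -- row `c_i` with `i = r.val - 3 - n`
    (if c.val = r.val - 3 - n then 1
     else if c.val = 2 * n + (r.val - 3 - n) then 1 else 0)

namespace TU11aux

/-- abstract row type: 3 special rows, then `b`-rows, then `c`-rows -/
abbrev Rw (n : ℕ) := Fin 3 ⊕ (Fin n ⊕ Fin n)
/-- abstract column type: `x`, `z`, `z̄` blocks -/
abbrev Cl (n : ℕ) := Fin n ⊕ (Fin n ⊕ Fin n)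

def N (n : ℕ) : Matrix (Rw n) (Cl n) ℝ := fun r c =>
  match r, c with
  | .inl a, .inl _ => if a = 0 then 1 else 0
  | .inl a, .inr (.inl _) => if a = 1 then 1 else 0
  | .inl a, .inr (.inr _) => if a = 2 then 1 else 0
  | .inr (.inl i), .inl j => if i = j then 1 else 0
  | .inr (.inl i), .inr (.inl j) => if i = j then 1 else 0
  | .inr (.inl _), .inr (.inr _) => 0
  | .inr (.inr i), .inl j => if i = j then 1 else 0
  | .inr (.inr _), .inr (.inl _) => 0
  | .inr (.inr i), .inr (.inr j) => if i = j then 1 else 0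

abbrev SR : Set ℝ := Set.range (SignType.cast : SignType → ℝ)

lemma zero_mem_SR : (0:ℝ) ∈ SR := ⟨0, rfl⟩
lemma one_mem_SR : (1:ℝ) ∈ SR := ⟨1, rfl⟩
lemma neg_one_mem_SR : (-1:ℝ) ∈ SR := ⟨-1, by simp⟩

lemma mul_mem_SR {a b : ℝ} (ha : a ∈ SR) (hb : b ∈ SR) : a * b ∈ SR := by
  obtain ⟨s, rfl⟩ := ha; obtain ⟨t, rfl⟩ := hb
  exact ⟨s * t, by push_cast; ring⟩

lemma neg_one_pow_mem_SR (m : ℕ) : ((-1:ℝ) ^ m) ∈ SR := by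
  rcases Nat.even_or_odd m with h | h
  · exact ⟨1, by simp [h.neg_one_pow]⟩
  · exact ⟨-1, by simp [h.neg_one_pow]⟩

lemma N_mem (n : ℕ) (r : Rw n) (c : Cl n) : N n r c ∈ SR := by
  rcases r with a | i | i <;> rcases c with j | j | j <;> simp only [N] <;>
    first
      | exact zero_mem_SR
      | (split_ifs <;> first | exact one_mem_SR | exact zero_mem_SR)

/-- expansion along a column with at most one nonzero entry -/
lemma expand_col {k : ℕ} (S : Matrix (Fin (k+1)) (Fin (k+1)) ℝ) (p i₀ : Fin (k+1))
    (h : ∀ i, i ≠ i₀ → S i p = 0) :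
    S.det = (-1) ^ (i₀ + p : ℕ) * S i₀ p * (S.submatrix i₀.succAbove p.succAbove).det := by
  rw [Matrix.det_succ_column S p, Finset.sum_eq_single i₀]
  · intro i _ hi; rw [h i hi]; ring
  · intro hi; exact absurd (Finset.mem_univ i₀) hi

/-- expansion along a row with at most one nonzero entry -/
lemma expand_row {k : ℕ} (S : Matrix (Fin (k+1)) (Fin (k+1)) ℝ) (i₀ p₀ : Fin (k+1))
    (h : ∀ p, p ≠ p₀ → S i₀ p = 0) :
    S.det = (-1) ^ (i₀ + p₀ : ℕ) * S i₀ p₀ * (S.submatrix i₀.succAbove p₀.succAbove).det := by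
  rw [Matrix.det_succ_row S i₀, Finset.sum_eq_single p₀]
  · intro p _ hp; rw [h p hp]; ring
  · intro hp; exact absurd (Finset.mem_univ p₀) hp

lemma sum_if_mem {k : ℕ} {β : Type*} [DecidableEq β] (g : Fin k → β)
    (hg : Function.Injective g) (c₀ : β) (F : β → ℝ) :
    (∑ p, if g p = c₀ then F (g p) else 0) = if ∃ p, g p = c₀ then F c₀ else 0 := by
  by_cases h : ∃ p, g p = c₀
  · obtain ⟨p₀, hp₀⟩ := h
    rw [if_pos ⟨p₀, hp₀⟩, Finset.sum_eq_single p₀]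
    · rw [if_pos hp₀, hp₀]
    · intro p _ hp
      rw [if_neg]
      intro hc; exact hp (hg (hc.trans hp₀.symm))
    · intro hp; exact absurd (Finset.mem_univ p₀) hp
  · rw [if_neg h]
    apply Finset.sum_eq_zero
    intro p _
    rw [if_neg fun hc => h ⟨p, hc⟩]

lemma sum_if_one {k : ℕ} {β : Type*} [DecidableEq β] (g : Fin k → β)
    (hg : Function.Injective g) (c₀ : β) :
    (∑ p, if g p = c₀ then (1:ℝ) else 0) = if ∃ p, g p = c₀ then (1:ℝ) else 0 :=
  sum_if_mem g hg c₀ (fun _ => 1)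

/-- characterizing nonzero entries, columnwise -/
lemma N_ne_x {n : ℕ} {r : Rw n} {j : Fin n} (h : N n r (.inl j) ≠ 0) :
    r = .inl 0 ∨ r = .inr (.inl j) ∨ r = .inr (.inr j) := by
  rcases r with a | i | i <;> simp only [N] at h <;> split_ifs at h with hc
  · exact Or.inl (by rw [hc])
  · exact absurd rfl h
  · exact Or.inr (Or.inl (by rw [hc]))
  · exact absurd rfl h
  · exact Or.inr (Or.inr (by rw [hc]))
  · exact absurd rfl h

lemma N_ne_z {n : ℕ} {r : Rw n} {j : Fin n} (h : N n r (.inr (.inl j)) ≠ 0) :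
    r = .inl 1 ∨ r = .inr (.inl j) := by
  rcases r with a | i | i <;> simp only [N] at h
  · split_ifs at h with hc
    · exact Or.inl (by rw [hc])
    · exact absurd rfl h
  · split_ifs at h with hc
    · exact Or.inr (by rw [hc])
    · exact absurd rfl h
  · exact absurd rfl h

lemma N_ne_zb {n : ℕ} {r : Rw n} {j : Fin n} (h : N n r (.inr (.inr j)) ≠ 0) :
    r = .inl 2 ∨ r = .inr (.inr j) := by
  rcases r with a | i | i <;> simp only [N] at h
  · split_ifs at h with hc
    · exact Or.inl (by rw [hc])
    · exact absurd rfl h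
  · exact absurd rfl h
  · split_ifs at h with hc
    · exact Or.inr (by rw [hc])
    · exact absurd rfl h

/-- characterizing nonzero entries, rowwise -/
lemma N_ne_ra1 {n : ℕ} {c : Cl n} (h : N n (.inl 1) c ≠ 0) : ∃ j, c = .inr (.inl j) := by
  rcases c with j | j | j <;> simp only [N] at h
  · exact absurd (if_neg (by decide)) h
  · exact ⟨j, rfl⟩
  · exact absurd (if_neg (by decide)) h

lemma N_ne_ra2 {n : ℕ} {c : Cl n} (h : N n (.inl 2) c ≠ 0) : ∃ j, c = .inr (.inr j) := by
  rcases c with j | j | j <;> simp only [N] at h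
  · exact absurd (if_neg (by decide)) h
  · exact absurd (if_neg (by decide)) h
  · exact ⟨j, rfl⟩

lemma N_ne_rb {n : ℕ} {i : Fin n} {c : Cl n} (h : N n (.inr (.inl i)) c ≠ 0) :
    c = .inl i ∨ c = .inr (.inl i) := by
  rcases c with j | j | j <;> simp only [N] at h
  · split_ifs at h with hc
    · exact Or.inl (by rw [hc])
    · exact absurd rfl h
  · split_ifs at h with hc
    · exact Or.inr (by rw [hc])
    · exact absurd rfl h
  · exact absurd rfl h

lemma N_ne_rc {n : ℕ} {i : Fin n} {c : Cl n} (h : N n (.inr (.inr i)) c ≠ 0) :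
    c = .inl i ∨ c = .inr (.inr i) := by
  rcases c with j | j | j <;> simp only [N] at h
  · split_ifs at h with hc
    · exact Or.inl (by rw [hc])
    · exact absurd rfl h
  · exact absurd rfl h
  · split_ifs at h with hc
    · exact Or.inr (by rw [hc])
    · exact absurd rfl h

/-- pointwise expansions of signed entries -/
lemma vNx (n : ℕ) (r : Rw n) (j : Fin n) :
    (if r.isLeft then (1:ℝ) else -1) * N n r (.inl j) =
      (if r = .inl 0 then (1:ℝ) else 0) - (if r = .inr (.inl j) then 1 else 0)
        - (if r = .inr (.inr j) then 1 else 0) := by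
  rcases r with a | i | i <;> simp [N] <;> split_ifs <;> norm_num

lemma vNz (n : ℕ) (r : Rw n) (j : Fin n) :
    (if r.isLeft then (1:ℝ) else -1) * N n r (.inr (.inl j)) =
      (if r = .inl 1 then (1:ℝ) else 0) - (if r = .inr (.inl j) then 1 else 0) := by
  rcases r with a | i | i <;> simp [N] <;> split_ifs <;> norm_num

lemma vNzb (n : ℕ) (r : Rw n) (j : Fin n) :
    (if r.isLeft then (1:ℝ) else -1) * N n r (.inr (.inr j)) =
      (if r = .inl 2 then (1:ℝ) else 0) - (if r = .inr (.inr j) then 1 else 0) := by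
  rcases r with a | i | i <;> simp [N] <;> split_ifs <;> norm_num

lemma Ncancel (n : ℕ) (r : Rw n) (j₁ j₂ : Fin n) :
    N n r (.inl j₁) - N n r (.inr (.inl j₁)) - N n r (.inr (.inr j₁))
      - N n r (.inl j₂) + N n r (.inr (.inl j₂)) + N n r (.inr (.inr j₂)) = 0 := by
  rcases r with a | i | i <;> simp [N] <;> split_ifs <;> norm_num

end TU11aux

namespace TU11aux

set_option maxHeartbeats 4000000 in
lemma N_TU (n : ℕ) : (N n).IsTotallyUnimodular := by
  intro k
  induction k using Nat.strong_induction_on with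
  | _ k IH =>
  match k with
  | 0 =>
    intro f g _ _
    exact ⟨1, by simp [Matrix.det_fin_zero]⟩
  | Nat.succ k =>
    intro f g hf hg
    set S : Matrix (Fin (k+1)) (Fin (k+1)) ℝ := (N n).submatrix f g with hS
    have hent : ∀ i p, S i p ∈ SR := fun i p => N_mem n (f i) (g p)
    -- Case 1: some column has at most one nonzero entry
    by_cases hcol : ∃ p i₀, ∀ i, i ≠ i₀ → S i p = 0
    · obtain ⟨p, i₀, h⟩ := hcol
      rw [expand_col S p i₀ h]
      refine mul_mem_SR (mul_mem_SR (neg_one_pow_mem_SR _) (hent _ _)) ?_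
      have := IH k (Nat.lt_succ_self k) (f ∘ i₀.succAbove) (g ∘ p.succAbove)
        (hf.comp (Fin.succAbove_right_injective))
        (hg.comp (Fin.succAbove_right_injective))
      simpa [hS, Matrix.submatrix_submatrix] using this
    -- Case 2: some row has at most one nonzero entry
    by_cases hrow : ∃ i₀ p₀, ∀ p, p ≠ p₀ → S i₀ p = 0
    · obtain ⟨i₀, p₀, h⟩ := hrow
      rw [expand_row S i₀ p₀ h]
      refine mul_mem_SR (mul_mem_SR (neg_one_pow_mem_SR _) (hent _ _)) ?_
      have := IH k (Nat.lt_succ_self k) (f ∘ i₀.succAbove) (g ∘ p₀.succAbove)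
        (hf.comp (Fin.succAbove_right_injective))
        (hg.comp (Fin.succAbove_right_injective))
      simpa [hS, Matrix.submatrix_submatrix] using this
    -- Dense case
    push_neg at hcol hrow
    have col2 : ∀ p, ∃ i₁ i₂, i₁ ≠ i₂ ∧ S i₁ p ≠ 0 ∧ S i₂ p ≠ 0 := by
      intro p
      obtain ⟨i₁, -, h₁⟩ := hcol p 0
      obtain ⟨i₂, hne, h₂⟩ := hcol p i₁
      exact ⟨i₂, i₁, hne, h₂, h₁⟩
    have row2 : ∀ i, ∃ p₁ p₂, p₁ ≠ p₂ ∧ S i p₁ ≠ 0 ∧ S i p₂ ≠ 0 := by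
      intro i
      obtain ⟨p₁, -, h₁⟩ := hrow i 0
      obtain ⟨p₂, hne, h₂⟩ := hrow i p₁
      exact ⟨p₂, p₁, hne, h₂, h₁⟩
    have hSapp : ∀ i p, S i p = N n (f i) (g p) := fun i p => rfl
    -- column density facts
    have dz : ∀ j : Fin n, (∃ p, g p = .inr (.inl j)) →
        (∃ i, f i = .inl 1) ∧ (∃ i, f i = .inr (.inl j)) := by
      rintro j ⟨p, hp⟩
      obtain ⟨i₁, i₂, hne, h₁, h₂⟩ := col2 p
      rw [hSapp, hp] at h₁ h₂
      have hfne : f i₁ ≠ f i₂ := fun hh => hne (hf hh)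
      rcases N_ne_z h₁ with e₁ | e₁ <;> rcases N_ne_z h₂ with e₂ | e₂
      · exact absurd (e₁.trans e₂.symm) hfne
      · exact ⟨⟨i₁, e₁⟩, ⟨i₂, e₂⟩⟩
      · exact ⟨⟨i₂, e₂⟩, ⟨i₁, e₁⟩⟩
      · exact absurd (e₁.trans e₂.symm) hfne
    have dzb : ∀ j : Fin n, (∃ p, g p = .inr (.inr j)) →
        (∃ i, f i = .inl 2) ∧ (∃ i, f i = .inr (.inr j)) := by
      rintro j ⟨p, hp⟩
      obtain ⟨i₁, i₂, hne, h₁, h₂⟩ := col2 p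
      rw [hSapp, hp] at h₁ h₂
      have hfne : f i₁ ≠ f i₂ := fun hh => hne (hf hh)
      rcases N_ne_zb h₁ with e₁ | e₁ <;> rcases N_ne_zb h₂ with e₂ | e₂
      · exact absurd (e₁.trans e₂.symm) hfne
      · exact ⟨⟨i₁, e₁⟩, ⟨i₂, e₂⟩⟩
      · exact ⟨⟨i₂, e₂⟩, ⟨i₁, e₁⟩⟩
      · exact absurd (e₁.trans e₂.symm) hfne
    have dx : ∀ j : Fin n, (∃ p, g p = .inl j) →
        ((∃ i, f i = .inl 0) ∧ (∃ i, f i = .inr (.inl j)))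
        ∨ ((∃ i, f i = .inl 0) ∧ (∃ i, f i = .inr (.inr j)))
        ∨ ((∃ i, f i = .inr (.inl j)) ∧ (∃ i, f i = .inr (.inr j))) := by
      rintro j ⟨p, hp⟩
      obtain ⟨i₁, i₂, hne, h₁, h₂⟩ := col2 p
      rw [hSapp, hp] at h₁ h₂
      have hfne : f i₁ ≠ f i₂ := fun hh => hne (hf hh)
      rcases N_ne_x h₁ with e₁ | e₁ | e₁ <;> rcases N_ne_x h₂ with e₂ | e₂ | e₂ <;>
        first
          | exact absurd (e₁.trans e₂.symm) hfne
          | exact Or.inl ⟨⟨_, e₁⟩, ⟨_, e₂⟩⟩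
          | exact Or.inl ⟨⟨_, e₂⟩, ⟨_, e₁⟩⟩
          | exact Or.inr (Or.inl ⟨⟨_, e₁⟩, ⟨_, e₂⟩⟩)
          | exact Or.inr (Or.inl ⟨⟨_, e₂⟩, ⟨_, e₁⟩⟩)
          | exact Or.inr (Or.inr ⟨⟨_, e₁⟩, ⟨_, e₂⟩⟩)
          | exact Or.inr (Or.inr ⟨⟨_, e₂⟩, ⟨_, e₁⟩⟩)
    -- row density facts
    have db : ∀ j : Fin n, (∃ i, f i = .inr (.inl j)) →
        (∃ p, g p = .inl j) ∧ (∃ p, g p = .inr (.inl j)) := by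
      rintro j ⟨i, hi⟩
      obtain ⟨p₁, p₂, hne, h₁, h₂⟩ := row2 i
      rw [hSapp, hi] at h₁ h₂
      have hgne : g p₁ ≠ g p₂ := fun hh => hne (hg hh)
      rcases N_ne_rb h₁ with e₁ | e₁ <;> rcases N_ne_rb h₂ with e₂ | e₂
      · exact absurd (e₁.trans e₂.symm) hgne
      · exact ⟨⟨p₁, e₁⟩, ⟨p₂, e₂⟩⟩
      · exact ⟨⟨p₂, e₂⟩, ⟨p₁, e₁⟩⟩
      · exact absurd (e₁.trans e₂.symm) hgne
    have dc : ∀ j : Fin n, (∃ i, f i = .inr (.inr j)) →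
        (∃ p, g p = .inl j) ∧ (∃ p, g p = .inr (.inr j)) := by
      rintro j ⟨i, hi⟩
      obtain ⟨p₁, p₂, hne, h₁, h₂⟩ := row2 i
      rw [hSapp, hi] at h₁ h₂
      have hgne : g p₁ ≠ g p₂ := fun hh => hne (hg hh)
      rcases N_ne_rc h₁ with e₁ | e₁ <;> rcases N_ne_rc h₂ with e₂ | e₂
      · exact absurd (e₁.trans e₂.symm) hgne
      · exact ⟨⟨p₁, e₁⟩, ⟨p₂, e₂⟩⟩
      · exact ⟨⟨p₂, e₂⟩, ⟨p₁, e₁⟩⟩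
      · exact absurd (e₁.trans e₂.symm) hgne
    have da2 : (∃ i, f i = .inl 1) →
        ∃ j₁ j₂ : Fin n, j₁ ≠ j₂ ∧ (∃ p, g p = .inr (.inl j₁)) ∧ (∃ p, g p = .inr (.inl j₂)) := by
      rintro ⟨i, hi⟩
      obtain ⟨p₁, p₂, hne, h₁, h₂⟩ := row2 i
      rw [hSapp, hi] at h₁ h₂
      obtain ⟨j₁, e₁⟩ := N_ne_ra1 h₁
      obtain ⟨j₂, e₂⟩ := N_ne_ra1 h₂
      refine ⟨j₁, j₂, ?_, ⟨p₁, e₁⟩, ⟨p₂, e₂⟩⟩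
      rintro rfl
      exact hne (hg (e₁.trans e₂.symm))
    have da3 : (∃ i, f i = .inl 2) →
        ∃ j₁ j₂ : Fin n, j₁ ≠ j₂ ∧ (∃ p, g p = .inr (.inr j₁)) ∧ (∃ p, g p = .inr (.inr j₂)) := by
      rintro ⟨i, hi⟩
      obtain ⟨p₁, p₂, hne, h₁, h₂⟩ := row2 i
      rw [hSapp, hi] at h₁ h₂
      obtain ⟨j₁, e₁⟩ := N_ne_ra2 h₁
      obtain ⟨j₂, e₂⟩ := N_ne_ra2 h₂
      refine ⟨j₁, j₂, ?_, ⟨p₁, e₁⟩, ⟨p₂, e₂⟩⟩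
      rintro rfl
      exact hne (hg (e₁.trans e₂.symm))
    -- two full (b,c) pairs give a column dependence, hence determinant zero
    have pairD : ∀ j₁ j₂ : Fin n, j₁ ≠ j₂ →
        (∃ i, f i = .inr (.inl j₁)) → (∃ i, f i = .inr (.inr j₁)) →
        (∃ i, f i = .inr (.inl j₂)) → (∃ i, f i = .inr (.inr j₂)) → S.det ∈ SR := by
      intro j₁ j₂ hj hb1 hc1 hb2 hc2
      have cx1 : ∃ p, g p = .inl j₁ := (db j₁ hb1).1
      have cz1 : ∃ p, g p = .inr (.inl j₁) := (db j₁ hb1).2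
      have czb1 : ∃ p, g p = .inr (.inr j₁) := (dc j₁ hc1).2
      have cx2 : ∃ p, g p = .inl j₂ := (db j₂ hb2).1
      have cz2 : ∃ p, g p = .inr (.inl j₂) := (db j₂ hb2).2
      have czb2 : ∃ p, g p = .inr (.inr j₂) := (dc j₂ hc2).2
      refine ⟨0, ?_⟩
      have hdet : S.det = 0 := by
        rw [← Matrix.exists_mulVec_eq_zero_iff]
        refine ⟨fun p => (if g p = .inl j₁ then (1:ℝ) else 0)
            - (if g p = .inr (.inl j₁) then 1 else 0)
            - (if g p = .inr (.inr j₁) then 1 else 0)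
            - (if g p = .inl j₂ then 1 else 0)
            + (if g p = .inr (.inl j₂) then 1 else 0)
            + (if g p = .inr (.inr j₂) then 1 else 0), ?_, ?_⟩
        · obtain ⟨p₀, hp₀⟩ := cx1
          intro h0
          have := congrFun h0 p₀
          simp [hp₀, hj] at this
        · funext i
          simp only [Matrix.mulVec, dotProduct, Pi.zero_apply]
          simp only [mul_sub, mul_add, mul_ite, mul_one, mul_zero, Finset.sum_sub_distrib,
            Finset.sum_add_distrib, hSapp]
          rw [sum_if_mem g hg (.inl j₁) (fun c => N n (f i) c),
            sum_if_mem g hg (.inr (.inl j₁)) (fun c => N n (f i) c),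
            sum_if_mem g hg (.inr (.inr j₁)) (fun c => N n (f i) c),
            sum_if_mem g hg (.inl j₂) (fun c => N n (f i) c),
            sum_if_mem g hg (.inr (.inl j₂)) (fun c => N n (f i) c),
            sum_if_mem g hg (.inr (.inr j₂)) (fun c => N n (f i) c),
            if_pos cx1, if_pos cz1, if_pos czb1, if_pos cx2, if_pos cz2, if_pos czb2]
          exact Ncancel n (f i) j₁ j₂
      rw [hdet]; exact SignType.coe_zero
    -- the signed row sums
    have hsumz : ∀ (p : Fin (k+1)) (j : Fin n), g p = .inr (.inl j) →
        (∑ i, (if (f i).isLeft then (1:ℝ) else -1) * S i p)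
          = (if ∃ i, f i = .inl 1 then (1:ℝ) else 0)
            - (if ∃ i, f i = .inr (.inl j) then 1 else 0) := by
      intro p j hp
      simp only [hSapp, hp, vNz, Finset.sum_sub_distrib]
      rw [sum_if_one f hf, sum_if_one f hf]
    have hsumzb : ∀ (p : Fin (k+1)) (j : Fin n), g p = .inr (.inr j) →
        (∑ i, (if (f i).isLeft then (1:ℝ) else -1) * S i p)
          = (if ∃ i, f i = .inl 2 then (1:ℝ) else 0)
            - (if ∃ i, f i = .inr (.inr j) then 1 else 0) := by
      intro p j hp
      simp only [hSapp, hp, vNzb, Finset.sum_sub_distrib]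
      rw [sum_if_one f hf, sum_if_one f hf]
    have hsumx : ∀ (p : Fin (k+1)) (j : Fin n), g p = .inl j →
        (∑ i, (if (f i).isLeft then (1:ℝ) else -1) * S i p)
          = (if ∃ i, f i = .inl 0 then (1:ℝ) else 0)
            - (if ∃ i, f i = .inr (.inl j) then 1 else 0)
            - (if ∃ i, f i = .inr (.inr j) then 1 else 0) := by
      intro p j hp
      simp only [hSapp, hp, vNx, Finset.sum_sub_distrib]
      rw [sum_if_one f hf, sum_if_one f hf, sum_if_one f hf]
    by_cases ha1 : ∃ i, f i = Sum.inl (0 : Fin 3)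
    · -- the top x-row is present
      by_cases hD : ∃ j : Fin n, (∃ i, f i = .inr (.inl j)) ∧ (∃ i, f i = .inr (.inr j))
      · obtain ⟨j₀, hbj₀, hcj₀⟩ := hD
        by_cases hD2 : ∃ j₁ : Fin n, j₁ ≠ j₀ ∧ (∃ i, f i = .inr (.inl j₁))
            ∧ (∃ i, f i = .inr (.inr j₁))
        · obtain ⟨j₁, hne, hb, hc⟩ := hD2
          exact pairD j₁ j₀ hne hb hc hbj₀ hcj₀
        · -- exactly one doubled index: replace the a₁ row by a unit vector
          push_neg at hD2
          have hD2' : ∀ j : Fin n, j ≠ j₀ → (∃ i, f i = .inr (.inl j)) →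
              ¬(∃ i, f i = .inr (.inr j)) := fun j hj hb hc => hc.elim (hD2 j hj hb)
          obtain ⟨i₁, hi₁⟩ := ha1
          obtain ⟨p₀, hp₀⟩ := (db j₀ hbj₀).1
          have key : ∀ p : Fin (k+1),
              (∑ i, (if (f i).isLeft then (1:ℝ) else -1) * S i p)
                = if p = p₀ then -1 else 0 := by
            intro p
            rcases hgp : g p with j | j | j
            · by_cases hjj : j = j₀
              · subst hjj
                have hpp : p = p₀ := hg (hgp.trans hp₀.symm)
                rw [hsumx p j hgp, if_pos ⟨i₁, hi₁⟩, if_pos hbj₀, if_pos hcj₀, if_pos hpp]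
                norm_num
              · have hpp : p ≠ p₀ := by
                  intro hcon; rw [hcon, hp₀] at hgp; exact hjj (Sum.inl.inj hgp).symm
                rw [hsumx p j hgp, if_pos ⟨i₁, hi₁⟩, if_neg hpp]
                rcases dx j ⟨p, hgp⟩ with ⟨-, hb⟩ | ⟨-, hc⟩ | ⟨hb, hc⟩
                · rw [if_pos hb, if_neg (hD2' j hjj hb)]; norm_num
                · rw [if_pos hc, if_neg (fun hb => (hD2' j hjj hb) hc)]; norm_num
                · exact absurd hc (hD2' j hjj hb)
            · have hpp : p ≠ p₀ := by
                intro hcon; rw [hcon, hp₀] at hgp; exact Sum.inl_ne_inr hgp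
              rw [hsumz p j hgp, if_pos (dz j ⟨p, hgp⟩).1, if_pos (dz j ⟨p, hgp⟩).2,
                if_neg hpp]
              norm_num
            · have hpp : p ≠ p₀ := by
                intro hcon; rw [hcon, hp₀] at hgp; exact Sum.inl_ne_inr hgp
              rw [hsumzb p j hgp, if_pos (dzb j ⟨p, hgp⟩).1, if_pos (dzb j ⟨p, hgp⟩).2,
                if_neg hpp]
              norm_num
          -- row replacement
          have hrowe : (∑ i, (if (f i).isLeft then (1:ℝ) else -1) • S i)
              = (fun p => if p = p₀ then (-1:ℝ) else 0) := by
            funext p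
            simp only [Finset.sum_apply, Pi.smul_apply, smul_eq_mul]
            exact key p
          have hrep : (S.updateRow i₁ (fun p => if p = p₀ then (-1:ℝ) else 0)).det = S.det := by
            rw [← hrowe, Matrix.det_updateRow_sum S i₁
              (fun i => if (f i).isLeft then (1:ℝ) else -1)]
            rw [hi₁]
            norm_num
          rw [← hrep, expand_row _ i₁ p₀ (by
            intro p hp
            rw [Matrix.updateRow_self]
            exact if_neg hp)]
          rw [Matrix.updateRow_self, if_pos rfl]
          refine mul_mem_SR (mul_mem_SR (neg_one_pow_mem_SR _) neg_one_mem_SR) ?_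
          have hmin : (S.updateRow i₁ (fun p => if p = p₀ then (-1:ℝ) else 0)).submatrix
              i₁.succAbove p₀.succAbove = (N n).submatrix (f ∘ i₁.succAbove) (g ∘ p₀.succAbove) := by
            funext a b
            simp only [Matrix.submatrix_apply, Function.comp_apply]
            rw [Matrix.updateRow_ne (Fin.succAbove_ne i₁ a)]
            rfl
          rw [hmin]
          exact IH k (Nat.lt_succ_self k) (f ∘ i₁.succAbove) (g ∘ p₀.succAbove)
            (hf.comp (Fin.succAbove_right_injective))
            (hg.comp (Fin.succAbove_right_injective))
      · -- no doubled index: the rows are linearly dependent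
        push_neg at hD
        have hD' : ∀ j : Fin n, (∃ i, f i = .inr (.inl j)) →
            ¬(∃ i, f i = .inr (.inr j)) := fun j hb hc => hc.elim (hD j hb)
        obtain ⟨i₁, hi₁⟩ := ha1
        refine ⟨0, ?_⟩
        have hdet : S.det = 0 := by
          rw [← Matrix.exists_vecMul_eq_zero_iff]
          refine ⟨fun i => if (f i).isLeft then (1:ℝ) else -1, ?_, ?_⟩
          · intro h0
            have := congrFun h0 i₁
            simp [hi₁] at this
          · funext p
            simp only [Matrix.vecMul, dotProduct, Pi.zero_apply]
            rcases hgp : g p with j | j | j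
            · rw [hsumx p j hgp, if_pos ⟨i₁, hi₁⟩]
              rcases dx j ⟨p, hgp⟩ with ⟨-, hb⟩ | ⟨-, hc⟩ | ⟨hb, hc⟩
              · rw [if_pos hb, if_neg (hD' j hb)]; norm_num
              · rw [if_pos hc, if_neg (fun hb => (hD' j hb) hc)]; norm_num
              · exact absurd hc (hD' j hb)
            · rw [hsumz p j hgp, if_pos (dz j ⟨p, hgp⟩).1, if_pos (dz j ⟨p, hgp⟩).2]
              norm_num
            · rw [hsumzb p j hgp, if_pos (dzb j ⟨p, hgp⟩).1, if_pos (dzb j ⟨p, hgp⟩).2]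
              norm_num
        rw [hdet]; exact SignType.coe_zero
    · -- the a₁ row is absent: chase to two full (b,c) pairs
      have viaB : ∀ j : Fin n, (∃ i, f i = .inr (.inl j)) → S.det ∈ SR := by
        intro j hbj
        have ha2 : ∃ i, f i = .inl 1 := (dz j (db j hbj).2).1
        obtain ⟨j₁, j₂, hj, hz1, hz2⟩ := da2 ha2
        have hb1 : ∃ i, f i = .inr (.inl j₁) := (dz j₁ hz1).2
        have hb2 : ∃ i, f i = .inr (.inl j₂) := (dz j₂ hz2).2
        have hc1 : ∃ i, f i = .inr (.inr j₁) := by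
          rcases dx j₁ (db j₁ hb1).1 with ⟨h, -⟩ | ⟨h, -⟩ | ⟨-, h⟩
          · exact absurd h ha1
          · exact absurd h ha1
          · exact h
        have hc2 : ∃ i, f i = .inr (.inr j₂) := by
          rcases dx j₂ (db j₂ hb2).1 with ⟨h, -⟩ | ⟨h, -⟩ | ⟨-, h⟩
          · exact absurd h ha1
          · exact absurd h ha1
          · exact h
        exact pairD j₁ j₂ hj hb1 hc1 hb2 hc2
      have viaC : ∀ j : Fin n, (∃ i, f i = .inr (.inr j)) → S.det ∈ SR := by
        intro j hcj
        have ha3 : ∃ i, f i = .inl 2 := (dzb j (dc j hcj).2).1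
        obtain ⟨j₁, j₂, hj, hz1, hz2⟩ := da3 ha3
        have hc1 : ∃ i, f i = .inr (.inr j₁) := (dzb j₁ hz1).2
        have hc2 : ∃ i, f i = .inr (.inr j₂) := (dzb j₂ hz2).2
        have hb1 : ∃ i, f i = .inr (.inl j₁) := by
          rcases dx j₁ (dc j₁ hc1).1 with ⟨h, -⟩ | ⟨h, -⟩ | ⟨h, -⟩
          · exact absurd h ha1
          · exact absurd h ha1
          · exact h
        have hb2 : ∃ i, f i = .inr (.inl j₂) := by
          rcases dx j₂ (dc j₂ hc2).1 with ⟨h, -⟩ | ⟨h, -⟩ | ⟨h, -⟩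
          · exact absurd h ha1
          · exact absurd h ha1
          · exact h
        exact pairD j₁ j₂ hj hb1 hc1 hb2 hc2
      rcases h0 : g 0 with j | j | j
      · rcases dx j ⟨0, h0⟩ with ⟨h, -⟩ | ⟨h, -⟩ | ⟨h, -⟩
        · exact absurd h ha1
        · exact absurd h ha1
        · exact viaB j h
      · exact viaB j (dz j ⟨0, h0⟩).2
      · exact viaC j (dzb j ⟨0, h0⟩).2

end TU11aux

namespace TU11aux

def rEnc (n : ℕ) (r : Fin (2 * n + 3)) : Rw n :=
  if h0 : r.val = 0 then .inl 0
  else if h1 : r.val = 1 then .inl 1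
  else if h2 : r.val = 2 then .inl 2
  else if h : r.val < 3 + n then .inr (.inl ⟨r.val - 3, by omega⟩)
  else .inr (.inr ⟨r.val - 3 - n, by have := r.isLt; omega⟩)

def cEnc (n : ℕ) (c : Fin (3 * n)) : Cl n :=
  if h : c.val < n then .inl ⟨c.val, h⟩
  else if h2 : c.val < 2 * n then .inr (.inl ⟨c.val - n, by omega⟩)
  else .inr (.inr ⟨c.val - 2 * n, by have := c.isLt; omega⟩)

lemma M11_eq (n : ℕ) : M11 n = (N n).submatrix (rEnc n) (cEnc n) := by
  funext r c
  have hr := r.isLt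
  have hc := c.isLt
  simp only [Matrix.submatrix_apply, M11, rEnc, cEnc]
  split_ifs <;>
    simp [N, Fin.mk.injEq] <;>
    first
      | rfl
      | omega
      | (exfalso; omega)
      | (split_ifs <;> first | rfl | omega | (exfalso; omega))

end TU11aux

/-- The coefficient matrix of problem (19) is totally unimodular. -/
theorem stmt11 (n : ℕ) (hn : 1 ≤ n) : (M11 n).IsTotallyUnimodular := by
  rw [TU11aux.M11_eq n]
  exact (TU11aux.N_TU n).submatrix _ _
end
end

section
/- Let n, p be integers with 1 ≤ p ≤ n, let c̲, d ∈ ℝ^n_{≥0}, let Γ be a nonnegative integer, and let x ∈ {0,1}^n with Σ_i x_i ≤ p. Consider the optimization problem: maximize (p − Σ_i x_i)·α − Σ_i (1 − x_i)·γ_i over α ≥ 0, γ ∈ ℝ^n with γ_i ≥ 0 for all i, and δ ∈ {0,1}^n, subject to α ≤ γ_i + c̲_i + d_i·δ_i for all i ∈ [n] and Σ_i δ_i ≤ Γ. Then there exists an optimal solution in which α = 0, or α = c̲_j for some j ∈ [n], or α = c̲_j + d_j for some j ∈ [n]. -/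
open Finset
lemma key_lemma (n : ℕ) (A : ℝ) (b C : Fin n → ℝ)
    (hC : ∀ i, 0 ≤ C i) (hAb : A ≤ ∑ i, b i) (α : ℝ) (hα : 0 ≤ α) :
    ∃ β, 0 ≤ β ∧ (β = 0 ∨ ∃ j, β = C j) ∧
      A * α - ∑ i, b i * max (α - C i) 0 ≤ A * β - ∑ i, b i * max (β - C i) 0 := by
  classical
  set g : ℝ → ℝ := fun t => A * t - ∑ i, b i * max (t - C i) 0 with hg
  have heval : ∀ (I : Finset (Fin n)) (t : ℝ), (∀ i ∈ I, C i ≤ t) → (∀ i ∉ I, t ≤ C i) →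
      g t = (A - ∑ i ∈ I, b i) * t + ∑ i ∈ I, b i * C i := by
    intro I t h1 h2
    have hs : ∑ i, b i * max (t - C i) 0 = ∑ i ∈ I, b i * (t - C i) := by
      rw [← Finset.sum_filter_add_sum_filter_not Finset.univ (· ∈ I)]
      have e1 : Finset.univ.filter (· ∈ I) = I := by ext i; simp
      have e2 : ∑ i ∈ Finset.univ.filter (¬ · ∈ I), b i * max (t - C i) 0 = 0 := by
        apply Finset.sum_eq_zero
        intro i hi
        simp only [Finset.mem_filter] at hi
        have : max (t - C i) 0 = 0 := max_eq_right (by linarith [h2 i hi.2])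
        rw [this, mul_zero]
      rw [e1, e2, add_zero]
      apply Finset.sum_congr rfl
      intro i hi
      have : max (t - C i) 0 = t - C i := max_eq_left (by linarith [h1 i hi])
      rw [this]
    simp only [g, hs]
    rw [show ∑ i ∈ I, b i * (t - C i) = (∑ i ∈ I, b i) * t - ∑ i ∈ I, b i * C i by
      rw [Finset.sum_mul, ← Finset.sum_sub_distrib]
      apply Finset.sum_congr rfl; intros; ring]
    ring
  have heval' := heval
  let T : Finset ℝ := insert 0 (Finset.image C Finset.univ)
  have hT0 : (0:ℝ) ∈ T := Finset.mem_insert_self _ _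
  have hTC : ∀ i, C i ∈ T := fun i =>
    Finset.mem_insert_of_mem (Finset.mem_image_of_mem _ (Finset.mem_univ i))
  have hTform : ∀ c ∈ T, c = 0 ∨ ∃ j, c = C j := by
    intro c hc
    rcases Finset.mem_insert.mp hc with h | h
    · exact Or.inl h
    · obtain ⟨j, _, hj⟩ := Finset.mem_image.mp h
      exact Or.inr ⟨j, hj.symm⟩
  have hTnn : ∀ c ∈ T, 0 ≤ c := by
    intro c hc
    rcases hTform c hc with h | ⟨j, hj⟩
    · simp [h]
    · rw [hj]; exact hC j
  have hT1ne : (T.filter (fun c => c ≤ α)).Nonempty :=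
    ⟨0, Finset.mem_filter.mpr ⟨hT0, hα⟩⟩
  obtain ⟨β1, hβ1m, hβ1max'⟩ :=
    Finset.exists_max_image (T.filter (fun c => c ≤ α)) id hT1ne
  have hβ1T : β1 ∈ T := (Finset.mem_filter.mp hβ1m).1
  have hβ1α : β1 ≤ α := (Finset.mem_filter.mp hβ1m).2
  have hβ1max : ∀ c ∈ T, c ≤ α → c ≤ β1 := fun c hc hcα =>
    hβ1max' c (Finset.mem_filter.mpr ⟨hc, hcα⟩)
  by_cases hT2 : (T.filter (fun c => α ≤ c)).Nonempty
  · obtain ⟨β2, hβ2m, hβ2min'⟩ :=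
      Finset.exists_min_image (T.filter (fun c => α ≤ c)) id hT2
    have hβ2T : β2 ∈ T := (Finset.mem_filter.mp hβ2m).1
    have hαβ2 : α ≤ β2 := (Finset.mem_filter.mp hβ2m).2
    have hβ2min : ∀ c ∈ T, α ≤ c → β2 ≤ c := fun c hc hcα =>
      hβ2min' c (Finset.mem_filter.mpr ⟨hc, hcα⟩)
    let I : Finset (Fin n) := Finset.univ.filter (fun i => C i ≤ β1)
    have hI1 : ∀ i ∈ I, C i ≤ β1 := by
      intro i hi; exact (Finset.mem_filter.mp hi).2
    have hI2 : ∀ i ∉ I, β2 ≤ C i := by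
      intro i hi
      have h1 : ¬ C i ≤ β1 := fun h => hi (Finset.mem_filter.mpr ⟨Finset.mem_univ i, h⟩)
      rcases le_total (C i) α with h | h
      · exact absurd (hβ1max _ (hTC i) h) h1
      · exact hβ2min _ (hTC i) h
    have e1 := heval I β1 hI1 (fun i hi => le_trans (le_trans hβ1α hαβ2) (hI2 i hi))
    have eα := heval I α (fun i hi => le_trans (hI1 i hi) hβ1α)
      (fun i hi => le_trans hαβ2 (hI2 i hi))
    have e2 := heval I β2 (fun i hi => le_trans (hI1 i hi) (le_trans hβ1α hαβ2)) hI2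
    by_cases hs : 0 ≤ A - ∑ i ∈ I, b i
    · refine ⟨β2, hTnn _ hβ2T, hTform _ hβ2T, ?_⟩
      have := mul_le_mul_of_nonneg_left hαβ2 hs
      show g α ≤ g β2
      rw [eα, e2]; linarith
    · refine ⟨β1, hTnn _ hβ1T, hTform _ hβ1T, ?_⟩
      have := mul_le_mul_of_nonpos_left hβ1α (le_of_not_ge hs)
      show g α ≤ g β1
      rw [eα, e1]; linarith
  · have hall : ∀ c ∈ T, c ≤ β1 := by
      intro c hc
      rcases le_total c α with h | h
      · exact hβ1max c hc h
      · exact absurd ⟨c, Finset.mem_filter.mpr ⟨hc, h⟩⟩ hT2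
    have hIu : ∀ i ∈ (Finset.univ : Finset (Fin n)), C i ≤ β1 :=
      fun i _ => hall _ (hTC i)
    have e1 := heval Finset.univ β1 hIu (fun i hi => absurd (Finset.mem_univ i) hi)
    have eα := heval Finset.univ α (fun i hi => le_trans (hIu i hi) hβ1α)
      (fun i hi => absurd (Finset.mem_univ i) hi)
    refine ⟨β1, hTnn _ hβ1T, hTform _ hβ1T, ?_⟩
    have hs : A - ∑ i ∈ Finset.univ, b i ≤ 0 := by linarith
    have := mul_le_mul_of_nonpos_left hβ1α hs
    show g α ≤ g β1
    rw [eα, e1]; linarith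

/-- Lemma 7: the adversarial two-stage problem under discrete budgeted
uncertainty has an optimal solution with `α ∈ {0} ∪ {c̲_j} ∪ {c̲_j + d_j}`. -/
theorem stmt12 (n p : ℕ) (hp1 : 1 ≤ p) (hpn : p ≤ n)
    (cl d : Fin n → ℝ) (hcl : ∀ i, 0 ≤ cl i) (hd : ∀ i, 0 ≤ d i) (Γ : ℕ)
    (x : Fin n → ℝ) (hx01 : ∀ i, x i = 0 ∨ x i = 1) (hxp : (∑ i, x i) ≤ (p : ℝ)) :
    let Feas : ℝ → (Fin n → ℝ) → (Fin n → ℝ) → Prop := fun α γ δ =>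
      0 ≤ α ∧ (∀ i, 0 ≤ γ i) ∧ (∀ i, δ i = 0 ∨ δ i = 1) ∧
      (∀ i, α ≤ γ i + cl i + d i * δ i) ∧ (∑ i, δ i) ≤ (Γ : ℝ)
    let Obj : ℝ → (Fin n → ℝ) → ℝ := fun α γ =>
      ((p : ℝ) - ∑ i, x i) * α - ∑ i, (1 - x i) * γ i
    ∃ α : ℝ, ∃ γ δ : Fin n → ℝ, Feas α γ δ ∧
      (∀ α' : ℝ, ∀ γ' δ' : Fin n → ℝ, Feas α' γ' δ' → Obj α' γ' ≤ Obj α γ) ∧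
      (α = 0 ∨ (∃ j, α = cl j) ∨ (∃ j, α = cl j + d j)) := by
  classical
  intro Feas Obj
  have hFeas : ∀ α γ δ, Feas α γ δ ↔
      (0 ≤ α ∧ (∀ i, 0 ≤ γ i) ∧ (∀ i, δ i = 0 ∨ δ i = 1) ∧
        (∀ i, α ≤ γ i + cl i + d i * δ i) ∧ (∑ i, δ i) ≤ (Γ : ℝ)) :=
    fun _ _ _ => Iff.rfl
  have hObj : ∀ α γ, Obj α γ = ((p : ℝ) - ∑ i, x i) * α - ∑ i, (1 - x i) * γ i :=
    fun _ _ => rfl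
  set A : ℝ := (p:ℝ) - ∑ i, x i with hA
  set b : Fin n → ℝ := fun i => 1 - x i with hb
  have hbnn : ∀ i, 0 ≤ b i := by
    intro i; rcases hx01 i with h | h <;> simp [hb, h]
  have hbsum : ∀ α : ℝ, 0 ≤ α → A ≤ ∑ i, b i := by
    intro α _
    have : ∑ i, b i = (n : ℝ) - ∑ i, x i := by
      simp [hb, Finset.sum_sub_distrib]
    rw [this]
    have : (p : ℝ) ≤ (n : ℝ) := by exact_mod_cast hpn
    simp only [hA]; linarith
  -- canonical gamma and objective
  set Cf : (Fin n → ℝ) → Fin n → ℝ := fun δ i => cl i + d i * δ i with hCf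
  set γc : ℝ → (Fin n → ℝ) → Fin n → ℝ := fun α δ i => max (α - Cf δ i) 0 with hγc
  set G : ℝ → (Fin n → ℝ) → ℝ := fun α δ => A * α - ∑ i, b i * max (α - Cf δ i) 0 with hG
  have hObjG : ∀ α δ, Obj α (γc α δ) = G α δ := by
    intro α δ; rw [hObj]
  have step1 : ∀ α γ δ, Feas α γ δ → Obj α γ ≤ G α δ := by
    intro α γ δ hF
    obtain ⟨hα, hγ, hδ, hcon, hsum⟩ := (hFeas α γ δ).mp hF
    rw [hObj]
    have : ∑ i, b i * max (α - Cf δ i) 0 ≤ ∑ i, (1 - x i) * γ i := by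
      apply Finset.sum_le_sum
      intro i _
      have h1 : α - Cf δ i ≤ γ i := by
        have := hcon i; simp only [hCf]; linarith
      have : max (α - Cf δ i) 0 ≤ γ i := max_le h1 (hγ i)
      calc b i * max (α - Cf δ i) 0 ≤ b i * γ i :=
            mul_le_mul_of_nonneg_left this (hbnn i)
        _ = (1 - x i) * γ i := rfl
    simp only [hG]; linarith
  have feasc : ∀ α δ, 0 ≤ α → (∀ i, δ i = 0 ∨ δ i = 1) → (∑ i, δ i) ≤ (Γ:ℝ) →
      Feas α (γc α δ) δ := by
    intro α δ hα hδ hsum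
    refine (hFeas _ _ _).mpr ⟨hα, fun i => le_max_right _ _, hδ, ?_, hsum⟩
    intro i
    have := le_max_left (α - Cf δ i) 0
    have h2 : γc α δ i = max (α - Cf δ i) 0 := rfl
    simp only [hCf] at this ⊢
    rw [h2]; simp only [hCf]; linarith
  -- finite enumeration
  set S0 : Finset ℝ := insert 0 ((Finset.image cl Finset.univ) ∪
    (Finset.image (fun j => cl j + d j) Finset.univ)) with hS0
  have hS0nn : ∀ c ∈ S0, 0 ≤ c := by
    intro c hc
    rcases Finset.mem_insert.mp hc with h | h
    · simp [h]
    · rcases Finset.mem_union.mp h with h | h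
      · obtain ⟨j, _, hj⟩ := Finset.mem_image.mp h
        rw [← hj]; exact hcl j
      · obtain ⟨j, _, hj⟩ := Finset.mem_image.mp h
        rw [← hj]; exact add_nonneg (hcl j) (hd j)
  set toδ : (Fin n → Bool) → Fin n → ℝ := fun f i => if f i then 1 else 0 with htoδ
  set Db : Finset (Fin n → Bool) :=
    Finset.univ.filter (fun f => (∑ i, toδ f i) ≤ (Γ:ℝ)) with hDb
  set P : Finset (ℝ × (Fin n → Bool)) := S0 ×ˢ Db with hP
  have hPne : P.Nonempty := by
    refine ⟨(0, fun _ => false), Finset.mem_product.mpr ⟨Finset.mem_insert_self _ _, ?_⟩⟩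
    simp [hDb, htoδ]
  obtain ⟨q, hqP, hqmax⟩ := Finset.exists_max_image P (fun q => G q.1 (toδ q.2)) hPne
  obtain ⟨hq1, hq2⟩ := Finset.mem_product.mp hqP
  have hq2' := Finset.mem_filter.mp hq2
  have hδq01 : ∀ i, toδ q.2 i = 0 ∨ toδ q.2 i = 1 := by
    intro i; simp only [htoδ]; by_cases h : q.2 i <;> simp [h]
  have hαq : 0 ≤ q.1 := hS0nn _ hq1
  refine ⟨q.1, γc q.1 (toδ q.2), toδ q.2, feasc _ _ hαq hδq01 hq2'.2, ?_, ?_⟩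
  · intro α' γ' δ' hF'
    obtain ⟨hα', hγ', hδ', hcon', hsum'⟩ := (hFeas _ _ _).mp hF'
    have h1 : Obj α' γ' ≤ G α' δ' := step1 _ _ _ hF'
    obtain ⟨β, hβnn, hβform, hβle⟩ := key_lemma n A b (Cf δ')
      (fun i => by
        have : 0 ≤ d i * δ' i := by
          rcases hδ' i with h | h <;> simp [h, hd i]
        simp only [hCf]; exact add_nonneg (hcl i) this)
      (hbsum α' hα') α' hα'
    have h2 : G α' δ' ≤ G β δ' := hβle
    -- β ∈ S0
    have hβS0 : β ∈ S0 := by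
      rcases hβform with h | ⟨j, hj⟩
      · rw [h]; exact Finset.mem_insert_self _ _
      · rcases hδ' j with h0 | h0
        · have : β = cl j := by rw [hj]; simp [hCf, h0]
          rw [this]
          exact Finset.mem_insert_of_mem (Finset.mem_union_left _
            (Finset.mem_image_of_mem _ (Finset.mem_univ j)))
        · have : β = cl j + d j := by rw [hj]; simp [hCf, h0]
          rw [this]
          exact Finset.mem_insert_of_mem (Finset.mem_union_right _
            (Finset.mem_image_of_mem _ (Finset.mem_univ j)))
    -- δ' corresponds to a Bool vector
    set f' : Fin n → Bool := fun i => if δ' i = 1 then true else false with hf'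
    have htf : toδ f' = δ' := by
      funext i
      rcases hδ' i with h | h
      · simp [htoδ, hf', h]
      · simp [htoδ, hf', h]
    have hf'Db : f' ∈ Db := by
      refine Finset.mem_filter.mpr ⟨Finset.mem_univ _, ?_⟩
      rw [htf]; exact hsum'
    have h3 : G β δ' ≤ G q.1 (toδ q.2) := by
      have := hqmax (β, f') (Finset.mem_product.mpr ⟨hβS0, hf'Db⟩)
      simpa [htf] using this
    rw [hObjG]
    linarith
  · rcases Finset.mem_insert.mp hq1 with h | h
    · exact Or.inl h
    · rcases Finset.mem_union.mp h with h | h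
      · obtain ⟨j, _, hj⟩ := Finset.mem_image.mp h
        exact Or.inr (Or.inl ⟨j, hj.symm⟩)
      · obtain ⟨j, _, hj⟩ := Finset.mem_image.mp h
        exact Or.inr (Or.inr ⟨j, hj.symm⟩)
end

section
/- Let n, p be integers with 1 ≤ p ≤ n, let C, c̲, d ∈ ℝ^n_{≥0}, let Γ be a nonnegative integer, let α ∈ (0,1] satisfy c̲_i ≥ α·(c̲_i + d_i) for all i ∈ [n], and let U^d be the discrete budgeted uncertainty set. Let x̂ ∈ Φ₁ be a minimizer over x ∈ Φ₁ of C·x + min_{y ∈ Φ_x} c̲·y. Then C·x̂ + max_{c ∈ U^d} min_{y ∈ Φ_{x̂}} c·y ≤ (1/α) · min_{x ∈ Φ₁} ( C·x + max_{c ∈ U^d} min_{y ∈ Φ_x} c·y ); that is, x̂ is a (1/α)-approximate solution to the robust two-stage selection problem under U^d. -/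
open Finset

noncomputable section

/-- The set `Φ₁` of partial first-stage selections: 0-1 vectors with at most `p` ones. -/
def selPhi1 (n p : ℕ) : Set (Fin n → ℝ) :=
  {x | (∀ i, x i = 0 ∨ x i = 1) ∧ (∑ i, x i) ≤ (p : ℝ)}

/-- The completion set `Φ_x` of a first-stage solution `x ∈ Φ₁`. -/
def selPhiX (n p : ℕ) (x : Fin n → ℝ) : Set (Fin n → ℝ) :=
  {y | (∀ i, y i = 0 ∨ y i = 1) ∧ (∑ i, (x i + y i)) = (p : ℝ) ∧
    ∀ i, x i + y i ≤ 1}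

/-- The discrete budgeted uncertainty set `U^d`: the costs of at most `Γ`
items deviate to their upper bounds. -/
def Ud (n : ℕ) (cl d : Fin n → ℝ) (Γ : ℕ) : Set (Fin n → ℝ) :=
  {c | ∃ S : Finset (Fin n), S.card ≤ Γ ∧
    c = fun i => cl i + (if i ∈ S then d i else 0)}

/-- The optimal value `min_{y ∈ S} Σ c_i y_i` of the incremental problem. -/
def incVal (n : ℕ) (S : Set (Fin n → ℝ)) (c : Fin n → ℝ) : ℝ :=
  sInf {v | ∃ y ∈ S, v = ∑ i, c i * y i}


lemma phiX_nonempty (n p : ℕ) (hpn : p ≤ n) (x : Fin n → ℝ)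
    (hx : x ∈ selPhi1 n p) : (selPhiX n p x).Nonempty := by
  obtain ⟨hx01, hxs⟩ := hx
  set S : Finset (Fin n) := univ.filter (fun i => x i = 1) with hS
  have hsum : ∑ i, x i = (S.card : ℝ) := by
    rw [hS, ← Finset.sum_boole]
    exact Finset.sum_congr rfl fun i _ => by rcases hx01 i with h | h <;> simp [h]
  have hSp : S.card ≤ p := by
    have : (S.card : ℝ) ≤ (p : ℝ) := hsum ▸ hxs
    exact_mod_cast this
  have hcard : p - S.card ≤ (univ \ S).card := by
    rw [Finset.card_sdiff_of_subset (subset_univ S), card_univ, Fintype.card_fin]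
    exact Nat.sub_le_sub_right hpn _
  obtain ⟨T, hTsub, hTcard⟩ := Finset.exists_subset_card_eq hcard
  refine ⟨fun i => if i ∈ T then 1 else 0, fun i => by by_cases h : i ∈ T <;> simp [h], ?_, ?_⟩
  · rw [Finset.sum_add_distrib, hsum]
    have : ∑ i, (if i ∈ T then (1:ℝ) else 0) = (T.card : ℝ) := by
      simp [Finset.sum_ite_mem, Finset.univ_inter]
    rw [this, hTcard, ← Nat.cast_add, Nat.add_sub_cancel' hSp]
  · intro i
    by_cases h : i ∈ T
    · have : i ∉ S := (Finset.mem_sdiff.mp (hTsub h)).2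
      have hx0 : x i = 0 := by
        rcases hx01 i with h0 | h1
        · exact h0
        · exact absurd (Finset.mem_filter.mpr ⟨mem_univ i, h1⟩) this
      simp [h, hx0]
    · rcases hx01 i with h0 | h0 <;> simp [h, h0]

lemma incSet_nonempty (n : ℕ) {S : Set (Fin n → ℝ)} (hS : S.Nonempty) (c : Fin n → ℝ) :
    {v | ∃ y ∈ S, v = ∑ i, c i * y i}.Nonempty := by
  obtain ⟨y, hy⟩ := hS; exact ⟨_, y, hy, rfl⟩

lemma incSet_nonneg (n : ℕ) {S : Set (Fin n → ℝ)} (c : Fin n → ℝ) (hc : ∀ i, 0 ≤ c i)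
    (hS : ∀ y ∈ S, ∀ i, 0 ≤ y i) :
    ∀ v ∈ {v | ∃ y ∈ S, v = ∑ i, c i * y i}, (0:ℝ) ≤ v := by
  rintro v ⟨y, hy, rfl⟩
  exact Finset.sum_nonneg fun i _ => mul_nonneg (hc i) (hS y hy i)

lemma incVal_le (n : ℕ) {S : Set (Fin n → ℝ)} (c : Fin n → ℝ) (hc : ∀ i, 0 ≤ c i)
    (hS : ∀ y ∈ S, ∀ i, 0 ≤ y i) {y : Fin n → ℝ} (hy : y ∈ S) :
    incVal n S c ≤ ∑ i, c i * y i :=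
  csInf_le ⟨0, fun v hv => incSet_nonneg n c hc hS v hv⟩ ⟨y, hy, rfl⟩

lemma le_incVal (n : ℕ) {S : Set (Fin n → ℝ)} (hS : S.Nonempty) (c : Fin n → ℝ) {a : ℝ}
    (h : ∀ y ∈ S, a ≤ ∑ i, c i * y i) : a ≤ incVal n S c := by
  refine le_csInf (incSet_nonempty n hS c) ?_
  rintro v ⟨y, hy, rfl⟩; exact h y hy

/-- Proposition 9: the mid-point solution is a `1/α`-approximation for R2ST
under discrete budgeted uncertainty. -/
theorem stmt13 (n p : ℕ) (hp1 : 1 ≤ p) (hpn : p ≤ n)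
    (C cl d : Fin n → ℝ) (hC : ∀ i, 0 ≤ C i) (hcl : ∀ i, 0 ≤ cl i)
    (hd : ∀ i, 0 ≤ d i) (Γ : ℕ)
    (α : ℝ) (hα0 : 0 < α) (hα1 : α ≤ 1)
    (hαc : ∀ i, α * (cl i + d i) ≤ cl i)
    (xh : Fin n → ℝ) (hxh : xh ∈ selPhi1 n p)
    (hmin : ∀ x ∈ selPhi1 n p,
      (∑ i, C i * xh i) + incVal n (selPhiX n p xh) cl ≤
        (∑ i, C i * x i) + incVal n (selPhiX n p x) cl) :
    (∑ i, C i * xh i) +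
        sSup {v | ∃ c ∈ Ud n cl d Γ, v = incVal n (selPhiX n p xh) c} ≤
      (1 / α) * sInf {w | ∃ x ∈ selPhi1 n p,
        w = (∑ i, C i * x i) +
          sSup {v | ∃ c ∈ Ud n cl d Γ, v = incVal n (selPhiX n p x) c}} := by
  -- basic facts about members of Ud
  have hUd_lo : ∀ c ∈ Ud n cl d Γ, ∀ i, cl i ≤ c i := by
    rintro c ⟨S, -, rfl⟩ i
    by_cases h : i ∈ S <;> simp [h, hd i]
  have hUd_nn : ∀ c ∈ Ud n cl d Γ, ∀ i, 0 ≤ c i :=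
    fun c hc i => le_trans (hcl i) (hUd_lo c hc i)
  have hUd_hi : ∀ c ∈ Ud n cl d Γ, ∀ i, α * c i ≤ cl i := by
    rintro c ⟨S, -, rfl⟩ i
    refine le_trans ?_ (hαc i)
    by_cases h : i ∈ S <;> simp [h]
    · exact mul_le_mul_of_nonneg_left (by linarith [hd i]) hα0.le
  have hcl_mem : cl ∈ Ud n cl d Γ := ⟨∅, by simp, by funext i; simp⟩
  -- facts about selPhiX for x ∈ Φ₁
  have hy_nn : ∀ x : Fin n → ℝ, ∀ y ∈ selPhiX n p x, ∀ i, 0 ≤ y i := by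
    intro x y hy i
    rcases hy.1 i with h | h <;> simp [h]
  -- per-x inequalities
  have key : ∀ x ∈ selPhi1 n p, ∀ c ∈ Ud n cl d Γ,
      incVal n (selPhiX n p x) cl ≤ incVal n (selPhiX n p x) c ∧
      α * incVal n (selPhiX n p x) c ≤ incVal n (selPhiX n p x) cl := by
    intro x hx c hc
    have hne := phiX_nonempty n p hpn x hx
    constructor
    · refine le_incVal n hne c fun y hy => ?_
      refine le_trans (incVal_le n cl hcl (hy_nn x) hy) ?_
      exact Finset.sum_le_sum fun i _ =>
        mul_le_mul_of_nonneg_right (hUd_lo c hc i) (hy_nn x y hy i)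
    · refine le_incVal n hne cl fun y hy => ?_
      have h1 : incVal n (selPhiX n p x) c ≤ ∑ i, c i * y i :=
        incVal_le n c (hUd_nn c hc) (hy_nn x) hy
      have h2 : α * ∑ i, c i * y i ≤ ∑ i, cl i * y i := by
        rw [Finset.mul_sum]
        refine Finset.sum_le_sum fun i _ => ?_
        rw [← mul_assoc]
        exact mul_le_mul_of_nonneg_right (hUd_hi c hc i) (hy_nn x y hy i)
      calc α * incVal n (selPhiX n p x) c ≤ α * ∑ i, c i * y i :=
            mul_le_mul_of_nonneg_left h1 hα0.le
        _ ≤ _ := h2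
  have hincnn : ∀ x ∈ selPhi1 n p, 0 ≤ incVal n (selPhiX n p x) cl := by
    intro x hx
    refine le_incVal n (phiX_nonempty n p hpn x hx) cl fun y hy => ?_
    exact Finset.sum_nonneg fun i _ => mul_nonneg (hcl i) (hy_nn x y hy i)
  -- sSup bounds
  have hdiv : ∀ x ∈ selPhi1 n p, ∀ c ∈ Ud n cl d Γ,
      incVal n (selPhiX n p x) c ≤ (1 / α) * incVal n (selPhiX n p x) cl := by
    intro x hx c hc
    have h := (key x hx c hc).2
    rw [div_mul_eq_mul_div, one_mul, le_div_iff₀ hα0, mul_comm]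
    exact h
  have hsup_le : ∀ x ∈ selPhi1 n p,
      sSup {v | ∃ c ∈ Ud n cl d Γ, v = incVal n (selPhiX n p x) c} ≤
        (1 / α) * incVal n (selPhiX n p x) cl := by
    intro x hx
    refine Real.sSup_le ?_ (mul_nonneg (by positivity) (hincnn x hx))
    rintro v ⟨c, hc, rfl⟩
    exact hdiv x hx c hc
  have hle_sup : ∀ x ∈ selPhi1 n p,
      incVal n (selPhiX n p x) cl ≤
        sSup {v | ∃ c ∈ Ud n cl d Γ, v = incVal n (selPhiX n p x) c} := by
    intro x hx
    refine le_csSup ⟨(1 / α) * incVal n (selPhiX n p x) cl, ?_⟩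
      ⟨cl, hcl_mem, rfl⟩
    rintro v ⟨c, hc, rfl⟩
    exact hdiv x hx c hc
  -- lower bound on the infimum
  have hCnn : ∀ x : Fin n → ℝ, x ∈ selPhi1 n p → 0 ≤ ∑ i, C i * x i := by
    intro x hx
    refine Finset.sum_nonneg fun i _ => mul_nonneg (hC i) ?_
    rcases hx.1 i with h | h <;> simp [h]
  set L := (∑ i, C i * xh i) +
      sSup {v | ∃ c ∈ Ud n cl d Γ, v = incVal n (selPhiX n p xh) c} with hL
  have hbound : α * L ≤ (∑ i, C i * xh i) + incVal n (selPhiX n p xh) cl := by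
    have h1 := hsup_le xh hxh
    have h2 := hCnn xh hxh
    have h3 := hincnn xh hxh
    rw [hL, mul_add]
    have : α * sSup {v | ∃ c ∈ Ud n cl d Γ, v = incVal n (selPhiX n p xh) c} ≤
        incVal n (selPhiX n p xh) cl := by
      rw [← le_div_iff₀' hα0]
      simpa [div_eq_mul_inv, mul_comm] using h1
    nlinarith
  have hinf : α * L ≤ sInf {w | ∃ x ∈ selPhi1 n p,
      w = (∑ i, C i * x i) +
        sSup {v | ∃ c ∈ Ud n cl d Γ, v = incVal n (selPhiX n p x) c}} := by
    refine le_csInf ⟨_, xh, hxh, rfl⟩ ?_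
    rintro w ⟨x, hx, rfl⟩
    calc α * L ≤ (∑ i, C i * xh i) + incVal n (selPhiX n p xh) cl := hbound
      _ ≤ (∑ i, C i * x i) + incVal n (selPhiX n p x) cl := hmin x hx
      _ ≤ _ := by linarith [hle_sup x hx]
  calc L = (1 / α) * (α * L) := by field_simp
    _ ≤ _ := mul_le_mul_of_nonneg_left hinf (by positivity)
end
end

section
/- Let n, p, k be integers with 1 ≤ p ≤ n and 0 ≤ k ≤ p, let c̲, d ∈ ℝ^n_{≥0}, and let Γ be a nonnegative integer with Γ ≤ k. Let x* ∈ Φ be a minimizer of Σ_i c̲_i·x_i over Φ. Then max_{c ∈ U^d} min_{y ∈ Φ^k_{x*}} c·y = max_{c ∈ U^d} min_{y ∈ Φ} c·y, and consequently for every x ∈ Φ, max_{c ∈ U^d} min_{y ∈ Φ^k_{x*}} c·y ≤ max_{c ∈ U^d} min_{y ∈ Φ^k_x} c·y; that is, x* is an optimal first-stage solution of the recoverable robust selection problem under U^d with zero first-stage costs. -/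
open Finset

noncomputable section

/-- The set of feasible selections: 0-1 vectors with exactly `p` ones. -/
def selPhi (n p : ℕ) : Set (Fin n → ℝ) :=
  {x | (∀ i, x i = 0 ∨ x i = 1) ∧ (∑ i, x i) = (p : ℝ)}

/-- The recovery set `Φ^k_x`. -/
def selPhiK (n p k : ℕ) (x : Fin n → ℝ) : Set (Fin n → ℝ) :=
  {y | (∀ i, y i = 0 ∨ y i = 1) ∧ (∑ i, y i) = (p : ℝ) ∧
    (p : ℝ) - (k : ℝ) ≤ ∑ i, x i * y i}

/-- The continuous budgeted uncertainty set `U^c`. -/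
def Uc (n : ℕ) (cl d : Fin n → ℝ) (Γ : ℝ) : Set (Fin n → ℝ) :=
  {c | ∃ δ : Fin n → ℝ, (∀ i, 0 ≤ δ i ∧ δ i ≤ d i) ∧ (∑ i, δ i) ≤ Γ ∧
    c = fun i => cl i + δ i}

namespace Stmt14Aux

variable {n : ℕ}

def ind (Z : Finset (Fin n)) : Fin n → ℝ := fun i => if i ∈ Z then 1 else 0

lemma sum_mul_ind (c : Fin n → ℝ) (Z : Finset (Fin n)) :
    ∑ i, c i * ind Z i = ∑ i ∈ Z, c i := by
  simp [ind, mul_ite, Finset.sum_ite_mem]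

lemma sum_ind (Z : Finset (Fin n)) : ∑ i, ind Z i = (Z.card : ℝ) := by
  simp [ind, Finset.sum_ite_mem]

lemma sum_ind_mul_ind (X Z : Finset (Fin n)) :
    ∑ i, ind X i * ind Z i = ((X ∩ Z).card : ℝ) := by
  simp only [ind, ite_mul, one_mul, zero_mul]
  rw [← sum_ind (X ∩ Z)]
  simp [ind, Finset.mem_inter, ite_and]

open scoped Classical in
def supp (x : Fin n → ℝ) : Finset (Fin n) := Finset.univ.filter (fun i => x i = 1)

lemma eq_ind {x : Fin n → ℝ} (hx : ∀ i, x i = 0 ∨ x i = 1) : x = ind (supp x) := by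
  classical
  funext i
  rcases hx i with h | h <;> simp [ind, supp, h]

lemma card_supp {p : ℕ} {x : Fin n → ℝ} (hx : x ∈ selPhi n p) : (supp x).card = p := by
  have h := hx.2
  rw [eq_ind hx.1, sum_ind] at h
  exact_mod_cast h

lemma ind_mem_selPhi {p : ℕ} {Z : Finset (Fin n)} (hZ : Z.card = p) :
    ind Z ∈ selPhi n p := by
  refine ⟨fun i => ?_, by rw [sum_ind, hZ]⟩
  unfold ind; split <;> simp

lemma exchange (p k : ℕ) (cl d : Fin n → ℝ) (hd : ∀ i, 0 ≤ d i)
    (Xs : Finset (Fin n)) (hXs : Xs.card = p)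
    (hopt : ∀ j ∈ Xs, ∀ i ∉ Xs, cl j ≤ cl i)
    (S : Finset (Fin n)) (hS : S.card ≤ k) :
    ∃ Z : Finset (Fin n), Z.card = p ∧ p ≤ (Xs ∩ Z).card + k ∧
      ∀ W : Finset (Fin n), W.card = p →
        ∑ i ∈ Z, (cl i + if i ∈ S then d i else 0) ≤
          ∑ i ∈ W, (cl i + if i ∈ S then d i else 0) := by
  classical
  set c : Fin n → ℝ := fun i => cl i + if i ∈ S then d i else 0 with hc
  have hcl_le_c : ∀ i, cl i ≤ c i := by
    intro i; simp only [hc]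
    split <;> [linarith [hd i]; simp]
  set P : Finset (Finset (Fin n)) := Finset.powersetCard p Finset.univ with hP
  have hmemP : ∀ W : Finset (Fin n), W ∈ P ↔ W.card = p := by
    intro W; simp [hP, Finset.mem_powersetCard]
  have hPne : P.Nonempty := ⟨Xs, (hmemP Xs).2 hXs⟩
  obtain ⟨Z₀, hZ₀P, hZ₀min⟩ := P.exists_min_image (fun Z => ∑ i ∈ Z, c i) hPne
  set T : Finset (Finset (Fin n)) :=
    P.filter (fun Z => ∑ i ∈ Z, c i ≤ ∑ i ∈ Z₀, c i) with hT
  have hTne : T.Nonempty := ⟨Z₀, by simp [hT, hZ₀P]⟩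
  obtain ⟨Z, hZT, hZmax⟩ := T.exists_max_image (fun Z => (Xs ∩ Z).card) hTne
  rw [hT, Finset.mem_filter] at hZT
  obtain ⟨hZP, hZval⟩ := hZT
  have hZcard : Z.card = p := (hmemP Z).1 hZP
  refine ⟨Z, hZcard, ?_, ?_⟩
  · by_contra hcon
    push_neg at hcon
    have hA : (Xs \ Z).card + (Xs ∩ Z).card = p := by
      rw [Finset.card_sdiff_add_card_inter, hXs]
    have hB : (Z \ Xs).card + (Z ∩ Xs).card = p := by
      rw [Finset.card_sdiff_add_card_inter, hZcard]
    have hIZ : (Z ∩ Xs).card = (Xs ∩ Z).card := by rw [Finset.inter_comm]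
    have hAgt : k < (Xs \ Z).card := by omega
    have hAS : ((Xs \ Z) \ S).Nonempty := by
      rw [← Finset.card_pos]
      have h1 : ((Xs \ Z) ∩ S).card ≤ S.card := Finset.card_le_card (Finset.inter_subset_right)
      have h2 : ((Xs \ Z) \ S).card + ((Xs \ Z) ∩ S).card = (Xs \ Z).card :=
        Finset.card_sdiff_add_card_inter _ _
      omega
    have hBne : (Z \ Xs).Nonempty := by
      rw [← Finset.card_pos]; omega
    obtain ⟨j, hj⟩ := hAS
    obtain ⟨i, hi⟩ := hBne
    rw [Finset.mem_sdiff] at hj hi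
    have hjX := (Finset.mem_sdiff.1 hj.1).1
    have hjZ := (Finset.mem_sdiff.1 hj.1).2
    have hjS := hj.2
    obtain ⟨hiZ, hiX⟩ := hi
    set Z' : Finset (Fin n) := insert j (Z.erase i) with hZ'
    have hjne : j ∉ Z.erase i := fun h => hjZ (Finset.mem_of_mem_erase h)
    have hZ'card : Z'.card = p := by
      rw [hZ', Finset.card_insert_of_notMem hjne, Finset.card_erase_of_mem hiZ]
      have : 1 ≤ Z.card := Finset.card_pos.2 ⟨i, hiZ⟩
      omega
    have hsum : ∑ x ∈ Z', c x = ∑ x ∈ Z, c x - c i + c j := by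
      rw [hZ', Finset.sum_insert hjne, Finset.sum_erase_eq_sub hiZ]; ring
    have hcji : c j ≤ c i := by
      have h1 : c j = cl j := by simp [hc, hjS]
      have h2 : cl j ≤ cl i := hopt j hjX i hiX
      calc c j = cl j := h1
        _ ≤ cl i := h2
        _ ≤ c i := hcl_le_c i
    have hZ'T : Z' ∈ T := by
      rw [hT, Finset.mem_filter, hmemP]
      exact ⟨hZ'card, by rw [hsum]; linarith⟩
    have hinter : Xs ∩ Z' = insert j (Xs ∩ Z) := by
      rw [hZ', Finset.inter_insert_of_mem hjX, Finset.inter_erase,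
        Finset.erase_eq_of_notMem (fun h => hiX (Finset.mem_inter.1 h).1)]
    have hcard' : (Xs ∩ Z').card = (Xs ∩ Z).card + 1 := by
      rw [hinter, Finset.card_insert_of_notMem (fun h => hjZ (Finset.mem_inter.1 h).2)]
    have := hZmax Z' hZ'T
    omega
  · intro W hW
    exact le_trans hZval (hZ₀min W ((hmemP W).2 hW))

end Stmt14Aux

open Stmt14Aux in
/-- When `Γ ≤ k`, the nominally optimal selection is an optimal first-stage
solution of RREC under `U^d` with zero first-stage costs. -/
theorem stmt14 (n p k : ℕ) (hp1 : 1 ≤ p) (hpn : p ≤ n) (hk : k ≤ p)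
    (cl d : Fin n → ℝ) (hcl : ∀ i, 0 ≤ cl i) (hd : ∀ i, 0 ≤ d i)
    (Γ : ℕ) (hΓ : Γ ≤ k)
    (xstar : Fin n → ℝ) (hxs : xstar ∈ selPhi n p)
    (hmin : ∀ x ∈ selPhi n p, (∑ i, cl i * xstar i) ≤ ∑ i, cl i * x i) :
    sSup {v | ∃ c ∈ Ud n cl d Γ, v = incVal n (selPhiK n p k xstar) c} =
        sSup {v | ∃ c ∈ Ud n cl d Γ, v = incVal n (selPhi n p) c} ∧
      ∀ x ∈ selPhi n p,
        sSup {v | ∃ c ∈ Ud n cl d Γ, v = incVal n (selPhiK n p k xstar) c} ≤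
          sSup {v | ∃ c ∈ Ud n cl d Γ, v = incVal n (selPhiK n p k x) c} := by
  classical
  -- basic facts
  have hKsub : ∀ x : Fin n → ℝ, selPhiK n p k x ⊆ selPhi n p := by
    intro x y hy; exact ⟨hy.1, hy.2.1⟩
  have hself : ∀ x ∈ selPhi n p, x ∈ selPhiK n p k x := by
    intro x hx
    refine ⟨hx.1, hx.2, ?_⟩
    have : ∀ i, x i * x i = x i := by
      intro i; rcases hx.1 i with h | h <;> rw [h] <;> ring
    rw [Finset.sum_congr rfl fun i _ => this i, hx.2]
    have : (0:ℝ) ≤ k := Nat.cast_nonneg k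
    linarith
  -- nonnegativity of costs in Ud
  have hUd_nonneg : ∀ c ∈ Ud n cl d Γ, ∀ i, 0 ≤ c i := by
    rintro c ⟨S, hS, rfl⟩ i
    have := hcl i; have := hd i
    dsimp only; split <;> linarith
  have hUd_ub : ∀ c ∈ Ud n cl d Γ, ∀ i, c i ≤ cl i + d i := by
    rintro c ⟨S, hS, rfl⟩ i
    have := hd i
    dsimp only; split <;> linarith
  -- value sets are bounded below by 0
  have hbdd : ∀ (S : Set (Fin n → ℝ)), S ⊆ selPhi n p → ∀ c ∈ Ud n cl d Γ,
      ∀ v ∈ {v | ∃ y ∈ S, v = ∑ i, c i * y i}, (0:ℝ) ≤ v := by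
    rintro S hSsub c hc v ⟨y, hy, rfl⟩
    apply Finset.sum_nonneg
    intro i _
    rcases (hSsub hy).1 i with h | h <;> rw [h]
    · simp
    · simpa using hUd_nonneg c hc i
  -- the key pointwise equality
  have key : ∀ c ∈ Ud n cl d Γ,
      incVal n (selPhiK n p k xstar) c = incVal n (selPhi n p) c := by
    rintro c ⟨S, hS, rfl⟩
    set c' : Fin n → ℝ := fun i => cl i + if i ∈ S then d i else 0 with hc'
    have hcUd : c' ∈ Ud n cl d Γ := ⟨S, hS, rfl⟩
    set Xs := supp xstar with hXsdef
    have hXs : Xs.card = p := card_supp hxs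
    have hxind : xstar = ind Xs := eq_ind hxs.1
    have hopt : ∀ j ∈ Xs, ∀ i ∉ Xs, cl j ≤ cl i := by
      intro j hjX i hiX
      have hjcard : 1 ≤ Xs.card := Finset.card_pos.2 ⟨j, hjX⟩
      set W : Finset (Fin n) := insert i (Xs.erase j) with hW
      have hine : i ∉ Xs.erase j := fun h => hiX (Finset.mem_of_mem_erase h)
      have hWcard : W.card = p := by
        rw [hW, Finset.card_insert_of_notMem hine, Finset.card_erase_of_mem hjX]
        omega
      have h1 := hmin (ind W) (ind_mem_selPhi hWcard)
      rw [hxind, sum_mul_ind, sum_mul_ind, hW, Finset.sum_insert hine,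
        Finset.sum_erase_eq_sub hjX] at h1
      linarith
    obtain ⟨Z, hZcard, hZov, hZmin⟩ := exchange p k cl d hd Xs hXs hopt S (le_trans hS hΓ)
    set y := ind Z with hy
    have hyPhi : y ∈ selPhi n p := ind_mem_selPhi hZcard
    have hyK : y ∈ selPhiK n p k xstar := by
      refine ⟨hyPhi.1, hyPhi.2, ?_⟩
      rw [hxind, hy, sum_ind_mul_ind]
      have : (p:ℝ) ≤ ((Xs ∩ Z).card : ℝ) + (k:ℝ) := by exact_mod_cast hZov
      linarith
    have hymin : ∀ y' ∈ selPhi n p, ∑ i, c' i * y i ≤ ∑ i, c' i * y' i := by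
      intro y' hy'
      rw [eq_ind hy'.1, hy, sum_mul_ind, sum_mul_ind]
      exact hZmin _ (card_supp hy')
    -- now prove equality of the infima
    have hne1 : {v | ∃ y' ∈ selPhiK n p k xstar, v = ∑ i, c' i * y' i}.Nonempty :=
      ⟨_, y, hyK, rfl⟩
    have hne2 : {v | ∃ y' ∈ selPhi n p, v = ∑ i, c' i * y' i}.Nonempty :=
      ⟨_, y, hyPhi, rfl⟩
    have hbdd2 : BddBelow {v | ∃ y' ∈ selPhi n p, v = ∑ i, c' i * y' i} :=
      ⟨0, fun v hv => hbdd _ (fun _ h => h) c' hcUd v hv⟩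
    have hbdd1 : BddBelow {v | ∃ y' ∈ selPhiK n p k xstar, v = ∑ i, c' i * y' i} :=
      ⟨0, fun v hv => hbdd _ (hKsub xstar) c' hcUd v hv⟩
    apply le_antisymm
    · apply le_trans (csInf_le hbdd1 ⟨y, hyK, rfl⟩)
      apply le_csInf hne2
      rintro v ⟨y', hy', rfl⟩
      exact hymin y' hy'
    · apply csInf_le_csInf hbdd2 hne1
      rintro v ⟨y', hy', rfl⟩
      exact ⟨y', hKsub xstar hy', rfl⟩
  -- set equality for the first part
  have hseteq : {v | ∃ c ∈ Ud n cl d Γ, v = incVal n (selPhiK n p k xstar) c} =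
      {v | ∃ c ∈ Ud n cl d Γ, v = incVal n (selPhi n p) c} := by
    ext v
    constructor <;> rintro ⟨c, hc, rfl⟩
    · exact ⟨c, hc, key c hc⟩
    · exact ⟨c, hc, (key c hc).symm⟩
  refine ⟨by rw [hseteq], ?_⟩
  intro x hx
  rw [hseteq]
  -- now: sSup over incVal (selPhi) ≤ sSup over incVal (selPhiK x)
  have hne : {v | ∃ c ∈ Ud n cl d Γ, v = incVal n (selPhi n p) c}.Nonempty := by
    refine ⟨_, fun i => cl i + if i ∈ (∅ : Finset (Fin n)) then d i else 0,
      ⟨∅, by simp, rfl⟩, rfl⟩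
  apply csSup_le hne
  rintro v ⟨c, hc, rfl⟩
  have hvle : incVal n (selPhi n p) c ≤ incVal n (selPhiK n p k x) c := by
    apply csInf_le_csInf
    · exact ⟨0, fun v hv => hbdd _ (fun _ h => h) c hc v hv⟩
    · exact ⟨_, x, hself x hx, rfl⟩
    · rintro v ⟨y', hy', rfl⟩
      exact ⟨y', hKsub x hy', rfl⟩
  refine le_trans hvle (le_csSup ?_ ⟨c, hc, rfl⟩)
  -- BddAbove
  refine ⟨∑ i, (cl i + d i), ?_⟩
  rintro v ⟨c₂, hc₂, rfl⟩
  have h1 : incVal n (selPhiK n p k x) c₂ ≤ ∑ i, c₂ i * x i :=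
    csInf_le ⟨0, fun v hv => hbdd _ (hKsub x) c₂ hc₂ v hv⟩ ⟨x, hself x hx, rfl⟩
  refine le_trans h1 (Finset.sum_le_sum fun i _ => ?_)
  have hub := hUd_ub c₂ hc₂ i
  have hnn := hUd_nonneg c₂ hc₂ i
  have := hcl i; have := hd i
  rcases hx.1 i with h | h <;> rw [h] <;> nlinarith
end
end

section
/- Let n, p, k be integers with 0 ≤ k ≤ p ≤ n and n ≥ p + k, let x ∈ Φ, and let c ∈ ℝ^n_{≥0}. Then min_{y ∈ Φ^k_x} Σ_{i=1}^n c_i·y_i = min_{j ∈ {p−k, p−k+1, …, p}} ( (sum of the j smallest values among {c_i : i ∈ X_x}) + (sum of the p−j smallest values among {c_i : i ∉ X_x}) ), where an empty sum of the 0 smallest values equals 0. -/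
open Finset

noncomputable section

/-- The sum of the `l` smallest entries of `c` over indices in `s`, expressed
as the minimum of `Σ_{i ∈ T} c i` over subsets `T ⊆ s` of cardinality `l`. -/
def sumSmallest (n : ℕ) (s : Finset (Fin n)) (c : Fin n → ℝ) (l : ℕ) : ℝ :=
  sInf {w | ∃ T ⊆ s, T.card = l ∧ w = ∑ i ∈ T, c i}

section Aux

variable {n : ℕ}

lemma sum_mul_eq_sum_filter (y : Fin n → ℝ) (hy : ∀ i, y i = 0 ∨ y i = 1)
    (c : Fin n → ℝ) :
    ∑ i, c i * y i = ∑ i ∈ univ.filter (fun i => y i = 1), c i := by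
  rw [sum_filter]
  refine sum_congr rfl fun i _ => ?_
  rcases hy i with h | h <;> simp [h]

lemma sum_eq_card_filter (y : Fin n → ℝ) (hy : ∀ i, y i = 0 ∨ y i = 1) :
    ∑ i, y i = ((univ.filter (fun i => y i = 1)).card : ℝ) := by
  have h := sum_mul_eq_sum_filter y hy (fun _ => 1)
  simpa using h

lemma sum_xy_eq_card (x y : Fin n → ℝ) (hx : ∀ i, x i = 0 ∨ x i = 1)
    (hy : ∀ i, y i = 0 ∨ y i = 1) :
    ∑ i, x i * y i =
      (((univ.filter (fun i => y i = 1)).filter (fun i => x i = 1)).card : ℝ) := by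
  rw [sum_mul_eq_sum_filter y hy x, ← Finset.sum_boole]
  refine sum_congr rfl fun i _ => ?_
  rcases hx i with h | h <;> simp [h]

lemma sumSmallest_bddBelow (s : Finset (Fin n)) (c : Fin n → ℝ)
    (hc : ∀ i, 0 ≤ c i) (l : ℕ) :
    BddBelow {w | ∃ T ⊆ s, T.card = l ∧ w = ∑ i ∈ T, c i} := by
  refine ⟨0, ?_⟩
  rintro w ⟨T, _, _, rfl⟩
  exact sum_nonneg fun i _ => hc i

lemma sumSmallest_le (s : Finset (Fin n)) (c : Fin n → ℝ) (hc : ∀ i, 0 ≤ c i)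
    {T : Finset (Fin n)} {l : ℕ} (hT : T ⊆ s) (hcard : T.card = l) :
    sumSmallest n s c l ≤ ∑ i ∈ T, c i :=
  csInf_le (sumSmallest_bddBelow s c hc l) ⟨T, hT, hcard, rfl⟩

lemma sumSmallest_nonneg (s : Finset (Fin n)) (c : Fin n → ℝ)
    (hc : ∀ i, 0 ≤ c i) (l : ℕ) : 0 ≤ sumSmallest n s c l := by
  apply Real.sInf_nonneg
  rintro w ⟨T, _, _, rfl⟩
  exact sum_nonneg fun i _ => hc i

lemma sumSmallest_attained (s : Finset (Fin n)) (c : Fin n → ℝ)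
    {l : ℕ} (hl : l ≤ s.card) :
    ∃ T ⊆ s, T.card = l ∧ sumSmallest n s c l = ∑ i ∈ T, c i := by
  have hset : {w | ∃ T ⊆ s, T.card = l ∧ w = ∑ i ∈ T, c i} =
      ↑((s.powersetCard l).image (fun T => ∑ i ∈ T, c i)) := by
    ext w
    simp only [Set.mem_setOf_eq, coe_image, Set.mem_image, mem_coe,
      mem_powersetCard]
    constructor
    · rintro ⟨T, hTs, hTc, rfl⟩; exact ⟨T, ⟨hTs, hTc⟩, rfl⟩
    · rintro ⟨T, ⟨hTs, hTc⟩, rfl⟩; exact ⟨T, hTs, hTc, rfl⟩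
  obtain ⟨T, hTs, hTc⟩ := Finset.exists_subset_card_eq hl
  have hne : {w | ∃ T ⊆ s, T.card = l ∧ w = ∑ i ∈ T, c i}.Nonempty :=
    ⟨_, ⟨T, hTs, hTc, rfl⟩⟩
  have hfin : {w | ∃ T ⊆ s, T.card = l ∧ w = ∑ i ∈ T, c i}.Finite := by
    rw [hset]; exact ((s.powersetCard l).image _).finite_toSet
  have hmem := hne.csInf_mem hfin
  exact hmem

end Aux

/-- The incremental value equals the minimum over `j ∈ {p−k,…,p}` of the sum of
the `j` smallest costs in `X_x` plus the `p−j` smallest costs outside `X_x`. -/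
theorem stmt17 (n p k : ℕ) (hk : k ≤ p) (hpn : p ≤ n) (hnpk : p + k ≤ n)
    (x : Fin n → ℝ) (hx : x ∈ selPhi n p)
    (c : Fin n → ℝ) (hc : ∀ i, 0 ≤ c i) :
    let Xx : Finset (Fin n) := Finset.univ.filter (fun i => x i = 1)
    incVal n (selPhiK n p k x) c =
      sInf {w | ∃ j : ℕ, p - k ≤ j ∧ j ≤ p ∧
        w = sumSmallest n Xx c j + sumSmallest n Xxᶜ c (p - j)} := by
  intro Xx
  obtain ⟨hx01, hxsum⟩ := hx
  have hXxcard : Xx.card = p := by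
    have h := sum_eq_card_filter x hx01
    rw [hxsum] at h
    exact_mod_cast h.symm
  have hXxc : Xxᶜ.card = n - p := by
    rw [Finset.card_compl, hXxcard, Fintype.card_fin]
  set A : Set ℝ := {v | ∃ y ∈ selPhiK n p k x, v = ∑ i, c i * y i} with hA
  set B : Set ℝ := {w | ∃ j : ℕ, p - k ≤ j ∧ j ≤ p ∧
      w = sumSmallest n Xx c j + sumSmallest n Xxᶜ c (p - j)} with hB
  have hAbdd : BddBelow A := by
    refine ⟨0, ?_⟩
    rintro v ⟨y, ⟨hy01, _, _⟩, rfl⟩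
    refine sum_nonneg fun i _ => ?_
    rcases hy01 i with h | h <;> simp [h, hc i]
  have hBbdd : BddBelow B := by
    refine ⟨0, ?_⟩
    rintro w ⟨j, _, _, rfl⟩
    exact add_nonneg (sumSmallest_nonneg _ _ hc _) (sumSmallest_nonneg _ _ hc _)
  have hAne : A.Nonempty := by
    refine ⟨∑ i, c i * x i, ⟨x, ⟨hx01, hxsum, ?_⟩, rfl⟩⟩
    have hxx : ∑ i, x i * x i = ∑ i, x i := by
      refine sum_congr rfl fun i _ => ?_
      rcases hx01 i with h | h <;> simp [h]
    rw [hxx, hxsum]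
    have : (0:ℝ) ≤ (k:ℝ) := Nat.cast_nonneg k
    linarith
  have hBne : B.Nonempty := ⟨_, p, Nat.sub_le p k, le_refl p, rfl⟩
  -- every element of B is ≥ sInf A
  have key1 : ∀ w ∈ B, sInf A ≤ w := by
    rintro w ⟨j, hj1, hj2, rfl⟩
    have hjX : j ≤ Xx.card := by rw [hXxcard]; exact hj2
    have hjXc : p - j ≤ Xxᶜ.card := by rw [hXxc]; omega
    obtain ⟨T, hTs, hTc, hTeq⟩ := sumSmallest_attained Xx c hjX
    obtain ⟨S, hSs, hSc, hSeq⟩ := sumSmallest_attained Xxᶜ c hjXc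
    have hdisj : Disjoint T S :=
      Disjoint.mono hTs hSs disjoint_compl_right
    set Y : Finset (Fin n) := T ∪ S with hY
    have hYcard : Y.card = p := by
      rw [hY, card_union_of_disjoint hdisj, hTc, hSc]; omega
    set y : Fin n → ℝ := fun i => if i ∈ Y then 1 else 0 with hy
    have hy01 : ∀ i, y i = 0 ∨ y i = 1 := by
      intro i; by_cases h : i ∈ Y <;> simp [hy, h]
    have hfil : univ.filter (fun i => y i = 1) = Y := by
      ext i; by_cases h : i ∈ Y <;> simp [hy, h]
    have hysum : ∑ i, y i = (p : ℝ) := by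
      rw [sum_eq_card_filter y hy01, hfil, hYcard]
    have hTsub : T ⊆ Y.filter (fun i => x i = 1) := by
      intro i hi
      refine mem_filter.mpr ⟨mem_union_left _ hi, ?_⟩
      have := hTs hi
      simpa [Xx] using (mem_filter.mp (hTs hi)).2
    have hcardge : p ≤ (Y.filter (fun i => x i = 1)).card + k := by
      have := Finset.card_le_card hTsub
      omega
    have hymem : y ∈ selPhiK n p k x := by
      refine ⟨hy01, hysum, ?_⟩
      rw [sum_xy_eq_card x y hx01 hy01, hfil]
      have h2 : (p:ℝ) ≤ ((Y.filter (fun i => x i = 1)).card : ℝ) + k := by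
        exact_mod_cast hcardge
      linarith
    have hval : ∑ i, c i * y i =
        sumSmallest n Xx c j + sumSmallest n Xxᶜ c (p - j) := by
      rw [sum_mul_eq_sum_filter y hy01 c, hfil, hY,
        sum_union hdisj, hTeq, hSeq]
    exact csInf_le hAbdd ⟨y, hymem, hval.symm⟩
  -- every element of A is ≥ sInf B
  have key2 : ∀ v ∈ A, sInf B ≤ v := by
    rintro v ⟨y, ⟨hy01, hysum, hyrec⟩, rfl⟩
    set Yy : Finset (Fin n) := univ.filter (fun i => y i = 1) with hYy
    have hYycard : Yy.card = p := by
      have h := sum_eq_card_filter y hy01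
      rw [hysum] at h
      exact_mod_cast h.symm
    have hinter : Yy.filter (fun i => x i = 1) = Yy ∩ Xx := by
      ext i; simp [Xx, mem_filter, mem_inter, and_comm]
    set j0 : ℕ := (Yy ∩ Xx).card with hj0
    have hrec' : p ≤ j0 + k := by
      rw [sum_xy_eq_card x y hx01 hy01, hinter] at hyrec
      have : (p:ℝ) ≤ (j0:ℝ) + k := by
        rw [hj0]; linarith
      exact_mod_cast this
    have hj0le : j0 ≤ p := by
      rw [hj0, ← hYycard]
      exact card_le_card inter_subset_left
    have hsplitc : (Yy \ Xx).card + (Yy ∩ Xx).card = p := by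
      rw [Finset.card_sdiff_add_card_inter, hYycard]
    have hYdXx : Yy \ Xx ⊆ Xxᶜ := by
      intro i hi
      exact mem_compl.mpr (mem_sdiff.mp hi).2
    have hle1 : sumSmallest n Xx c j0 ≤ ∑ i ∈ Yy ∩ Xx, c i :=
      sumSmallest_le Xx c hc inter_subset_right hj0.symm
    have hle2 : sumSmallest n Xxᶜ c (p - j0) ≤ ∑ i ∈ Yy \ Xx, c i :=
      sumSmallest_le Xxᶜ c hc hYdXx (by omega)
    have hvsplit : ∑ i, c i * y i = ∑ i ∈ Yy ∩ Xx, c i + ∑ i ∈ Yy \ Xx, c i := by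
      rw [sum_mul_eq_sum_filter y hy01 c, ← hYy,
        ← Finset.sum_inter_add_sum_sdiff Yy Xx c]
    have hmemB : sumSmallest n Xx c j0 + sumSmallest n Xxᶜ c (p - j0) ∈ B :=
      ⟨j0, by omega, hj0le, rfl⟩
    calc sInf B ≤ sumSmallest n Xx c j0 + sumSmallest n Xxᶜ c (p - j0) :=
          csInf_le hBbdd hmemB
      _ ≤ ∑ i, c i * y i := by rw [hvsplit]; linarith
  show sInf A = sInf B
  exact le_antisymm (le_csInf hBne key1) (le_csInf hAne key2)
end
end

section
/- Let n, p, k be integers with 1 ≤ p ≤ n and 0 ≤ k ≤ p, let x ∈ Φ, let c̲, d ∈ ℝ^n_{≥0} and Γ ≥ 0. For real levels L_x, L_x̄, define the (L_x, L_x̄)-compatible scenario c(L_x, L_x̄) ∈ ℝ^n by c(L_x, L_x̄)_i = max{ c̲_i, min{ c̲_i + d_i, L_x } } for i ∈ X_x, and c(L_x, L_x̄)_i = max{ c̲_i, min{ c̲_i + d_i, L_x̄ } } for i ∉ X_x. Then for every c ∈ U^c there exist L_x, L_x̄ ∈ ℝ such that c(L_x, L_x̄) ∈ U^c and min_{y ∈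 Φ^k_x} Σ_i c(L_x, L_x̄)_i·y_i ≥ min_{y ∈ Φ^k_x} Σ_i c_i·y_i. -/
open Finset

noncomputable section

lemma maxmin_eq (a b L : ℝ) :
    max a (min (a + b) L) = a + max 0 (min b (L - a)) := by
  simp only [max_def, min_def]; split_ifs <;> linarith


lemma sum_mul_indicator {n : ℕ} (y c0 : Fin n → ℝ) (hy : ∀ i, y i = 0 ∨ y i = 1) :
    ∑ i, c0 i * y i = ∑ i ∈ univ.filter (fun i => y i = 1), c0 i := by
  rw [← Finset.sum_filter_add_sum_filter_not univ (fun i => y i = 1) (fun i => c0 i * y i)]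
  have h1 : ∑ i ∈ univ.filter (fun i => y i = 1), c0 i * y i
      = ∑ i ∈ univ.filter (fun i => y i = 1), c0 i :=
    Finset.sum_congr rfl fun i hi => by rw [(Finset.mem_filter.mp hi).2, mul_one]
  have h2 : ∑ i ∈ univ.filter (fun i => ¬ y i = 1), c0 i * y i = 0 := by
    apply Finset.sum_eq_zero
    intro i hi
    rcases hy i with h | h
    · rw [h, mul_zero]
    · exact absurd h (Finset.mem_filter.mp hi).2
  rw [h1, h2, add_zero]


lemma sum_indicator_card {n : ℕ} (y : Fin n → ℝ) (hy : ∀ i, y i = 0 ∨ y i = 1) :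
    ∑ i, y i = ((univ.filter (fun i => y i = 1)).card : ℝ) := by
  have := sum_mul_indicator y (fun _ => (1:ℝ)) hy
  simp only [one_mul] at this
  rw [this, Finset.sum_const, nsmul_eq_mul, mul_one]


lemma exists_bot {n : ℕ} (S : Finset (Fin n)) (f : Fin n → ℝ) (t : ℕ) (ht : t ≤ S.card) :
    ∃ B, B ⊆ S ∧ B.card = t ∧ ∀ i ∈ B, ∀ j ∈ S, j ∉ B → f i ≤ f j := by
  have hP : (S.powersetCard t).Nonempty := by
    rw [Finset.powersetCard_nonempty]; exact ht
  obtain ⟨B, hBP, hmin⟩ := Finset.exists_min_image _ (fun B => ∑ i ∈ B, f i) hP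
  rw [Finset.mem_powersetCard] at hBP
  refine ⟨B, hBP.1, hBP.2, ?_⟩
  intro i hi j hjS hjB
  by_contra hlt
  push_neg at hlt
  have hij : j ∉ B.erase i := fun h => hjB (Finset.mem_of_mem_erase h)
  have hB' : insert j (B.erase i) ∈ S.powersetCard t := by
    rw [Finset.mem_powersetCard]
    constructor
    · intro a ha
      rcases Finset.mem_insert.mp ha with h | h
      · exact h ▸ hjS
      · exact hBP.1 (Finset.mem_of_mem_erase h)
    · rw [Finset.card_insert_of_notMem hij, Finset.card_erase_of_mem hi]
      have : 1 ≤ B.card := Finset.card_pos.mpr ⟨i, hi⟩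
      omega
  have := hmin _ hB'
  rw [Finset.sum_insert hij, Finset.sum_erase_eq_sub hi] at this
  have hsum : ∑ i ∈ B, f i ≤ ∑ i ∈ B, f i + (f j - f i) := by linarith
  linarith


lemma lemW {n : ℕ} (S A : Finset (Fin n)) (hA : A ⊆ S)
    (cl d δ : Fin n → ℝ) (L : ℝ)
    (hδ0 : ∀ i, 0 ≤ δ i) (hδd : ∀ i, δ i ≤ d i)
    (hsum : ∑ i ∈ S, (cl i + δ i) ≤ ∑ i ∈ S, max (cl i) (min (cl i + d i) L)) :
    ∃ B, B ⊆ S ∧ B.card = A.card ∧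
      ∑ i ∈ B, (cl i + δ i) ≤ ∑ i ∈ A, max (cl i) (min (cl i + d i) L) := by
  set c : Fin n → ℝ := fun i => cl i + δ i with hc
  set c' : Fin n → ℝ := fun i => max (cl i) (min (cl i + d i) L) with hc'
  have hcc'lt : ∀ i, c' i < L → c i ≤ c' i := by
    intro i h
    rcases le_total (cl i + d i) L with h1 | h1
    · have : c' i = cl i + d i := by
        simp only [hc', min_eq_left h1]
        exact max_eq_right (by have := hδ0 i; have := hδd i; linarith)
      rw [this]; have := hδd i; simp only [hc]; linarith
    · exfalso
      have : L ≤ c' i := by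
        simp only [hc', min_eq_right h1]; exact le_max_right _ _
      linarith
  have hcc'gt : ∀ i, L < c' i → c' i ≤ c i := by
    intro i h
    have hm : min (cl i + d i) L ≤ L := min_le_right _ _
    rcases le_total (cl i) (min (cl i + d i) L) with h1 | h1
    · exfalso
      have : c' i = min (cl i + d i) L := max_eq_right h1
      linarith
    · have : c' i = cl i := max_eq_left h1
      rw [this]; have := hδ0 i; simp only [hc]; linarith
  obtain ⟨B, hBS, hBcard, hbot⟩ := exists_bot S c A.card (Finset.card_le_card hA)
  refine ⟨B, hBS, hBcard, ?_⟩
  rcases Nat.eq_zero_or_pos A.card with h0 | hpos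
  · have hAe : A = ∅ := Finset.card_eq_zero.mp h0
    have hBe : B = ∅ := Finset.card_eq_zero.mp (hBcard.trans h0)
    simp [hAe, hBe]
  · have hBne : B.Nonempty := Finset.card_pos.mp (hBcard ▸ hpos)
    obtain ⟨i0, hi0, hmax⟩ := Finset.exists_max_image B c hBne
    set θ := c i0 with hθ
    -- identity for the B sum
    have hT1 : ∑ i ∈ S, max 0 (θ - c i) = (A.card : ℝ) * θ - ∑ i ∈ B, c i := by
      rw [← Finset.sum_sdiff hBS]
      have h1 : ∑ i ∈ S \ B, max 0 (θ - c i) = 0 := by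
        apply Finset.sum_eq_zero
        intro j hj
        rw [Finset.mem_sdiff] at hj
        have : θ ≤ c j := hbot i0 hi0 j hj.1 hj.2
        exact max_eq_left (by linarith)
      have h2 : ∑ i ∈ B, max 0 (θ - c i) = ∑ i ∈ B, (θ - c i) := by
        apply Finset.sum_congr rfl
        intro i hi
        exact max_eq_right (by have := hmax i hi; linarith)
      rw [h1, h2, zero_add, Finset.sum_sub_distrib, Finset.sum_const, nsmul_eq_mul, hBcard]
    -- lower bound for the A sum
    have hA_ge : (A.card : ℝ) * θ - ∑ i ∈ S, max 0 (θ - c' i) ≤ ∑ i ∈ A, c' i := by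
      have step1 : ∑ i ∈ A, (θ - max 0 (θ - c' i)) ≤ ∑ i ∈ A, c' i := by
        apply Finset.sum_le_sum
        intro i _
        have : θ - c' i ≤ max 0 (θ - c' i) := le_max_right _ _
        linarith
      have step2 : ∑ i ∈ A, (θ - max 0 (θ - c' i)) =
          (A.card : ℝ) * θ - ∑ i ∈ A, max 0 (θ - c' i) := by
        rw [Finset.sum_sub_distrib, Finset.sum_const, nsmul_eq_mul]
      have step3 : ∑ i ∈ A, max 0 (θ - c' i) ≤ ∑ i ∈ S, max 0 (θ - c' i) := by
        apply Finset.sum_le_sum_of_subset_of_nonneg hA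
        intro i _ _; exact le_max_left _ _
      linarith
    -- the star inequality
    have hstar : ∑ i ∈ S, max 0 (θ - c' i) ≤ ∑ i ∈ S, max 0 (θ - c i) := by
      rcases le_total θ L with hθL | hLθ
      · apply Finset.sum_le_sum
        intro i _
        rcases lt_or_ge (c' i) θ with h | h
        · have hci : c i ≤ c' i := hcc'lt i (by linarith)
          exact max_le_max le_rfl (by linarith)
        · calc max 0 (θ - c' i) = 0 := max_eq_left (by linarith)
            _ ≤ max 0 (θ - c i) := le_max_left _ _
      · -- L ≤ θ
        have key : ∀ v : ℝ, max 0 (θ - v) + v = max 0 (v - θ) + θ := by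
          intro v
          rcases le_total v θ with h | h
          · rw [max_eq_right (by linarith), max_eq_left (by linarith)]; ring
          · rw [max_eq_left (by linarith), max_eq_right (by linarith)]; ring
        have e1 : ∑ i ∈ S, (max 0 (θ - c' i) + c' i) = ∑ i ∈ S, (max 0 (c' i - θ) + θ) :=
          Finset.sum_congr rfl (fun i _ => key (c' i))
        have e2 : ∑ i ∈ S, (max 0 (θ - c i) + c i) = ∑ i ∈ S, (max 0 (c i - θ) + θ) :=
          Finset.sum_congr rfl (fun i _ => key (c i))
        have e3 : ∑ i ∈ S, max 0 (c' i - θ) ≤ ∑ i ∈ S, max 0 (c i - θ) := by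
          apply Finset.sum_le_sum
          intro i _
          rcases le_total (c' i) θ with h | h
          · calc max 0 (c' i - θ) = 0 := max_eq_left (by linarith)
              _ ≤ max 0 (c i - θ) := le_max_left _ _
          · rcases eq_or_lt_of_le h with h' | h'
            · calc max 0 (c' i - θ) = 0 := max_eq_left (by linarith)
               _ ≤ max 0 (c i - θ) := le_max_left _ _
            · have : c' i ≤ c i := hcc'gt i (by linarith)
              exact max_le_max le_rfl (by linarith)
        simp only [Finset.sum_add_distrib] at e1 e2
        linarith
    have hBA : ∑ i ∈ B, c i ≤ ∑ i ∈ A, c' i := by linarith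
    exact hBA


lemma exists_level {n : ℕ} (S : Finset (Fin n)) (cl d : Fin n → ℝ)
    (hcl : ∀ i, 0 ≤ cl i) (hd : ∀ i, 0 ≤ d i)
    (Δ : ℝ) (h0 : 0 ≤ Δ) (hΔ : Δ ≤ ∑ i ∈ S, d i) :
    ∃ L, ∑ i ∈ S, max 0 (min (d i) (L - cl i)) = Δ := by
  set f : ℝ → ℝ := fun L => ∑ i ∈ S, max 0 (min (d i) (L - cl i)) with hf
  have hcont : Continuous f := by
    apply continuous_finset_sum
    intro i _
    exact continuous_const.max (continuous_const.min ((continuous_id.sub continuous_const)))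
  set M : ℝ := ∑ i ∈ S, (cl i + d i) with hM
  have hM0 : (0:ℝ) ≤ M := Finset.sum_nonneg (fun i _ => by have := hcl i; have := hd i; linarith)
  have hf0 : f 0 = 0 := by
    apply Finset.sum_eq_zero
    intro i _
    have : min (d i) (0 - cl i) ≤ 0 - cl i := min_le_right _ _
    exact max_eq_left (by have := hcl i; linarith)
  have hfM : f M = ∑ i ∈ S, d i := by
    apply Finset.sum_congr rfl
    intro i hi
    have hle : cl i + d i ≤ M := by
      exact Finset.single_le_sum (f := fun i => cl i + d i)
        (fun j _ => add_nonneg (hcl j) (hd j)) hi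
    rw [min_eq_left (by linarith), max_eq_right (hd i)]
  have hIcc : Set.Icc (f 0) (f M) ⊆ f '' Set.Icc 0 M :=
    intermediate_value_Icc hM0 hcont.continuousOn
  have hmem : Δ ∈ Set.Icc (f 0) (f M) := by rw [hf0, hfM]; exact ⟨h0, hΔ⟩
  obtain ⟨L, _, hL⟩ := hIcc hmem
  exact ⟨L, hL⟩


/-- Lemma 10 -/
theorem stmt18 (n p k : ℕ) (hp1 : 1 ≤ p) (hpn : p ≤ n) (hk : k ≤ p)
    (x : Fin n → ℝ) (hx : x ∈ selPhi n p)
    (cl d : Fin n → ℝ) (hcl : ∀ i, 0 ≤ cl i) (hd : ∀ i, 0 ≤ d i)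
    (Γ : ℝ) (hΓ : 0 ≤ Γ)
    (c : Fin n → ℝ) (hc : c ∈ Uc n cl d Γ) :
    ∃ Lx Lxb : ℝ,
      (fun i => if x i = 1 then max (cl i) (min (cl i + d i) Lx)
                else max (cl i) (min (cl i + d i) Lxb)) ∈ Uc n cl d Γ ∧
      incVal n (selPhiK n p k x) c ≤
        incVal n (selPhiK n p k x)
          (fun i => if x i = 1 then max (cl i) (min (cl i + d i) Lx)
                    else max (cl i) (min (cl i + d i) Lxb)) := by
  obtain ⟨δ, hδb, hδΓ, hceq⟩ := hc
  obtain ⟨hx01, hxsum⟩ := hx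
  set X : Finset (Fin n) := univ.filter (fun i => x i = 1) with hXdef
  obtain ⟨Lx, hLx⟩ := exists_level X cl d hcl hd (∑ i ∈ X, δ i)
    (Finset.sum_nonneg fun i _ => (hδb i).1)
    (Finset.sum_le_sum fun i _ => (hδb i).2)
  obtain ⟨Lxb, hLxb⟩ := exists_level Xᶜ cl d hcl hd (∑ i ∈ Xᶜ, δ i)
    (Finset.sum_nonneg fun i _ => (hδb i).1)
    (Finset.sum_le_sum fun i _ => (hδb i).2)
  refine ⟨Lx, Lxb, ?_, ?_⟩
  -- membership in Uc
  · set δ' : Fin n → ℝ := fun i =>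
      if x i = 1 then max 0 (min (d i) (Lx - cl i)) else max 0 (min (d i) (Lxb - cl i))
        with hδ'def
    refine ⟨δ', fun i => ⟨?_, ?_⟩, ?_, ?_⟩
    · by_cases h : x i = 1 <;> simp [hδ'def, h]
    · by_cases h : x i = 1 <;>
        simp only [hδ'def, h, if_true, if_false] <;>
        exact max_le (hd i) (min_le_left _ _)
    · have hsplit : ∑ i ∈ X, δ' i + ∑ i ∈ Xᶜ, δ' i = ∑ i, δ' i :=
        Finset.sum_add_sum_compl X δ'
      have h1 : ∑ i ∈ X, δ' i = ∑ i ∈ X, δ i := by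
        rw [← hLx]
        apply Finset.sum_congr rfl
        intro i hi
        have : x i = 1 := (Finset.mem_filter.mp hi).2
        simp [hδ'def, this]
      have h2 : ∑ i ∈ Xᶜ, δ' i = ∑ i ∈ Xᶜ, δ i := by
        rw [← hLxb]
        apply Finset.sum_congr rfl
        intro i hi
        have hni : x i ≠ 1 := by
          intro h
          exact (Finset.mem_compl.mp hi) (Finset.mem_filter.mpr ⟨Finset.mem_univ i, h⟩)
        simp [hδ'def, hni]
      have hδsplit : ∑ i ∈ X, δ i + ∑ i ∈ Xᶜ, δ i = ∑ i, δ i :=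
        Finset.sum_add_sum_compl X δ
      calc ∑ i, δ' i = ∑ i, δ i := by rw [← hsplit, h1, h2, hδsplit]
        _ ≤ Γ := hδΓ
    · funext i
      by_cases h : x i = 1 <;> simp only [hδ'def, h, if_true, if_false] <;>
        exact maxmin_eq _ _ _
  -- the value inequality
  · set c' : Fin n → ℝ := fun i =>
      if x i = 1 then max (cl i) (min (cl i + d i) Lx)
      else max (cl i) (min (cl i + d i) Lxb) with hc'def
    have hxK : x ∈ selPhiK n p k x := by
      refine ⟨hx01, hxsum, ?_⟩
      have : ∑ i, x i * x i = ∑ i, x i := by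
        apply Finset.sum_congr rfl
        intro i _
        rcases hx01 i with h | h <;> rw [h] <;> ring
      rw [this, hxsum]
      have : (0:ℝ) ≤ (k:ℝ) := Nat.cast_nonneg k
      linarith
    -- lower bound 0 for the value set of c
    have hbdd : BddBelow {v | ∃ y ∈ selPhiK n p k x, v = ∑ i, c i * y i} := by
      refine ⟨0, ?_⟩
      rintro v ⟨y, hy, rfl⟩
      apply Finset.sum_nonneg
      intro i _
      have hci : 0 ≤ c i := by
        rw [hceq]; exact add_nonneg (hcl i) (hδb i).1
      rcases hy.1 i with h | h <;> rw [h] <;> simp [hci]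
    unfold incVal
    apply le_csInf
    · exact ⟨∑ i, c' i * x i, x, hxK, rfl⟩
    rintro v ⟨yh, hyh, rfl⟩
    set Bh : Finset (Fin n) := univ.filter (fun i => yh i = 1) with hBhdef
    -- budget sums at the two levels
    have hsumX : ∑ i ∈ X, (cl i + δ i) ≤ ∑ i ∈ X, max (cl i) (min (cl i + d i) Lx) := by
      have : ∑ i ∈ X, max (cl i) (min (cl i + d i) Lx)
          = ∑ i ∈ X, (cl i + max 0 (min (d i) (Lx - cl i))) :=
        Finset.sum_congr rfl fun i _ => maxmin_eq _ _ _
      rw [this, Finset.sum_add_distrib, Finset.sum_add_distrib, hLx]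
    have hsumXc : ∑ i ∈ Xᶜ, (cl i + δ i) ≤ ∑ i ∈ Xᶜ, max (cl i) (min (cl i + d i) Lxb) := by
      have : ∑ i ∈ Xᶜ, max (cl i) (min (cl i + d i) Lxb)
          = ∑ i ∈ Xᶜ, (cl i + max 0 (min (d i) (Lxb - cl i))) :=
        Finset.sum_congr rfl fun i _ => maxmin_eq _ _ _
      rw [this, Finset.sum_add_distrib, Finset.sum_add_distrib, hLxb]
    obtain ⟨B1, hB1X, hB1card, hB1sum⟩ := lemW X (Bh ∩ X) (Finset.inter_subset_right)
      cl d δ Lx (fun i => (hδb i).1) (fun i => (hδb i).2) hsumX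
    have hBhdX : Bh \ X ⊆ Xᶜ := by
      intro i hi
      rw [Finset.mem_compl]
      exact (Finset.mem_sdiff.mp hi).2
    obtain ⟨B2, hB2Xc, hB2card, hB2sum⟩ := lemW Xᶜ (Bh \ X) hBhdX
      cl d δ Lxb (fun i => (hδb i).1) (fun i => (hδb i).2) hsumXc
    set y : Fin n → ℝ := fun i => if i ∈ B1 ∪ B2 then (1:ℝ) else 0 with hydef
    have hy01 : ∀ i, y i = 0 ∨ y i = 1 := by
      intro i; simp only [hydef]; split_ifs <;> simp
    have hdisj : Disjoint B1 B2 := by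
      rw [Finset.disjoint_left]
      intro i hi1 hi2
      exact (Finset.mem_compl.mp (hB2Xc hi2)) (hB1X hi1)
    have hyfilter : univ.filter (fun i => y i = 1) = B1 ∪ B2 := by
      ext i
      simp only [Finset.mem_filter, Finset.mem_univ, true_and, hydef]
      split_ifs with h <;> simp [h]
    -- card of Bh is p
    have hBhcard : ((Bh).card : ℝ) = (p : ℝ) := by
      rw [← sum_indicator_card yh hyh.1]; exact hyh.2.1
    -- x sums over pieces
    have hxB1 : ∑ i ∈ B1, x i = (B1.card : ℝ) := by
      rw [Finset.sum_congr rfl (fun i hi => (Finset.mem_filter.mp (hB1X hi)).2),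
        Finset.sum_const, nsmul_eq_mul, mul_one]
    have hxB2 : ∑ i ∈ B2, x i = 0 := by
      apply Finset.sum_eq_zero
      intro i hi
      have hni : x i ≠ 1 := by
        intro h
        exact (Finset.mem_compl.mp (hB2Xc hi)) (Finset.mem_filter.mpr ⟨Finset.mem_univ i, h⟩)
      rcases hx01 i with h | h
      · exact h
      · exact absurd h hni
    have hxA1 : ∑ i ∈ Bh ∩ X, x i = ((Bh ∩ X).card : ℝ) := by
      rw [Finset.sum_congr rfl
        (fun i hi => (Finset.mem_filter.mp (Finset.mem_of_mem_inter_right hi)).2),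
        Finset.sum_const, nsmul_eq_mul, mul_one]
    have hxA2 : ∑ i ∈ Bh \ X, x i = 0 := by
      apply Finset.sum_eq_zero
      intro i hi
      have hni : x i ≠ 1 := fun h =>
        (Finset.mem_sdiff.mp hi).2 (Finset.mem_filter.mpr ⟨Finset.mem_univ i, h⟩)
      rcases hx01 i with h | h
      · exact h
      · exact absurd h hni
    -- overlap of yh with x
    have hoveryh : ∑ i, x i * yh i = ((Bh ∩ X).card : ℝ) := by
      rw [sum_mul_indicator yh x hyh.1, ← hBhdef,
        ← Finset.sum_inter_add_sum_sdiff Bh X x, hxA1, hxA2, add_zero]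
    have hyK : y ∈ selPhiK n p k x := by
      refine ⟨hy01, ?_, ?_⟩
      · rw [sum_indicator_card y hy01, hyfilter,
          Finset.card_union_of_disjoint hdisj, hB1card, hB2card]
        rw [← hBhcard]
        norm_cast
        exact Finset.card_inter_add_card_sdiff Bh X
      · rw [sum_mul_indicator y x hy01, hyfilter,
          Finset.sum_union hdisj, hxB1, hxB2, add_zero, hB1card]
        rw [← hoveryh]
        exact hyh.2.2
    -- value comparison
    have hval : ∑ i, c i * y i ≤ ∑ i, c' i * yh i := by
      rw [sum_mul_indicator y c hy01, hyfilter, Finset.sum_union hdisj,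
        sum_mul_indicator yh c' hyh.1, ← hBhdef,
        ← Finset.sum_inter_add_sum_sdiff Bh X c']
      have e1 : ∑ i ∈ Bh ∩ X, c' i = ∑ i ∈ Bh ∩ X, max (cl i) (min (cl i + d i) Lx) := by
        apply Finset.sum_congr rfl
        intro i hi
        have : x i = 1 := (Finset.mem_filter.mp (Finset.mem_of_mem_inter_right hi)).2
        simp [hc'def, this]
      have e2 : ∑ i ∈ Bh \ X, c' i = ∑ i ∈ Bh \ X, max (cl i) (min (cl i + d i) Lxb) := by
        apply Finset.sum_congr rfl
        intro i hi
        have hni : x i ≠ 1 := fun h =>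
          (Finset.mem_sdiff.mp hi).2 (Finset.mem_filter.mpr ⟨Finset.mem_univ i, h⟩)
        simp [hc'def, hni]
      have e3 : ∑ i ∈ B1, c i = ∑ i ∈ B1, (cl i + δ i) :=
        Finset.sum_congr rfl fun i _ => by rw [hceq]
      have e4 : ∑ i ∈ B2, c i = ∑ i ∈ B2, (cl i + δ i) :=
        Finset.sum_congr rfl fun i _ => by rw [hceq]
      rw [e1, e2, e3, e4]
      exact add_le_add hB1sum hB2sum
    calc sInf {v | ∃ y ∈ selPhiK n p k x, v = ∑ i, c i * y i} ≤ ∑ i, c i * y i :=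
        csInf_le hbdd ⟨y, hyK, rfl⟩
      _ ≤ ∑ i, c' i * yh i := hval
end
end
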